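/- arXiv:2010.12843 — 3 statements merged into one kernel-verified Lean document; each statement's English description precedes it below -/
import Mathlib

section
/- There exists a constant C > 0, depending only on M, such that for every smooth function f on a neighbourhood of the closure of M one has |f|_{L^8_x L^4_z}⁴ ≤ C |f|_{L⁶}³ ‖f‖. -/
open MeasureTheory Set

noncomputable section

/-- The domain `M = (0,L) × (0,L) × (-h,0) ⊆ ℝ³`. -/
def Mset (L h : ℝ) : Set (ℝ × ℝ × ℝ) := Ioo 0 L ×ˢ Ioo 0 L ×ˢ Ioo (-h) 0

/-- `f` is smooth on an open neighbourhood of the closure of `M`. -/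
def SmoothNearM (L h : ℝ) (f : ℝ → ℝ → ℝ → ℝ) : Prop :=
  ∃ U : Set (ℝ × ℝ × ℝ), IsOpen U ∧ closure (Mset L h) ⊆ U ∧
    ContDiffOn ℝ (⊤ : ℕ∞) (fun p : ℝ × ℝ × ℝ => f p.1 p.2.1 p.2.2) U

/-- Partial derivative in `x`. -/
def pdx (f : ℝ → ℝ → ℝ → ℝ) : ℝ → ℝ → ℝ → ℝ := fun x y z => deriv (fun t => f t y z) x
/-- Partial derivative in `y`. -/
def pdy (f : ℝ → ℝ → ℝ → ℝ) : ℝ → ℝ → ℝ → ℝ := fun x y z => deriv (fun t => f x t z) y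
/-- Partial derivative in `z`. -/
def pdz (f : ℝ → ℝ → ℝ → ℝ) : ℝ → ℝ → ℝ → ℝ := fun x y z => deriv (fun t => f x y t) z

/-- Iterated integral over `M`. -/
def intM (L h : ℝ) (g : ℝ → ℝ → ℝ → ℝ) : ℝ :=
  ∫ x in Ioo (0:ℝ) L, ∫ y in Ioo (0:ℝ) L, ∫ z in Ioo (-h) (0:ℝ), g x y z

/-- Square of the `L²(M)` norm. -/
def sqL2 (L h : ℝ) (f : ℝ → ℝ → ℝ → ℝ) : ℝ := intM L h fun x y z => (f x y z) ^ 2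

/-- The `L²(M)` norm `|f|`. -/
def L2norm (L h : ℝ) (f : ℝ → ℝ → ℝ → ℝ) : ℝ := Real.sqrt (sqL2 L h f)

/-- The `L^p(M)` norm. -/
def LpNorm (L h p : ℝ) (f : ℝ → ℝ → ℝ → ℝ) : ℝ :=
  (intM L h fun x y z => |f x y z| ^ p) ^ (1 / p)

/-- Square of the `L²(M)` norm of the full (three-dimensional) gradient. -/
def gradSq (L h : ℝ) (f : ℝ → ℝ → ℝ → ℝ) : ℝ :=
  sqL2 L h (pdx f) + sqL2 L h (pdy f) + sqL2 L h (pdz f)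

/-- The `L²(M)` norm of the full (three-dimensional) gradient `|∇₃ f|_{L²}`. -/
def gradL2 (L h : ℝ) (f : ℝ → ℝ → ℝ → ℝ) : ℝ := Real.sqrt (gradSq L h f)

/-- The `H¹(M)` norm `‖f‖ = (|f|² + |∇₃ f|²)^{1/2}`. -/
def H1norm (L h : ℝ) (f : ℝ → ℝ → ℝ → ℝ) : ℝ :=
  Real.sqrt (sqL2 L h f + gradSq L h f)

/-- The anisotropic norm `|f|_{L^q_x L^p_z}`. -/
def anisoNorm (L h q p : ℝ) (f : ℝ → ℝ → ℝ → ℝ) : ℝ :=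
  (∫ x in Ioo (0:ℝ) L, ∫ y in Ioo (0:ℝ) L,
    (∫ z in Ioo (-h) (0:ℝ), |f x y z| ^ p) ^ (q / p)) ^ (1 / q)


open Function


lemma intOnIoo {a b : ℝ} {φ : ℝ → ℝ} (hc : ContinuousOn φ (Icc a b)) :
    IntegrableOn φ (Ioo a b) := (hc.integrableOn_Icc).mono_set Ioo_subset_Icc_self

lemma paramCont {X : Type*} [TopologicalSpace X] [FirstCountableTopology X]
    {s : Set X} {a b C : ℝ} {F : X → ℝ → ℝ}
    (hF : ∀ z ∈ Ioo a b, ContinuousOn (fun x => F x z) s)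
    (hFz : ∀ x ∈ s, ContinuousOn (F x) (Ioo a b))
    (hbd : ∀ x ∈ s, ∀ z ∈ Ioo a b, |F x z| ≤ C) :
    ContinuousOn (fun x => ∫ z in Ioo a b, F x z) s := by
  apply continuousOn_of_dominated (bound := fun _ => C)
  · exact fun x hx => ((hFz x hx).aestronglyMeasurable measurableSet_Ioo)
  · exact fun x hx => (ae_restrict_iff' measurableSet_Ioo).2 (ae_of_all _ fun z hz => by
      simpa [Real.norm_eq_abs] using hbd x hx z hz)
  · exact integrableOn_const (by simp [Real.volume_Ioo])
  · exact (ae_restrict_iff' measurableSet_Ioo).2 (ae_of_all _ hF)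

lemma intBound {a b C : ℝ} (hab : a ≤ b) {φ : ℝ → ℝ}
    (hbd : ∀ z ∈ Ioo a b, |φ z| ≤ C) :
    |∫ z in Ioo a b, φ z| ≤ C * (b - a) := by
  have := norm_setIntegral_le_of_norm_le_const (μ := volume) (s := Ioo a b) (f := φ)
      (C := C) (by simp [Real.volume_Ioo]) (fun x hx => by
        simpa [Real.norm_eq_abs] using hbd x hx)
  simpa [Real.norm_eq_abs, Measure.real, Real.volume_Ioo, ENNReal.toReal_ofReal (sub_nonneg.2 hab)] using this

lemma myCS {α : Type*} [MeasurableSpace α] {μ : Measure α} [IsFiniteMeasure μ] {u v : α → ℝ}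
    (hu : AEStronglyMeasurable u μ) (hv : AEStronglyMeasurable v μ)
    {Cu Cv : ℝ} (hbu : ∀ᵐ a ∂μ, |u a| ≤ Cu) (hbv : ∀ᵐ a ∂μ, |v a| ≤ Cv) :
    ∫ a, |u a| * |v a| ∂μ ≤ Real.sqrt (∫ a, u a ^ 2 ∂μ) * Real.sqrt (∫ a, v a ^ 2 ∂μ) := by
  have hpq : Real.HolderConjugate 2 2 := Real.HolderConjugate.two_two
  have hau : AEStronglyMeasurable (fun a => |u a|) μ := by
    simpa [Real.norm_eq_abs] using hu.norm
  have hav : AEStronglyMeasurable (fun a => |v a|) μ := by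
    simpa [Real.norm_eq_abs] using hv.norm
  have hmu : MemLp (fun a => |u a|) (ENNReal.ofReal (2:ℝ)) μ :=
    MemLp.of_bound hau Cu (hbu.mono fun a ha => by simpa [Real.norm_eq_abs, abs_abs] using ha)
  have hmv : MemLp (fun a => |v a|) (ENNReal.ofReal (2:ℝ)) μ :=
    MemLp.of_bound hav Cv (hbv.mono fun a ha => by simpa [Real.norm_eq_abs, abs_abs] using ha)
  have := integral_mul_le_Lp_mul_Lq_of_nonneg hpq
      (ae_of_all _ fun a => abs_nonneg (u a)) (ae_of_all _ fun a => abs_nonneg (v a)) hmu hmv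
  have e1 : ∫ a, |u a| ^ (2:ℝ) ∂μ = ∫ a, u a ^ 2 ∂μ := by
    congr 1; funext a; rw [Real.rpow_two, sq_abs]
  have e2 : ∫ a, |v a| ^ (2:ℝ) ∂μ = ∫ a, v a ^ 2 ∂μ := by
    congr 1; funext a; rw [Real.rpow_two, sq_abs]
  rw [e1, e2] at this
  calc ∫ a, |u a| * |v a| ∂μ ≤ (∫ a, u a ^ 2 ∂μ) ^ ((1:ℝ)/2) * (∫ a, v a ^ 2 ∂μ) ^ ((1:ℝ)/2) := this
    _ = _ := by
        rw [← Real.sqrt_eq_rpow, ← Real.sqrt_eq_rpow]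

section DD
variable {f : ℝ → ℝ → ℝ → ℝ} {U : Set (ℝ × ℝ × ℝ)}

lemma derivs_aux (hU : IsOpen U)
    (hf : ContDiffOn ℝ (⊤:ℕ∞) (fun p : ℝ × ℝ × ℝ => f p.1 p.2.1 p.2.2) U)
    {x y z : ℝ} (hp : (x, y, z) ∈ U) :
    (HasDerivAt (fun t => f t y z) (fderiv ℝ (fun p : ℝ × ℝ × ℝ => f p.1 p.2.1 p.2.2) (x,y,z) (1, 0, 0)) x ∧
     HasDerivAt (fun t => f x t z) (fderiv ℝ (fun p : ℝ × ℝ × ℝ => f p.1 p.2.1 p.2.2) (x,y,z) (0, 1, 0)) y ∧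
     HasDerivAt (fun t => f x y t) (fderiv ℝ (fun p : ℝ × ℝ × ℝ => f p.1 p.2.1 p.2.2) (x,y,z) (0, 0, 1)) z) := by
  have hd : DifferentiableAt ℝ (fun p : ℝ × ℝ × ℝ => f p.1 p.2.1 p.2.2) (x, y, z) :=
    (hf.contDiffAt (hU.mem_nhds hp)).differentiableAt (by simp)
  refine ⟨?_, ?_, ?_⟩
  · have hι : HasDerivAt (fun t : ℝ => ((t, y, z) : ℝ × ℝ × ℝ)) (1, 0, 0) x := by
      exact (hasDerivAt_id x).prodMk (hasDerivAt_const x ((y, z) : ℝ × ℝ))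
    exact hd.hasFDerivAt.comp_hasDerivAt x hι
  · have hι : HasDerivAt (fun t : ℝ => ((x, t, z) : ℝ × ℝ × ℝ)) (0, 1, 0) y := by
      simpa using (hasDerivAt_const y x).prodMk ((hasDerivAt_id y).prodMk (hasDerivAt_const y z))
    exact hd.hasFDerivAt.comp_hasDerivAt y hι
  · have hι : HasDerivAt (fun t : ℝ => ((x, y, t) : ℝ × ℝ × ℝ)) (0, 0, 1) z := by
      simpa using (hasDerivAt_const z x).prodMk ((hasDerivAt_const z y).prodMk (hasDerivAt_id z))
    exact hd.hasFDerivAt.comp_hasDerivAt z hι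

lemma derivs (hU : IsOpen U)
    (hf : ContDiffOn ℝ (⊤:ℕ∞) (fun p : ℝ × ℝ × ℝ => f p.1 p.2.1 p.2.2) U)
    {x y z : ℝ} (hp : (x, y, z) ∈ U) :
    HasDerivAt (fun t => f t y z) (pdx f x y z) x ∧
    HasDerivAt (fun t => f x t z) (pdy f x y z) y ∧
    HasDerivAt (fun t => f x y t) (pdz f x y z) z := by
  obtain ⟨h1, h2, h3⟩ := derivs_aux hU hf hp
  refine ⟨?_, ?_, ?_⟩
  · show HasDerivAt (fun t => f t y z) (deriv (fun t => f t y z) x) x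
    rw [h1.deriv]; exact h1
  · show HasDerivAt (fun t => f x t z) (deriv (fun t => f x t z) y) y
    rw [h2.deriv]; exact h2
  · show HasDerivAt (fun t => f x y t) (deriv (fun t => f x y t) z) z
    rw [h3.deriv]; exact h3

lemma contPds (hU : IsOpen U)
    (hf : ContDiffOn ℝ (⊤:ℕ∞) (fun p : ℝ × ℝ × ℝ => f p.1 p.2.1 p.2.2) U) :
    ContinuousOn (fun p : ℝ × ℝ × ℝ => pdx f p.1 p.2.1 p.2.2) U ∧
    ContinuousOn (fun p : ℝ × ℝ × ℝ => pdy f p.1 p.2.1 p.2.2) U ∧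
    ContinuousOn (fun p : ℝ × ℝ × ℝ => pdz f p.1 p.2.1 p.2.2) U := by
  have hfd : ContinuousOn (fderiv ℝ (fun p : ℝ × ℝ × ℝ => f p.1 p.2.1 p.2.2)) U :=
    hf.continuousOn_fderiv_of_isOpen hU (mod_cast le_top)
  have key : ∀ v : ℝ × ℝ × ℝ,
      ContinuousOn (fun p => fderiv ℝ (fun p : ℝ × ℝ × ℝ => f p.1 p.2.1 p.2.2) p v) U := fun v =>
    (ContinuousLinearMap.apply ℝ ℝ v).continuous.comp_continuousOn hfd
  refine ⟨(key (1,0,0)).congr ?_, (key (0,1,0)).congr ?_, (key (0,0,1)).congr ?_⟩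
  · intro p hp
    exact ((derivs_aux hU hf (x := p.1) (y := p.2.1) (z := p.2.2) (by simpa using hp)).1).deriv
  · intro p hp
    exact ((derivs_aux hU hf (x := p.1) (y := p.2.1) (z := p.2.2) (by simpa using hp)).2.1).deriv
  · intro p hp
    exact ((derivs_aux hU hf (x := p.1) (y := p.2.1) (z := p.2.2) (by simpa using hp)).2.2).deriv

end DD


lemma swap2 {a b c d : ℝ} {κ : ℝ → ℝ → ℝ}
    (hκ : ContinuousOn (uncurry κ) (Icc a b ×ˢ Icc c d)) :
    ∫ u in Ioo a b, ∫ v in Ioo c d, κ u v = ∫ v in Ioo c d, ∫ u in Ioo a b, κ u v := by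
  apply integral_integral_swap
  rw [Measure.prod_restrict, ← Measure.volume_eq_prod]
  exact ((hκ.integrableOn_compact (isCompact_Icc.prod isCompact_Icc)).mono_set
    (prod_mono Ioo_subset_Icc_self Ioo_subset_Icc_self))

lemma prod3_eq {L h : ℝ} :
    ((volume.restrict (Ioo (0:ℝ) L)).prod
      ((volume.restrict (Ioo (0:ℝ) L)).prod (volume.restrict (Ioo (-h) (0:ℝ))))) =
    (volume : Measure (ℝ × ℝ × ℝ)).restrict (Ioo 0 L ×ˢ Ioo 0 L ×ˢ Ioo (-h) 0) := by
  rw [Measure.prod_restrict, Measure.prod_restrict, ← Measure.volume_eq_prod,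
    ← Measure.volume_eq_prod]

lemma iter3 {L h : ℝ} {w : ℝ × ℝ × ℝ → ℝ}
    (hw : ContinuousOn w (Icc 0 L ×ˢ Icc 0 L ×ˢ Icc (-h) 0)) :
    (∫ q, w q ∂((volume.restrict (Ioo (0:ℝ) L)).prod
      ((volume.restrict (Ioo (0:ℝ) L)).prod (volume.restrict (Ioo (-h) (0:ℝ)))))) =
    ∫ a in Ioo (0:ℝ) L, ∫ b in Ioo (0:ℝ) L, ∫ c in Ioo (-h) (0:ℝ), w (a, b, c) := by
  have hbox : IsCompact (Icc (0:ℝ) L ×ˢ Icc (0:ℝ) L ×ˢ Icc (-h) (0:ℝ)) :=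
    isCompact_Icc.prod (isCompact_Icc.prod isCompact_Icc)
  have hint : Integrable w ((volume.restrict (Ioo (0:ℝ) L)).prod
      ((volume.restrict (Ioo (0:ℝ) L)).prod (volume.restrict (Ioo (-h) (0:ℝ))))) := by
    rw [prod3_eq]
    exact (hw.integrableOn_compact hbox).mono_set
      (prod_mono Ioo_subset_Icc_self (prod_mono Ioo_subset_Icc_self Ioo_subset_Icc_self))
  rw [integral_prod _ hint]
  apply setIntegral_congr_fun measurableSet_Ioo
  intro a ha
  have hinner : Integrable (fun r : ℝ × ℝ => w (a, r))
      ((volume.restrict (Ioo (0:ℝ) L)).prod (volume.restrict (Ioo (-h) (0:ℝ)))) := by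
    rw [Measure.prod_restrict, ← Measure.volume_eq_prod]
    have hc : ContinuousOn (fun r : ℝ × ℝ => w (a, r)) (Icc (0:ℝ) L ×ˢ Icc (-h) (0:ℝ)) := by
      apply hw.comp (Continuous.continuousOn (by continuity))
      exact fun r hr => ⟨Ioo_subset_Icc_self ha, hr⟩
    exact (hc.integrableOn_compact (isCompact_Icc.prod isCompact_Icc)).mono_set
      (prod_mono Ioo_subset_Icc_self Ioo_subset_Icc_self)
  exact integral_prod _ hinner

lemma csBox {L h : ℝ} {u v : ℝ × ℝ × ℝ → ℝ}
    (hu : ContinuousOn u (Icc 0 L ×ˢ Icc 0 L ×ˢ Icc (-h) 0))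
    (hv : ContinuousOn v (Icc 0 L ×ˢ Icc 0 L ×ˢ Icc (-h) 0)) :
    ∫ a in Ioo (0:ℝ) L, ∫ b in Ioo (0:ℝ) L, ∫ c in Ioo (-h) (0:ℝ),
        |u (a, b, c)| * |v (a, b, c)| ≤
      Real.sqrt (∫ a in Ioo (0:ℝ) L, ∫ b in Ioo (0:ℝ) L, ∫ c in Ioo (-h) (0:ℝ), u (a, b, c) ^ 2) *
      Real.sqrt (∫ a in Ioo (0:ℝ) L, ∫ b in Ioo (0:ℝ) L, ∫ c in Ioo (-h) (0:ℝ), v (a, b, c) ^ 2) := by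
  set Pi3 := ((volume.restrict (Ioo (0:ℝ) L)).prod
      ((volume.restrict (Ioo (0:ℝ) L)).prod (volume.restrict (Ioo (-h) (0:ℝ))))) with hPi3
  have hbox : IsCompact (Icc (0:ℝ) L ×ˢ Icc (0:ℝ) L ×ˢ Icc (-h) (0:ℝ)) :=
    isCompact_Icc.prod (isCompact_Icc.prod isCompact_Icc)
  have hEsub : (Ioo (0:ℝ) L ×ˢ Ioo (0:ℝ) L ×ˢ Ioo (-h) (0:ℝ)) ⊆
      (Icc (0:ℝ) L ×ˢ Icc (0:ℝ) L ×ˢ Icc (-h) (0:ℝ)) :=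
    prod_mono Ioo_subset_Icc_self (prod_mono Ioo_subset_Icc_self Ioo_subset_Icc_self)
  have hEm : MeasurableSet (Ioo (0:ℝ) L ×ˢ Ioo (0:ℝ) L ×ˢ Ioo (-h) (0:ℝ)) :=
    measurableSet_Ioo.prod (measurableSet_Ioo.prod measurableSet_Ioo)
  haveI : IsFiniteMeasure Pi3 := by
    rw [hPi3, prod3_eq]
    refine ⟨?_⟩
    rw [Measure.restrict_apply_univ]
    exact lt_of_le_of_lt (measure_mono hEsub) hbox.measure_lt_top
  obtain ⟨Cu, hCu⟩ := hbox.exists_bound_of_continuousOn hu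
  obtain ⟨Cv, hCv⟩ := hbox.exists_bound_of_continuousOn hv
  have hmu : AEStronglyMeasurable u Pi3 := by
    rw [hPi3, prod3_eq]
    exact (hu.mono hEsub).aestronglyMeasurable hEm
  have hmv : AEStronglyMeasurable v Pi3 := by
    rw [hPi3, prod3_eq]
    exact (hv.mono hEsub).aestronglyMeasurable hEm
  have hbu : ∀ᵐ q ∂Pi3, |u q| ≤ Cu := by
    rw [hPi3, prod3_eq]
    exact (ae_restrict_iff' hEm).2 (ae_of_all _ fun q hq => by
      simpa [Real.norm_eq_abs] using hCu q (hEsub hq))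
  have hbv : ∀ᵐ q ∂Pi3, |v q| ≤ Cv := by
    rw [hPi3, prod3_eq]
    exact (ae_restrict_iff' hEm).2 (ae_of_all _ fun q hq => by
      simpa [Real.norm_eq_abs] using hCv q (hEsub hq))
  have key := myCS hmu hmv hbu hbv
  rwa [show (∫ q, |u q| * |v q| ∂Pi3) =
      ∫ a in Ioo (0:ℝ) L, ∫ b in Ioo (0:ℝ) L, ∫ c in Ioo (-h) (0:ℝ), |u (a,b,c)| * |v (a,b,c)|
      from iter3 (hu.abs.mul hv.abs),
    show (∫ q, u q ^ 2 ∂Pi3) =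
      ∫ a in Ioo (0:ℝ) L, ∫ b in Ioo (0:ℝ) L, ∫ c in Ioo (-h) (0:ℝ), u (a,b,c) ^ 2
      from iter3 (hu.pow 2),
    show (∫ q, v q ^ 2 ∂Pi3) =
      ∫ a in Ioo (0:ℝ) L, ∫ b in Ioo (0:ℝ) L, ∫ c in Ioo (-h) (0:ℝ), v (a,b,c) ^ 2
      from iter3 (hv.pow 2)] at key

lemma pow4_eighth {t : ℝ} (ht : 0 ≤ t) : (t ^ ((1:ℝ)/8)) ^ (4:ℕ) = Real.sqrt t := by
  rw [← Real.rpow_natCast (t ^ ((1:ℝ)/8)) 4, ← Real.rpow_mul ht,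
    show (1:ℝ)/8 * ((4:ℕ):ℝ) = 1/2 from by norm_num, ← Real.sqrt_eq_rpow]

lemma pow3_sixth {t : ℝ} (ht : 0 ≤ t) : (t ^ ((1:ℝ)/6)) ^ (3:ℕ) = Real.sqrt t := by
  rw [← Real.rpow_natCast (t ^ ((1:ℝ)/6)) 3, ← Real.rpow_mul ht,
    show (1:ℝ)/6 * ((3:ℕ):ℝ) = 1/2 from by norm_num, ← Real.sqrt_eq_rpow]

lemma anisoNorm_eq (L h : ℝ) (f : ℝ → ℝ → ℝ → ℝ)
    (hTnn : 0 ≤ ∫ x in Ioo (0:ℝ) L, ∫ y in Ioo (0:ℝ) L,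
      (∫ z in Ioo (-h) (0:ℝ), f x y z ^ 4) ^ 2) :
    anisoNorm L h 8 4 f ^ 4 = Real.sqrt (∫ x in Ioo (0:ℝ) L, ∫ y in Ioo (0:ℝ) L,
      (∫ z in Ioo (-h) (0:ℝ), f x y z ^ 4) ^ 2) := by
  have e0 : anisoNorm L h 8 4 f = (∫ x in Ioo (0:ℝ) L, ∫ y in Ioo (0:ℝ) L,
      (∫ z in Ioo (-h) (0:ℝ), f x y z ^ 4) ^ 2) ^ ((1:ℝ)/8) := by
    simp only [anisoNorm]
    congr 1
    refine setIntegral_congr_fun measurableSet_Ioo fun a ha => ?_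
    refine setIntegral_congr_fun measurableSet_Ioo fun b hb => ?_
    have e1 : (∫ z in Ioo (-h) (0:ℝ), |f a b z| ^ (4:ℝ))
        = ∫ z in Ioo (-h) (0:ℝ), f a b z ^ 4 := by
      refine setIntegral_congr_fun measurableSet_Ioo fun c hc => ?_
      rw [show (4:ℝ) = ((4:ℕ):ℝ) from by norm_num, Real.rpow_natCast, ← abs_pow,
        abs_of_nonneg (by positivity)]
    rw [e1, show (8:ℝ)/4 = ((2:ℕ):ℝ) from by norm_num, Real.rpow_natCast]
  rw [e0]
  exact pow4_eighth hTnn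

lemma LpNorm_eq (L h : ℝ) (f : ℝ → ℝ → ℝ → ℝ)
    (hS6nn : 0 ≤ ∫ x in Ioo (0:ℝ) L, ∫ y in Ioo (0:ℝ) L, ∫ z in Ioo (-h) (0:ℝ), f x y z ^ 6) :
    LpNorm L h 6 f ^ 3 = Real.sqrt (∫ x in Ioo (0:ℝ) L, ∫ y in Ioo (0:ℝ) L,
      ∫ z in Ioo (-h) (0:ℝ), f x y z ^ 6) := by
  have e6 : (intM L h fun x y z => |f x y z| ^ (6:ℝ))
      = ∫ x in Ioo (0:ℝ) L, ∫ y in Ioo (0:ℝ) L, ∫ z in Ioo (-h) (0:ℝ), f x y z ^ 6 := by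
    simp only [intM]
    refine setIntegral_congr_fun measurableSet_Ioo fun a ha => ?_
    refine setIntegral_congr_fun measurableSet_Ioo fun b hb => ?_
    refine setIntegral_congr_fun measurableSet_Ioo fun c hc => ?_
    rw [show (6:ℝ) = ((6:ℕ):ℝ) from by norm_num, Real.rpow_natCast, ← abs_pow,
      abs_of_nonneg (by positivity)]
  simp only [LpNorm]
  rw [e6]
  exact pow3_sixth hS6nn

lemma H1norm_eq (L h : ℝ) (f : ℝ → ℝ → ℝ → ℝ) :
    H1norm L h f = Real.sqrt ((∫ x in Ioo (0:ℝ) L, ∫ y in Ioo (0:ℝ) L,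
        ∫ z in Ioo (-h) (0:ℝ), f x y z ^ 2) +
      ((∫ x in Ioo (0:ℝ) L, ∫ y in Ioo (0:ℝ) L, ∫ z in Ioo (-h) (0:ℝ), pdx f x y z ^ 2) +
       (∫ x in Ioo (0:ℝ) L, ∫ y in Ioo (0:ℝ) L, ∫ z in Ioo (-h) (0:ℝ), pdy f x y z ^ 2) +
       (∫ x in Ioo (0:ℝ) L, ∫ y in Ioo (0:ℝ) L, ∫ z in Ioo (-h) (0:ℝ), pdz f x y z ^ 2))) := rfl

lemma assemble {T S6 S2 X2 Y2 Z2 IA IB : ℝ} (L : ℝ) (hL : 0 < L)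
    (hTnn : 0 ≤ T) (hS6 : 0 ≤ S6) (hS2 : 0 ≤ S2) (hX : 0 ≤ X2) (hY : 0 ≤ Y2) (hZ : 0 ≤ Z2)
    (hIB : 0 ≤ IB)
    (hTAB : T ≤ IA * IB)
    (hA : IA ≤ Real.sqrt S6 * ((1/L) * Real.sqrt S2 + 4 * Real.sqrt X2))
    (hB : IB ≤ Real.sqrt S6 * ((1/L) * Real.sqrt S2 + 4 * Real.sqrt Y2)) :
    Real.sqrt T ≤ (1/L + 4) * Real.sqrt S6 * Real.sqrt (S2 + (X2 + Y2 + Z2)) := by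
  set N := Real.sqrt (S2 + (X2 + Y2 + Z2)) with hN
  have hNnn : 0 ≤ N := Real.sqrt_nonneg _
  have hNS2 : Real.sqrt S2 ≤ N := Real.sqrt_le_sqrt (by linarith)
  have hNX2 : Real.sqrt X2 ≤ N := Real.sqrt_le_sqrt (by linarith)
  have hNY2 : Real.sqrt Y2 ≤ N := Real.sqrt_le_sqrt (by linarith)
  have hL4 : (0:ℝ) ≤ 1/L + 4 := by positivity
  have hPA : IA ≤ Real.sqrt S6 * ((1/L + 4) * N) := by
    refine le_trans hA (mul_le_mul_of_nonneg_left ?_ (Real.sqrt_nonneg _))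
    calc (1/L) * Real.sqrt S2 + 4 * Real.sqrt X2 ≤ (1/L) * N + 4 * N :=
        add_le_add (mul_le_mul_of_nonneg_left hNS2 (by positivity))
          (mul_le_mul_of_nonneg_left hNX2 (by norm_num))
      _ = (1/L + 4) * N := by ring
  have hPB : IB ≤ Real.sqrt S6 * ((1/L + 4) * N) := by
    refine le_trans hB (mul_le_mul_of_nonneg_left ?_ (Real.sqrt_nonneg _))
    calc (1/L) * Real.sqrt S2 + 4 * Real.sqrt Y2 ≤ (1/L) * N + 4 * N :=
        add_le_add (mul_le_mul_of_nonneg_left hNS2 (by positivity))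
          (mul_le_mul_of_nonneg_left hNY2 (by norm_num))
      _ = (1/L + 4) * N := by ring
  have hPnn : 0 ≤ Real.sqrt S6 * ((1/L + 4) * N) :=
    mul_nonneg (Real.sqrt_nonneg _) (mul_nonneg hL4 hNnn)
  have hTP : T ≤ (Real.sqrt S6 * ((1/L + 4) * N)) * (Real.sqrt S6 * ((1/L + 4) * N)) :=
    le_trans hTAB (mul_le_mul hPA hPB hIB hPnn)
  calc Real.sqrt T ≤ Real.sqrt ((Real.sqrt S6 * ((1/L + 4) * N)) * (Real.sqrt S6 * ((1/L + 4) * N))) :=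
      Real.sqrt_le_sqrt hTP
    _ = Real.sqrt S6 * ((1/L + 4) * N) := Real.sqrt_mul_self hPnn
    _ = (1/L + 4) * Real.sqrt S6 * N := by ring

set_option maxHeartbeats 2000000 in
/-- estimate \eqref{eq:ct64}:
there is `C > 0`, depending only on `M`, with
`|f|_{L^8_x L^4_z}⁴ ≤ C |f|_{L⁶}³ ‖f‖` for all `f` smooth near the closure of `M`. -/
theorem stmt6 (L h : ℝ) (hL : 0 < L) (hh : 0 < h) :
    ∃ C : ℝ, 0 < C ∧
      ∀ f : ℝ → ℝ → ℝ → ℝ, SmoothNearM L h f →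
        anisoNorm L h 8 4 f ^ 4 ≤ C * LpNorm L h 6 f ^ 3 * H1norm L h f := by
  refine ⟨1/L + 4, by positivity, ?_⟩
  intro f hsm
  obtain ⟨U, hU, hKU, hf⟩ := hsm
  have hK : ((Icc (0:ℝ) L) ×ˢ (Icc (0:ℝ) L) ×ˢ (Icc (-h) (0:ℝ))) ⊆ U := by
    have hcl : closure (Mset L h) = ((Icc (0:ℝ) L) ×ˢ (Icc (0:ℝ) L) ×ˢ (Icc (-h) (0:ℝ))) := by
      rw [Mset, closure_prod_eq, closure_prod_eq, closure_Ioo hL.ne,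
        closure_Ioo (neg_lt_zero.mpr hh).ne]
    exact hcl ▸ hKU
  have memU : ∀ {x y z : ℝ}, x ∈ (Icc (0:ℝ) L) → y ∈ (Icc (0:ℝ) L) → z ∈ (Icc (-h) (0:ℝ)) → ((x, y, z) : ℝ × ℝ × ℝ) ∈ U :=
    fun hx hy hz => hK ⟨hx, hy, hz⟩
  have hc0 : ContinuousOn (fun p : ℝ × ℝ × ℝ => f p.1 p.2.1 p.2.2) U := hf.continuousOn
  obtain ⟨hcx, hcy, hcz⟩ := contPds hU hf
  have hbox : IsCompact ((Icc (0:ℝ) L) ×ˢ (Icc (0:ℝ) L) ×ˢ (Icc (-h) (0:ℝ))) := isCompact_Icc.prod (isCompact_Icc.prod isCompact_Icc)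
  obtain ⟨C0, hC0⟩ := hbox.exists_bound_of_continuousOn (hc0.mono hK)
  obtain ⟨C1, hC1⟩ := hbox.exists_bound_of_continuousOn (hcx.mono hK)
  obtain ⟨C2, hC2⟩ := hbox.exists_bound_of_continuousOn (hcy.mono hK)
  obtain ⟨Cb, hCb0, bf, bx, by'⟩ :
      ∃ Cb : ℝ, 0 ≤ Cb ∧
        (∀ {x y z : ℝ}, x ∈ (Icc (0:ℝ) L) → y ∈ (Icc (0:ℝ) L) → z ∈ (Icc (-h) (0:ℝ)) → |f x y z| ≤ Cb) ∧
        (∀ {x y z : ℝ}, x ∈ (Icc (0:ℝ) L) → y ∈ (Icc (0:ℝ) L) → z ∈ (Icc (-h) (0:ℝ)) → |pdx f x y z| ≤ Cb) ∧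
        (∀ {x y z : ℝ}, x ∈ (Icc (0:ℝ) L) → y ∈ (Icc (0:ℝ) L) → z ∈ (Icc (-h) (0:ℝ)) → |pdy f x y z| ≤ Cb) := by
    refine ⟨1 + |C0| + |C1| + |C2|, by positivity, ?_, ?_, ?_⟩
    · intro x y z hx hy hz
      have h3 := hC0 (x, y, z) ⟨hx, hy, hz⟩
      rw [Real.norm_eq_abs] at h3
      have h0 := le_abs_self C0; have h1 := abs_nonneg C1; have h2 := abs_nonneg C2
      dsimp only at h3; linarith
    · intro x y z hx hy hz
      have h3 := hC1 (x, y, z) ⟨hx, hy, hz⟩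
      rw [Real.norm_eq_abs] at h3
      have h0 := le_abs_self C1; have h1 := abs_nonneg C0; have h2 := abs_nonneg C2
      dsimp only at h3; linarith
    · intro x y z hx hy hz
      have h3 := hC2 (x, y, z) ⟨hx, hy, hz⟩
      rw [Real.norm_eq_abs] at h3
      have h0 := le_abs_self C2; have h1 := abs_nonneg C0; have h2 := abs_nonneg C1
      dsimp only at h3; linarith
  have slz : ∀ θ : ℝ → ℝ → ℝ → ℝ, ContinuousOn (fun p : ℝ × ℝ × ℝ => θ p.1 p.2.1 p.2.2) U →
      ∀ {x y : ℝ}, x ∈ (Icc (0:ℝ) L) → y ∈ (Icc (0:ℝ) L) → ContinuousOn (fun z => θ x y z) (Icc (-h) (0:ℝ)) := by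
    intro θ hθ x y hx hy
    exact hθ.comp (Continuous.continuousOn
      (continuous_const.prodMk (continuous_const.prodMk continuous_id)))
      (fun z hz => memU hx hy hz)
  have slx : ∀ θ : ℝ → ℝ → ℝ → ℝ, ContinuousOn (fun p : ℝ × ℝ × ℝ => θ p.1 p.2.1 p.2.2) U →
      ∀ {y z : ℝ}, y ∈ (Icc (0:ℝ) L) → z ∈ (Icc (-h) (0:ℝ)) → ContinuousOn (fun x => θ x y z) (Icc (0:ℝ) L) := by
    intro θ hθ y z hy hz
    exact hθ.comp (Continuous.continuousOn
      (continuous_id.prodMk (continuous_const.prodMk continuous_const)))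
      (fun x hx => memU hx hy hz)
  have sly : ∀ θ : ℝ → ℝ → ℝ → ℝ, ContinuousOn (fun p : ℝ × ℝ × ℝ => θ p.1 p.2.1 p.2.2) U →
      ∀ {x z : ℝ}, x ∈ (Icc (0:ℝ) L) → z ∈ (Icc (-h) (0:ℝ)) → ContinuousOn (fun t => θ x t z) (Icc (0:ℝ) L) := by
    intro θ hθ x z hx hz
    exact hθ.comp (Continuous.continuousOn
      (continuous_const.prodMk (continuous_id.prodMk continuous_const)))
      (fun t ht => memU hx ht hz)
  have slxy : ∀ θ : ℝ → ℝ → ℝ → ℝ, ContinuousOn (fun p : ℝ × ℝ × ℝ => θ p.1 p.2.1 p.2.2) U →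
      ∀ {z : ℝ}, z ∈ (Icc (-h) (0:ℝ)) → ContinuousOn (fun q : ℝ × ℝ => θ q.1 q.2 z) ((Icc (0:ℝ) L) ×ˢ (Icc (0:ℝ) L)) := by
    intro θ hθ z hz
    exact hθ.comp (Continuous.continuousOn
      (continuous_fst.prodMk (continuous_snd.prodMk continuous_const)))
      (fun q hq => memU hq.1 hq.2 hz)
  have slyx : ∀ θ : ℝ → ℝ → ℝ → ℝ, ContinuousOn (fun p : ℝ × ℝ × ℝ => θ p.1 p.2.1 p.2.2) U →
      ∀ {z : ℝ}, z ∈ (Icc (-h) (0:ℝ)) → ContinuousOn (fun q : ℝ × ℝ => θ q.2 q.1 z) ((Icc (0:ℝ) L) ×ˢ (Icc (0:ℝ) L)) := by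
    intro θ hθ z hz
    exact hθ.comp (Continuous.continuousOn
      (continuous_snd.prodMk (continuous_fst.prodMk continuous_const)))
      (fun q hq => memU hq.2 hq.1 hz)
  have slzs : ∀ θ : ℝ → ℝ → ℝ → ℝ, ContinuousOn (fun p : ℝ × ℝ × ℝ => θ p.1 p.2.1 p.2.2) U →
      ∀ {y : ℝ}, y ∈ (Icc (0:ℝ) L) → ContinuousOn (fun q : ℝ × ℝ => θ q.2 y q.1) ((Icc (-h) (0:ℝ)) ×ˢ (Icc (0:ℝ) L)) := by
    intro θ hθ y hy
    exact hθ.comp (Continuous.continuousOn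
      (continuous_snd.prodMk (continuous_const.prodMk continuous_fst)))
      (fun q hq => memU hq.2 hy hq.1)
  have slzt : ∀ θ : ℝ → ℝ → ℝ → ℝ, ContinuousOn (fun p : ℝ × ℝ × ℝ => θ p.1 p.2.1 p.2.2) U →
      ∀ {x : ℝ}, x ∈ (Icc (0:ℝ) L) → ContinuousOn (fun q : ℝ × ℝ => θ x q.2 q.1) ((Icc (-h) (0:ℝ)) ×ˢ (Icc (0:ℝ) L)) := by
    intro θ hθ x hx
    exact hθ.comp (Continuous.continuousOn
      (continuous_const.prodMk (continuous_snd.prodMk continuous_fst)))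
      (fun q hq => memU hx hq.2 hq.1)
  have slA : ∀ θ : ℝ → ℝ → ℝ → ℝ, ContinuousOn (fun p : ℝ × ℝ × ℝ => θ p.1 p.2.1 p.2.2) U →
      ContinuousOn (fun q : ℝ × ℝ × ℝ => θ q.2.1 q.1 q.2.2) ((Icc (0:ℝ) L) ×ˢ (Icc (0:ℝ) L) ×ˢ (Icc (-h) (0:ℝ))) := by
    intro θ hθ
    exact hθ.comp (Continuous.continuousOn
      ((continuous_fst.comp continuous_snd).prodMk
        (continuous_fst.prodMk (continuous_snd.comp continuous_snd))))
      (fun q hq => memU hq.2.1 hq.1 hq.2.2)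
  have slB : ∀ θ : ℝ → ℝ → ℝ → ℝ, ContinuousOn (fun p : ℝ × ℝ × ℝ => θ p.1 p.2.1 p.2.2) U →
      ContinuousOn (fun q : ℝ × ℝ × ℝ => θ q.1 q.2.1 q.2.2) ((Icc (0:ℝ) L) ×ˢ (Icc (0:ℝ) L) ×ˢ (Icc (-h) (0:ℝ))) := fun θ hθ => hθ.mono hK
  -- joint continuity of the z-integrated quantities
  have hFc : ContinuousOn (fun q : ℝ × ℝ => (∫ z in (Ioo (-h) (0:ℝ)), f q.1 q.2 z ^ 4)) ((Icc (0:ℝ) L) ×ˢ (Icc (0:ℝ) L)) := by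
    apply paramCont (F := fun (q : ℝ × ℝ) z => f q.1 q.2 z ^ 4) (C := Cb ^ 4)
    · intro z hz
      exact (slxy f hc0 (Ioo_subset_Icc_self hz)).pow 4
    · intro q hq
      exact ((slz f hc0 hq.1 hq.2).mono Ioo_subset_Icc_self).pow 4
    · intro q hq z hz
      rw [abs_pow]
      exact pow_le_pow_left₀ (abs_nonneg _) (bf hq.1 hq.2 (Ioo_subset_Icc_self hz)) 4
  have hDXc : ContinuousOn (fun q : ℝ × ℝ => (∫ z in (Ioo (-h) (0:ℝ)), |f q.1 q.2 z ^ 3| * |pdx f q.1 q.2 z|)) ((Icc (0:ℝ) L) ×ˢ (Icc (0:ℝ) L)) := by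
    apply paramCont (F := fun (q : ℝ × ℝ) z => |f q.1 q.2 z ^ 3| * |pdx f q.1 q.2 z|) (C := Cb ^ 3 * Cb)
    · intro z hz
      exact (((slxy f hc0 (Ioo_subset_Icc_self hz)).pow 3).abs).mul
        ((slxy (pdx f) hcx (Ioo_subset_Icc_self hz)).abs)
    · intro q hq
      exact ((((slz f hc0 hq.1 hq.2).mono Ioo_subset_Icc_self).pow 3).abs).mul
        (((slz (pdx f) hcx hq.1 hq.2).mono Ioo_subset_Icc_self).abs)
    · intro q hq z hz
      have hzc := Ioo_subset_Icc_self hz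
      rw [abs_mul, abs_abs, abs_abs, abs_pow]
      exact mul_le_mul (pow_le_pow_left₀ (abs_nonneg _) (bf hq.1 hq.2 hzc) 3)
        (bx hq.1 hq.2 hzc) (abs_nonneg _) (by positivity)
  have hDYc : ContinuousOn (fun q : ℝ × ℝ => (∫ z in (Ioo (-h) (0:ℝ)), |f q.1 q.2 z ^ 3| * |pdy f q.1 q.2 z|)) ((Icc (0:ℝ) L) ×ˢ (Icc (0:ℝ) L)) := by
    apply paramCont (F := fun (q : ℝ × ℝ) z => |f q.1 q.2 z ^ 3| * |pdy f q.1 q.2 z|) (C := Cb ^ 3 * Cb)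
    · intro z hz
      exact (((slxy f hc0 (Ioo_subset_Icc_self hz)).pow 3).abs).mul
        ((slxy (pdy f) hcy (Ioo_subset_Icc_self hz)).abs)
    · intro q hq
      exact ((((slz f hc0 hq.1 hq.2).mono Ioo_subset_Icc_self).pow 3).abs).mul
        (((slz (pdy f) hcy hq.1 hq.2).mono Ioo_subset_Icc_self).abs)
    · intro q hq z hz
      have hzc := Ioo_subset_Icc_self hz
      rw [abs_mul, abs_abs, abs_abs, abs_pow]
      exact mul_le_mul (pow_le_pow_left₀ (abs_nonneg _) (bf hq.1 hq.2 hzc) 3)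
        (by' hq.1 hq.2 hzc) (abs_nonneg _) (by positivity)
  -- bounds on the z-integrated quantities
  have bF : ∀ {x y : ℝ}, x ∈ (Icc (0:ℝ) L) → y ∈ (Icc (0:ℝ) L) → |(∫ z in (Ioo (-h) (0:ℝ)), f x y z ^ 4)| ≤ Cb ^ 4 * (0 - (-h)) := by
    intro x y hx hy
    refine intBound (by linarith) (fun z hz => ?_)
    rw [abs_pow]
    exact pow_le_pow_left₀ (abs_nonneg _) (bf hx hy (Ioo_subset_Icc_self hz)) 4
  have bDX : ∀ {x y : ℝ}, x ∈ (Icc (0:ℝ) L) → y ∈ (Icc (0:ℝ) L) → |(∫ z in (Ioo (-h) (0:ℝ)), |f x y z ^ 3| * |pdx f x y z|)| ≤ Cb ^ 3 * Cb * (0 - (-h)) := by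
    intro x y hx hy
    refine intBound (by linarith) (fun z hz => ?_)
    have hzc := Ioo_subset_Icc_self hz
    rw [abs_mul, abs_abs, abs_abs, abs_pow]
    exact mul_le_mul (pow_le_pow_left₀ (abs_nonneg _) (bf hx hy hzc) 3)
      (bx hx hy hzc) (abs_nonneg _) (by positivity)
  have bDY : ∀ {x y : ℝ}, x ∈ (Icc (0:ℝ) L) → y ∈ (Icc (0:ℝ) L) → |(∫ z in (Ioo (-h) (0:ℝ)), |f x y z ^ 3| * |pdy f x y z|)| ≤ Cb ^ 3 * Cb * (0 - (-h)) := by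
    intro x y hx hy
    refine intBound (by linarith) (fun z hz => ?_)
    have hzc := Ioo_subset_Icc_self hz
    rw [abs_mul, abs_abs, abs_abs, abs_pow]
    exact mul_le_mul (pow_le_pow_left₀ (abs_nonneg _) (bf hx hy hzc) 3)
      (by' hx hy hzc) (abs_nonneg _) (by positivity)
  -- second-level continuity
  have hRAc : ContinuousOn (fun y => ∫ x in (Ioo (0:ℝ) L), (∫ z in (Ioo (-h) (0:ℝ)), f x y z ^ 4)) (Icc (0:ℝ) L) := by
    apply paramCont (F := fun (y : ℝ) x => (∫ z in (Ioo (-h) (0:ℝ)), f x y z ^ 4)) (C := Cb ^ 4 * (0 - (-h)))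
    · intro x hx
      exact hFc.comp (Continuous.continuousOn (continuous_const.prodMk continuous_id))
        (fun y hy => ⟨Ioo_subset_Icc_self hx, hy⟩)
    · intro y hy
      exact (hFc.comp (Continuous.continuousOn (continuous_id.prodMk continuous_const))
        (fun x (hx : x ∈ (Icc (0:ℝ) L)) => ⟨hx, hy⟩)).mono Ioo_subset_Icc_self
    · intro y hy x hx
      exact bF (Ioo_subset_Icc_self hx) hy
  have hDXIc : ContinuousOn (fun y => ∫ s in (Ioo (0:ℝ) L), (∫ z in (Ioo (-h) (0:ℝ)), |f s y z ^ 3| * |pdx f s y z|)) (Icc (0:ℝ) L) := by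
    apply paramCont (F := fun (y : ℝ) s => (∫ z in (Ioo (-h) (0:ℝ)), |f s y z ^ 3| * |pdx f s y z|)) (C := Cb ^ 3 * Cb * (0 - (-h)))
    · intro s hs
      exact hDXc.comp (Continuous.continuousOn (continuous_const.prodMk continuous_id))
        (fun y hy => ⟨Ioo_subset_Icc_self hs, hy⟩)
    · intro y hy
      exact (hDXc.comp (Continuous.continuousOn (continuous_id.prodMk continuous_const))
        (fun s (hs : s ∈ (Icc (0:ℝ) L)) => ⟨hs, hy⟩)).mono Ioo_subset_Icc_self
    · intro y hy s hs
      exact bDX (Ioo_subset_Icc_self hs) hy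
  have hRBc : ContinuousOn (fun x => ∫ y in (Ioo (0:ℝ) L), (∫ z in (Ioo (-h) (0:ℝ)), f x y z ^ 4)) (Icc (0:ℝ) L) := by
    apply paramCont (F := fun (x : ℝ) y => (∫ z in (Ioo (-h) (0:ℝ)), f x y z ^ 4)) (C := Cb ^ 4 * (0 - (-h)))
    · intro y hy
      exact hFc.comp (Continuous.continuousOn (continuous_id.prodMk continuous_const))
        (fun x (hx : x ∈ (Icc (0:ℝ) L)) => ⟨hx, Ioo_subset_Icc_self hy⟩)
    · intro x hx
      exact (hFc.comp (Continuous.continuousOn (continuous_const.prodMk continuous_id))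
        (fun y (hy : y ∈ (Icc (0:ℝ) L)) => ⟨hx, hy⟩)).mono Ioo_subset_Icc_self
    · intro x hx y hy
      exact bF hx (Ioo_subset_Icc_self hy)
  have hDYIc : ContinuousOn (fun x => ∫ t in (Ioo (0:ℝ) L), (∫ z in (Ioo (-h) (0:ℝ)), |f x t z ^ 3| * |pdy f x t z|)) (Icc (0:ℝ) L) := by
    apply paramCont (F := fun (x : ℝ) t => (∫ z in (Ioo (-h) (0:ℝ)), |f x t z ^ 3| * |pdy f x t z|)) (C := Cb ^ 3 * Cb * (0 - (-h)))
    · intro t ht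
      exact hDYc.comp (Continuous.continuousOn (continuous_id.prodMk continuous_const))
        (fun x (hx : x ∈ (Icc (0:ℝ) L)) => ⟨hx, Ioo_subset_Icc_self ht⟩)
    · intro x hx
      exact (hDYc.comp (Continuous.continuousOn (continuous_const.prodMk continuous_id))
        (fun t (ht : t ∈ (Icc (0:ℝ) L)) => ⟨hx, ht⟩)).mono Ioo_subset_Icc_self
    · intro x hx t ht
      exact bDY hx (Ioo_subset_Icc_self ht)
  -- pointwise bound F x y ≤ A y
  have keyA : ∀ x ∈ (Ioo (0:ℝ) L), ∀ y ∈ (Ioo (0:ℝ) L), (∫ z in (Ioo (-h) (0:ℝ)), f x y z ^ 4) ≤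
      (1/L) * (∫ x in (Ioo (0:ℝ) L), (∫ z in (Ioo (-h) (0:ℝ)), f x y z ^ 4)) + 4 * ∫ s in (Ioo (0:ℝ) L), (∫ z in (Ioo (-h) (0:ℝ)), |f s y z ^ 3| * |pdx f s y z|) := by
    intro x hx y hy
    have hxc : x ∈ (Icc (0:ℝ) L) := Ioo_subset_Icc_self hx
    have hyc : y ∈ (Icc (0:ℝ) L) := Ioo_subset_Icc_self hy
    have step2 : ∀ x' ∈ (Ioo (0:ℝ) L), (∫ z in (Ioo (-h) (0:ℝ)), f x y z ^ 4) ≤ (∫ z in (Ioo (-h) (0:ℝ)), f x' y z ^ 4) + 4 * ∫ s in (Ioo (0:ℝ) L), (∫ z in (Ioo (-h) (0:ℝ)), |f s y z ^ 3| * |pdx f s y z|) := by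
      intro x' hx'
      have hx'c : x' ∈ (Icc (0:ℝ) L) := Ioo_subset_Icc_self hx'
      have step1 : ∀ z ∈ (Ioo (-h) (0:ℝ)), f x y z ^ 4 ≤ f x' y z ^ 4 +
          4 * ∫ s in (Ioo (0:ℝ) L), |f s y z ^ 3| * |pdx f s y z| := by
        intro z hz
        have hzc : z ∈ (Icc (-h) (0:ℝ)) := Ioo_subset_Icc_self hz
        have huI : uIcc x' x ⊆ (Ioo (0:ℝ) L) := Set.ordConnected_Ioo.uIcc_subset hx' hx
        have hds : ∀ s ∈ uIcc x' x, HasDerivAt (fun t => f t y z ^ 4)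
            (4 * f s y z ^ 3 * pdx f s y z) s := by
          intro s hs
          have hd := (derivs hU hf (memU (Ioo_subset_Icc_self (huI hs)) hyc hzc)).1
          have hdp := HasDerivAt.pow (n := 4) hd
          norm_num at hdp
          exact hdp
        have hcont0 : ContinuousOn (fun s => 4 * f s y z ^ 3 * pdx f s y z) (Icc (0:ℝ) L) :=
          (continuousOn_const.mul ((slx f hc0 hyc hzc).pow 3)).mul (slx (pdx f) hcx hyc hzc)
        have ftc : (∫ s in x'..x, 4 * f s y z ^ 3 * pdx f s y z) = f x y z ^ 4 - f x' y z ^ 4 :=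
          intervalIntegral.integral_eq_sub_of_hasDerivAt hds
            ((hcont0.mono (huI.trans Ioo_subset_Icc_self)).intervalIntegrable)
        have intabs : IntegrableOn (fun s => |4 * f s y z ^ 3 * pdx f s y z|) (Ioo (0:ℝ) L) :=
          intOnIoo hcont0.abs
        have h2 : |∫ s in x'..x, 4 * f s y z ^ 3 * pdx f s y z|
            ≤ ∫ s in Set.uIoc x' x, |4 * f s y z ^ 3 * pdx f s y z| := by
          exact intervalIntegral.norm_integral_le_integral_norm_uIoc
            (a := x') (b := x) (μ := volume) (f := fun s => 4 * f s y z ^ 3 * pdx f s y z)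
        have h3 : (∫ s in Set.uIoc x' x, |4 * f s y z ^ 3 * pdx f s y z|)
            ≤ ∫ s in (Ioo (0:ℝ) L), |4 * f s y z ^ 3 * pdx f s y z| :=
          setIntegral_mono_set intabs ((ae_restrict_iff' measurableSet_Ioo).2
            (ae_of_all _ fun s _ => abs_nonneg _))
            (HasSubset.Subset.eventuallyLE (uIoc_subset_uIcc.trans huI))
        have h4 : (∫ s in (Ioo (0:ℝ) L), |4 * f s y z ^ 3 * pdx f s y z|)
            = 4 * ∫ s in (Ioo (0:ℝ) L), |f s y z ^ 3| * |pdx f s y z| := by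
          rw [show (fun s => |4 * f s y z ^ 3 * pdx f s y z|)
              = fun s => 4 * (|f s y z ^ 3| * |pdx f s y z|) from funext fun s => by
            rw [abs_mul, abs_mul, abs_of_nonneg (by norm_num : (0:ℝ) ≤ 4), mul_assoc],
            integral_const_mul]
        have hle := le_abs_self (∫ s in x'..x, 4 * f s y z ^ 3 * pdx f s y z)
        linarith [ftc]
      have intW : IntegrableOn (fun z => ∫ s in (Ioo (0:ℝ) L), |f s y z ^ 3| * |pdx f s y z|) (Ioo (-h) (0:ℝ)) := by
        apply intOnIoo
        apply paramCont (F := fun (z : ℝ) s => |f s y z ^ 3| * |pdx f s y z|) (C := Cb ^ 3 * Cb)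
        · intro s hs
          have hsc := Ioo_subset_Icc_self hs
          exact (((slz f hc0 hsc hyc).pow 3).abs).mul ((slz (pdx f) hcx hsc hyc).abs)
        · intro z hz
          have hzc : z ∈ (Icc (-h) (0:ℝ)) := hz
          exact ((((slx f hc0 hyc hzc).pow 3).abs).mul
            ((slx (pdx f) hcx hyc hzc).abs)).mono Ioo_subset_Icc_self
        · intro z hz s hs
          have hzc : z ∈ (Icc (-h) (0:ℝ)) := hz; have hsc := Ioo_subset_Icc_self hs
          rw [abs_mul, abs_abs, abs_abs, abs_pow]
          exact mul_le_mul (pow_le_pow_left₀ (abs_nonneg _) (bf hsc hyc hzc) 3)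
            (bx hsc hyc hzc) (abs_nonneg _) (by positivity)
      have int1 : IntegrableOn (fun z => f x y z ^ 4) (Ioo (-h) (0:ℝ)) := intOnIoo ((slz f hc0 hxc hyc).pow 4)
      have int1' : IntegrableOn (fun z => f x' y z ^ 4) (Ioo (-h) (0:ℝ)) := intOnIoo ((slz f hc0 hx'c hyc).pow 4)
      have mono : (∫ z in (Ioo (-h) (0:ℝ)), f x y z ^ 4) ≤ ∫ z in (Ioo (-h) (0:ℝ)),
          (f x' y z ^ 4 + 4 * ∫ s in (Ioo (0:ℝ) L), |f s y z ^ 3| * |pdx f s y z|) := by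
        apply setIntegral_mono_on int1 ?_ measurableSet_Ioo step1
        exact int1'.add (intW.const_mul 4)
      rw [integral_add int1' (intW.const_mul 4), integral_const_mul] at mono
      have hswap : (∫ z in (Ioo (-h) (0:ℝ)), ∫ s in (Ioo (0:ℝ) L), |f s y z ^ 3| * |pdx f s y z|)
          = ∫ s in (Ioo (0:ℝ) L), (∫ z in (Ioo (-h) (0:ℝ)), |f s y z ^ 3| * |pdx f s y z|) := by
        apply swap2 (κ := fun z s => |f s y z ^ 3| * |pdx f s y z|)
        exact (((slzs f hc0 hyc).pow 3).abs).mul ((slzs (pdx f) hcx hyc).abs)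
      rw [hswap] at mono
      exact mono
    have hFyint : IntegrableOn (fun x' => (∫ z in (Ioo (-h) (0:ℝ)), f x' y z ^ 4)) (Ioo (0:ℝ) L) := by
      apply intOnIoo
      exact hFc.comp (Continuous.continuousOn (continuous_id.prodMk continuous_const))
        (fun x' (hx' : x' ∈ (Icc (0:ℝ) L)) => ⟨hx', hyc⟩)
    have hvol : (volume (Ioo (0:ℝ) L)).toReal = L := by
      rw [Real.volume_Ioo, ENNReal.toReal_ofReal (by linarith)]; ring
    have avg := setIntegral_ge_of_const_le (μ := volume) (s := (Ioo (0:ℝ) L))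
      (f := fun x' => (∫ z in (Ioo (-h) (0:ℝ)), f x' y z ^ 4)) (c := (∫ z in (Ioo (-h) (0:ℝ)), f x y z ^ 4) - 4 * ∫ s in (Ioo (0:ℝ) L), (∫ z in (Ioo (-h) (0:ℝ)), |f s y z ^ 3| * |pdx f s y z|))
      measurableSet_Ioo (by rw [Real.volume_Ioo]; exact ENNReal.ofReal_ne_top)
      (fun x' hx' => by linarith [step2 x' hx']) hFyint
    rw [Measure.real, hvol, smul_eq_mul, mul_comm L] at avg
    have hdiv : (∫ z in (Ioo (-h) (0:ℝ)), f x y z ^ 4) - 4 * (∫ s in (Ioo (0:ℝ) L), (∫ z in (Ioo (-h) (0:ℝ)), |f s y z ^ 3| * |pdx f s y z|))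
        ≤ (∫ x' in (Ioo (0:ℝ) L), (∫ z in (Ioo (-h) (0:ℝ)), f x' y z ^ 4)) / L := (le_div_iff₀ hL).2 avg
    have e : (1/L) * (∫ x' in (Ioo (0:ℝ) L), (∫ z in (Ioo (-h) (0:ℝ)), f x' y z ^ 4)) = (∫ x' in (Ioo (0:ℝ) L), (∫ z in (Ioo (-h) (0:ℝ)), f x' y z ^ 4)) / L := by ring
    linarith [hdiv, e]
  -- pointwise bound F x y ≤ B x
  have keyB : ∀ x ∈ (Ioo (0:ℝ) L), ∀ y ∈ (Ioo (0:ℝ) L), (∫ z in (Ioo (-h) (0:ℝ)), f x y z ^ 4) ≤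
      (1/L) * (∫ y in (Ioo (0:ℝ) L), (∫ z in (Ioo (-h) (0:ℝ)), f x y z ^ 4)) + 4 * ∫ t in (Ioo (0:ℝ) L), (∫ z in (Ioo (-h) (0:ℝ)), |f x t z ^ 3| * |pdy f x t z|) := by
    intro x hx y hy
    have hxc : x ∈ (Icc (0:ℝ) L) := Ioo_subset_Icc_self hx
    have hyc : y ∈ (Icc (0:ℝ) L) := Ioo_subset_Icc_self hy
    have step2 : ∀ y' ∈ (Ioo (0:ℝ) L), (∫ z in (Ioo (-h) (0:ℝ)), f x y z ^ 4) ≤ (∫ z in (Ioo (-h) (0:ℝ)), f x y' z ^ 4) + 4 * ∫ t in (Ioo (0:ℝ) L), (∫ z in (Ioo (-h) (0:ℝ)), |f x t z ^ 3| * |pdy f x t z|) := by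
      intro y' hy'
      have hy'c : y' ∈ (Icc (0:ℝ) L) := Ioo_subset_Icc_self hy'
      have step1 : ∀ z ∈ (Ioo (-h) (0:ℝ)), f x y z ^ 4 ≤ f x y' z ^ 4 +
          4 * ∫ t in (Ioo (0:ℝ) L), |f x t z ^ 3| * |pdy f x t z| := by
        intro z hz
        have hzc : z ∈ (Icc (-h) (0:ℝ)) := Ioo_subset_Icc_self hz
        have huI : uIcc y' y ⊆ (Ioo (0:ℝ) L) := Set.ordConnected_Ioo.uIcc_subset hy' hy
        have hds : ∀ t ∈ uIcc y' y, HasDerivAt (fun t => f x t z ^ 4)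
            (4 * f x t z ^ 3 * pdy f x t z) t := by
          intro t ht
          have hd := (derivs hU hf (memU hxc (Ioo_subset_Icc_self (huI ht)) hzc)).2.1
          have hdp := HasDerivAt.pow (n := 4) hd
          norm_num at hdp
          exact hdp
        have hcont0 : ContinuousOn (fun t => 4 * f x t z ^ 3 * pdy f x t z) (Icc (0:ℝ) L) :=
          (continuousOn_const.mul ((sly f hc0 hxc hzc).pow 3)).mul (sly (pdy f) hcy hxc hzc)
        have ftc : (∫ t in y'..y, 4 * f x t z ^ 3 * pdy f x t z) = f x y z ^ 4 - f x y' z ^ 4 :=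
          intervalIntegral.integral_eq_sub_of_hasDerivAt hds
            ((hcont0.mono (huI.trans Ioo_subset_Icc_self)).intervalIntegrable)
        have intabs : IntegrableOn (fun t => |4 * f x t z ^ 3 * pdy f x t z|) (Ioo (0:ℝ) L) :=
          intOnIoo hcont0.abs
        have h2 : |∫ t in y'..y, 4 * f x t z ^ 3 * pdy f x t z|
            ≤ ∫ t in Set.uIoc y' y, |4 * f x t z ^ 3 * pdy f x t z| := by
          exact intervalIntegral.norm_integral_le_integral_norm_uIoc
            (a := y') (b := y) (μ := volume) (f := fun t => 4 * f x t z ^ 3 * pdy f x t z)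
        have h3 : (∫ t in Set.uIoc y' y, |4 * f x t z ^ 3 * pdy f x t z|)
            ≤ ∫ t in (Ioo (0:ℝ) L), |4 * f x t z ^ 3 * pdy f x t z| :=
          setIntegral_mono_set intabs ((ae_restrict_iff' measurableSet_Ioo).2
            (ae_of_all _ fun t _ => abs_nonneg _))
            (HasSubset.Subset.eventuallyLE (uIoc_subset_uIcc.trans huI))
        have h4 : (∫ t in (Ioo (0:ℝ) L), |4 * f x t z ^ 3 * pdy f x t z|)
            = 4 * ∫ t in (Ioo (0:ℝ) L), |f x t z ^ 3| * |pdy f x t z| := by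
          rw [show (fun t => |4 * f x t z ^ 3 * pdy f x t z|)
              = fun t => 4 * (|f x t z ^ 3| * |pdy f x t z|) from funext fun t => by
            rw [abs_mul, abs_mul, abs_of_nonneg (by norm_num : (0:ℝ) ≤ 4), mul_assoc],
            integral_const_mul]
        have hle := le_abs_self (∫ t in y'..y, 4 * f x t z ^ 3 * pdy f x t z)
        linarith [ftc]
      have intW : IntegrableOn (fun z => ∫ t in (Ioo (0:ℝ) L), |f x t z ^ 3| * |pdy f x t z|) (Ioo (-h) (0:ℝ)) := by
        apply intOnIoo
        apply paramCont (F := fun (z : ℝ) t => |f x t z ^ 3| * |pdy f x t z|) (C := Cb ^ 3 * Cb)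
        · intro t ht
          have htc := Ioo_subset_Icc_self ht
          exact (((slz f hc0 hxc htc).pow 3).abs).mul ((slz (pdy f) hcy hxc htc).abs)
        · intro z hz
          have hzc : z ∈ (Icc (-h) (0:ℝ)) := hz
          exact ((((sly f hc0 hxc hzc).pow 3).abs).mul
            ((sly (pdy f) hcy hxc hzc).abs)).mono Ioo_subset_Icc_self
        · intro z hz t ht
          have hzc : z ∈ (Icc (-h) (0:ℝ)) := hz; have htc := Ioo_subset_Icc_self ht
          rw [abs_mul, abs_abs, abs_abs, abs_pow]
          exact mul_le_mul (pow_le_pow_left₀ (abs_nonneg _) (bf hxc htc hzc) 3)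
            (by' hxc htc hzc) (abs_nonneg _) (by positivity)
      have int1 : IntegrableOn (fun z => f x y z ^ 4) (Ioo (-h) (0:ℝ)) := intOnIoo ((slz f hc0 hxc hyc).pow 4)
      have int1' : IntegrableOn (fun z => f x y' z ^ 4) (Ioo (-h) (0:ℝ)) := intOnIoo ((slz f hc0 hxc hy'c).pow 4)
      have mono : (∫ z in (Ioo (-h) (0:ℝ)), f x y z ^ 4) ≤ ∫ z in (Ioo (-h) (0:ℝ)),
          (f x y' z ^ 4 + 4 * ∫ t in (Ioo (0:ℝ) L), |f x t z ^ 3| * |pdy f x t z|) := by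
        apply setIntegral_mono_on int1 ?_ measurableSet_Ioo step1
        exact int1'.add (intW.const_mul 4)
      rw [integral_add int1' (intW.const_mul 4), integral_const_mul] at mono
      have hswap : (∫ z in (Ioo (-h) (0:ℝ)), ∫ t in (Ioo (0:ℝ) L), |f x t z ^ 3| * |pdy f x t z|)
          = ∫ t in (Ioo (0:ℝ) L), (∫ z in (Ioo (-h) (0:ℝ)), |f x t z ^ 3| * |pdy f x t z|) := by
        apply swap2 (κ := fun z t => |f x t z ^ 3| * |pdy f x t z|)
        exact (((slzt f hc0 hxc).pow 3).abs).mul ((slzt (pdy f) hcy hxc).abs)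
      rw [hswap] at mono
      exact mono
    have hFyint : IntegrableOn (fun y' => (∫ z in (Ioo (-h) (0:ℝ)), f x y' z ^ 4)) (Ioo (0:ℝ) L) := by
      apply intOnIoo
      exact hFc.comp (Continuous.continuousOn (continuous_const.prodMk continuous_id))
        (fun y' (hy' : y' ∈ (Icc (0:ℝ) L)) => ⟨hxc, hy'⟩)
    have hvol : (volume (Ioo (0:ℝ) L)).toReal = L := by
      rw [Real.volume_Ioo, ENNReal.toReal_ofReal (by linarith)]; ring
    have avg := setIntegral_ge_of_const_le (μ := volume) (s := (Ioo (0:ℝ) L))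
      (f := fun y' => (∫ z in (Ioo (-h) (0:ℝ)), f x y' z ^ 4)) (c := (∫ z in (Ioo (-h) (0:ℝ)), f x y z ^ 4) - 4 * ∫ t in (Ioo (0:ℝ) L), (∫ z in (Ioo (-h) (0:ℝ)), |f x t z ^ 3| * |pdy f x t z|))
      measurableSet_Ioo (by rw [Real.volume_Ioo]; exact ENNReal.ofReal_ne_top)
      (fun y' hy' => by linarith [step2 y' hy']) hFyint
    rw [Measure.real, hvol, smul_eq_mul, mul_comm L] at avg
    have hdiv : (∫ z in (Ioo (-h) (0:ℝ)), f x y z ^ 4) - 4 * (∫ t in (Ioo (0:ℝ) L), (∫ z in (Ioo (-h) (0:ℝ)), |f x t z ^ 3| * |pdy f x t z|))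
        ≤ (∫ y' in (Ioo (0:ℝ) L), (∫ z in (Ioo (-h) (0:ℝ)), f x y' z ^ 4)) / L := (le_div_iff₀ hL).2 avg
    have e : (1/L) * (∫ y' in (Ioo (0:ℝ) L), (∫ z in (Ioo (-h) (0:ℝ)), f x y' z ^ 4)) = (∫ y' in (Ioo (0:ℝ) L), (∫ z in (Ioo (-h) (0:ℝ)), f x y' z ^ 4)) / L := by ring
    linarith [hdiv, e]
  -- nonnegativity
  have hFnn : ∀ x y : ℝ, 0 ≤ (∫ z in (Ioo (-h) (0:ℝ)), f x y z ^ 4) := fun x y => integral_nonneg fun z => by positivity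
  have hDXnn : ∀ s y : ℝ, 0 ≤ (∫ z in (Ioo (-h) (0:ℝ)), |f s y z ^ 3| * |pdx f s y z|) := fun s y => integral_nonneg fun z => by positivity
  have hDYnn : ∀ x t : ℝ, 0 ≤ (∫ z in (Ioo (-h) (0:ℝ)), |f x t z ^ 3| * |pdy f x t z|) := fun x t => integral_nonneg fun z => by positivity
  have hS6nn : 0 ≤ (∫ x in (Ioo (0:ℝ) L), ∫ y in (Ioo (0:ℝ) L), ∫ z in (Ioo (-h) (0:ℝ)), f x y z ^ 6) :=
    integral_nonneg fun x => integral_nonneg fun y => integral_nonneg fun z => by positivity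
  have hS2nn : 0 ≤ (∫ x in (Ioo (0:ℝ) L), ∫ y in (Ioo (0:ℝ) L), ∫ z in (Ioo (-h) (0:ℝ)), f x y z ^ 2) :=
    integral_nonneg fun x => integral_nonneg fun y => integral_nonneg fun z => by positivity
  have hX2nn : 0 ≤ (∫ x in (Ioo (0:ℝ) L), ∫ y in (Ioo (0:ℝ) L), ∫ z in (Ioo (-h) (0:ℝ)), pdx f x y z ^ 2) :=
    integral_nonneg fun x => integral_nonneg fun y => integral_nonneg fun z => by positivity
  have hY2nn : 0 ≤ (∫ x in (Ioo (0:ℝ) L), ∫ y in (Ioo (0:ℝ) L), ∫ z in (Ioo (-h) (0:ℝ)), pdy f x y z ^ 2) :=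
    integral_nonneg fun x => integral_nonneg fun y => integral_nonneg fun z => by positivity
  have hZ2nn : 0 ≤ (∫ x in (Ioo (0:ℝ) L), ∫ y in (Ioo (0:ℝ) L), ∫ z in (Ioo (-h) (0:ℝ)), pdz f x y z ^ 2) :=
    integral_nonneg fun x => integral_nonneg fun y => integral_nonneg fun z => by positivity
  have hTnn : 0 ≤ (∫ x in (Ioo (0:ℝ) L), ∫ y in (Ioo (0:ℝ) L), (∫ z in (Ioo (-h) (0:ℝ)), f x y z ^ 4) ^ 2) := integral_nonneg fun x => integral_nonneg fun y => by positivity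
  have hAint : IntegrableOn (fun y => ((1/L) * (∫ x in (Ioo (0:ℝ) L), (∫ z in (Ioo (-h) (0:ℝ)), f x y z ^ 4)) + 4 * ∫ s in (Ioo (0:ℝ) L), (∫ z in (Ioo (-h) (0:ℝ)), |f s y z ^ 3| * |pdx f s y z|))) (Ioo (0:ℝ) L) :=
    intOnIoo ((continuousOn_const.mul hRAc).add (continuousOn_const.mul hDXIc))
  have hBint : IntegrableOn (fun x => ((1/L) * (∫ y in (Ioo (0:ℝ) L), (∫ z in (Ioo (-h) (0:ℝ)), f x y z ^ 4)) + 4 * ∫ t in (Ioo (0:ℝ) L), (∫ z in (Ioo (-h) (0:ℝ)), |f x t z ^ 3| * |pdy f x t z|))) (Ioo (0:ℝ) L) :=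
    intOnIoo ((continuousOn_const.mul hRBc).add (continuousOn_const.mul hDYIc))
  have hAnn : ∀ y : ℝ, 0 ≤ ((1/L) * (∫ x in (Ioo (0:ℝ) L), (∫ z in (Ioo (-h) (0:ℝ)), f x y z ^ 4)) + 4 * ∫ s in (Ioo (0:ℝ) L), (∫ z in (Ioo (-h) (0:ℝ)), |f s y z ^ 3| * |pdx f s y z|)) := fun y =>
    add_nonneg (mul_nonneg (by positivity) (integral_nonneg fun x => hFnn x y))
      (mul_nonneg (by norm_num) (integral_nonneg fun s => hDXnn s y))
  have hBnn : ∀ x : ℝ, 0 ≤ ((1/L) * (∫ y in (Ioo (0:ℝ) L), (∫ z in (Ioo (-h) (0:ℝ)), f x y z ^ 4)) + 4 * ∫ t in (Ioo (0:ℝ) L), (∫ z in (Ioo (-h) (0:ℝ)), |f x t z ^ 3| * |pdy f x t z|)) := fun x =>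
    add_nonneg (mul_nonneg (by positivity) (integral_nonneg fun y => hFnn x y))
      (mul_nonneg (by norm_num) (integral_nonneg fun t => hDYnn x t))
  have hintBnn : 0 ≤ ∫ x in (Ioo (0:ℝ) L), ((1/L) * (∫ y in (Ioo (0:ℝ) L), (∫ z in (Ioo (-h) (0:ℝ)), f x y z ^ 4)) + 4 * ∫ t in (Ioo (0:ℝ) L), (∫ z in (Ioo (-h) (0:ℝ)), |f x t z ^ 3| * |pdy f x t z|)) := integral_nonneg fun x => hBnn x
  -- T ≤ ∫A ∫B
  have TAB : (∫ x in (Ioo (0:ℝ) L), ∫ y in (Ioo (0:ℝ) L), (∫ z in (Ioo (-h) (0:ℝ)), f x y z ^ 4) ^ 2) ≤ (∫ y in (Ioo (0:ℝ) L), ((1/L) * (∫ x in (Ioo (0:ℝ) L), (∫ z in (Ioo (-h) (0:ℝ)), f x y z ^ 4)) + 4 * ∫ s in (Ioo (0:ℝ) L), (∫ z in (Ioo (-h) (0:ℝ)), |f s y z ^ 3| * |pdx f s y z|))) * (∫ x in (Ioo (0:ℝ) L), ((1/L) * (∫ y in (Ioo (0:ℝ) L), (∫ z in (Ioo (-h)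 (0:ℝ)), f x y z ^ 4)) + 4 * ∫ t in (Ioo (0:ℝ) L), (∫ z in (Ioo (-h) (0:ℝ)), |f x t z ^ 3| * |pdy f x t z|))) := by
    have inner : ∀ x ∈ (Ioo (0:ℝ) L), (∫ y in (Ioo (0:ℝ) L), (∫ z in (Ioo (-h) (0:ℝ)), f x y z ^ 4) ^ 2) ≤ (∫ y in (Ioo (0:ℝ) L), ((1/L) * (∫ x in (Ioo (0:ℝ) L), (∫ z in (Ioo (-h) (0:ℝ)), f x y z ^ 4)) + 4 * ∫ s in (Ioo (0:ℝ) L), (∫ z in (Ioo (-h) (0:ℝ)), |f s y z ^ 3| * |pdx f s y z|))) * ((1/L) * (∫ y in (Ioo (0:ℝ) L), (∫ z in (Ioo (-h) (0:ℝ)), f x y z ^ 4)) + 4 * ∫ t in (Ioo (0:ℝ) L), (∫ z in (Ioo (-h) (0:ℝ)), |f x t z ^ 3| * |pdy f x t z|)) := by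
      intro x hx
      have hF2AB : ∀ᵐ y ∂(volume.restrict (Ioo (0:ℝ) L)), (∫ z in (Ioo (-h) (0:ℝ)), f x y z ^ 4) ^ 2 ≤ (((1/L) * (∫ x in (Ioo (0:ℝ) L), (∫ z in (Ioo (-h) (0:ℝ)), f x y z ^ 4)) + 4 * ∫ s in (Ioo (0:ℝ) L), (∫ z in (Ioo (-h) (0:ℝ)), |f s y z ^ 3| * |pdx f s y z|))) * (((1/L) * (∫ y in (Ioo (0:ℝ) L), (∫ z in (Ioo (-h) (0:ℝ)), f x y z ^ 4)) + 4 * ∫ t in (Ioo (0:ℝ) L), (∫ z in (Ioo (-h) (0:ℝ)), |f x t z ^ 3| * |pdy f x t z|))) :=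
        (ae_restrict_iff' measurableSet_Ioo).2 (ae_of_all _ (fun y hy => by
          have h1 := keyA x hx y hy
          have h2 := keyB x hx y hy
          have h0 := hFnn x y
          calc (∫ z in (Ioo (-h) (0:ℝ)), f x y z ^ 4) ^ 2 = (∫ z in (Ioo (-h) (0:ℝ)), f x y z ^ 4) * (∫ z in (Ioo (-h) (0:ℝ)), f x y z ^ 4) := by ring
            _ ≤ (((1/L) * (∫ x in (Ioo (0:ℝ) L), (∫ z in (Ioo (-h) (0:ℝ)), f x y z ^ 4)) + 4 * ∫ s in (Ioo (0:ℝ) L), (∫ z in (Ioo (-h) (0:ℝ)), |f s y z ^ 3| * |pdx f s y z|))) * (((1/L) * (∫ y in (Ioo (0:ℝ) L), (∫ z in (Ioo (-h) (0:ℝ)), f x y z ^ 4)) + 4 * ∫ t in (Ioo (0:ℝ) L), (∫ z in (Ioo (-h) (0:ℝ)), |f x t z ^ 3| * |pdy f x t z|))) := mul_le_mul h1 h2 h0 (le_trans h0 h1)))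
      have step := integral_mono_of_nonneg (ae_of_all _ fun y => by positivity)
        (hAint.mul_const _) hF2AB
      rwa [integral_mul_const] at step
    have outer := integral_mono_of_nonneg
      (ae_of_all _ fun x => integral_nonneg fun y => by positivity)
      (hBint.const_mul (∫ y in (Ioo (0:ℝ) L), ((1/L) * (∫ x in (Ioo (0:ℝ) L), (∫ z in (Ioo (-h) (0:ℝ)), f x y z ^ 4)) + 4 * ∫ s in (Ioo (0:ℝ) L), (∫ z in (Ioo (-h) (0:ℝ)), |f s y z ^ 3| * |pdx f s y z|))))
      ((ae_restrict_iff' measurableSet_Ioo).2 (ae_of_all _ inner))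
    rwa [integral_const_mul] at outer
  -- Cauchy–Schwarz bounds
  have csS4 : (∫ x in (Ioo (0:ℝ) L), ∫ y in (Ioo (0:ℝ) L), (∫ z in (Ioo (-h) (0:ℝ)), f x y z ^ 4)) ≤ Real.sqrt (∫ x in (Ioo (0:ℝ) L), ∫ y in (Ioo (0:ℝ) L), ∫ z in (Ioo (-h) (0:ℝ)), f x y z ^ 6) * Real.sqrt (∫ x in (Ioo (0:ℝ) L), ∫ y in (Ioo (0:ℝ) L), ∫ z in (Ioo (-h) (0:ℝ)), f x y z ^ 2) := by
    have cs := csBox (L := L) (h := h) (u := fun q : ℝ × ℝ × ℝ => f q.1 q.2.1 q.2.2 ^ 3)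
      (v := fun q : ℝ × ℝ × ℝ => f q.1 q.2.1 q.2.2) ((slB f hc0).pow 3) (slB f hc0)
    dsimp only at cs
    have e1 : (∫ a in (Ioo (0:ℝ) L), ∫ b in (Ioo (0:ℝ) L), ∫ c in (Ioo (-h) (0:ℝ)), |f a b c ^ 3| * |f a b c|)
        = ∫ x in (Ioo (0:ℝ) L), ∫ y in (Ioo (0:ℝ) L), (∫ z in (Ioo (-h) (0:ℝ)), f x y z ^ 4) := by
      refine setIntegral_congr_fun measurableSet_Ioo fun a ha => ?_
      refine setIntegral_congr_fun measurableSet_Ioo fun b hb => ?_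
      refine setIntegral_congr_fun measurableSet_Ioo fun c hc => ?_
      rw [← abs_mul, show f a b c ^ 3 * f a b c = f a b c ^ 4 from by ring,
        abs_of_nonneg (by positivity)]
    have e2 : (∫ a in (Ioo (0:ℝ) L), ∫ b in (Ioo (0:ℝ) L), ∫ c in (Ioo (-h) (0:ℝ)), (f a b c ^ 3) ^ 2) = (∫ x in (Ioo (0:ℝ) L), ∫ y in (Ioo (0:ℝ) L), ∫ z in (Ioo (-h) (0:ℝ)), f x y z ^ 6) := by
      refine setIntegral_congr_fun measurableSet_Ioo fun a ha => ?_
      refine setIntegral_congr_fun measurableSet_Ioo fun b hb => ?_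
      refine setIntegral_congr_fun measurableSet_Ioo fun c hc => ?_
      ring
    rw [e1, e2] at cs
    exact cs
  have swapRA : (∫ y in (Ioo (0:ℝ) L), ∫ x in (Ioo (0:ℝ) L), (∫ z in (Ioo (-h) (0:ℝ)), f x y z ^ 4)) = ∫ x in (Ioo (0:ℝ) L), ∫ y in (Ioo (0:ℝ) L), (∫ z in (Ioo (-h) (0:ℝ)), f x y z ^ 4) := by
    apply swap2 (κ := fun y x => (∫ z in (Ioo (-h) (0:ℝ)), f x y z ^ 4))
    apply paramCont (F := fun (q : ℝ × ℝ) z => f q.2 q.1 z ^ 4) (C := Cb ^ 4)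
    · intro z hz
      exact (slyx f hc0 (Ioo_subset_Icc_self hz)).pow 4
    · intro q hq
      exact ((slz f hc0 hq.2 hq.1).mono Ioo_subset_Icc_self).pow 4
    · intro q hq z hz
      rw [abs_pow]
      exact pow_le_pow_left₀ (abs_nonneg _) (bf hq.2 hq.1 (Ioo_subset_Icc_self hz)) 4
  have csDX : (∫ y in (Ioo (0:ℝ) L), ∫ s in (Ioo (0:ℝ) L), (∫ z in (Ioo (-h) (0:ℝ)), |f s y z ^ 3| * |pdx f s y z|)) ≤ Real.sqrt (∫ x in (Ioo (0:ℝ) L), ∫ y in (Ioo (0:ℝ) L), ∫ z in (Ioo (-h) (0:ℝ)), f x y z ^ 6) * Real.sqrt (∫ x in (Ioo (0:ℝ) L), ∫ y in (Ioo (0:ℝ) L), ∫ z in (Ioo (-h) (0:ℝ)), pdx f x y z ^ 2) := by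
    have cs := csBox (L := L) (h := h) (u := fun q : ℝ × ℝ × ℝ => f q.2.1 q.1 q.2.2 ^ 3)
      (v := fun q : ℝ × ℝ × ℝ => pdx f q.2.1 q.1 q.2.2) ((slA f hc0).pow 3) (slA (pdx f) hcx)
    dsimp only at cs
    have r6 : (∫ a in (Ioo (0:ℝ) L), ∫ b in (Ioo (0:ℝ) L), ∫ c in (Ioo (-h) (0:ℝ)), (f b a c ^ 3) ^ 2) = (∫ x in (Ioo (0:ℝ) L), ∫ y in (Ioo (0:ℝ) L), ∫ z in (Ioo (-h) (0:ℝ)), f x y z ^ 6) := by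
      have e : (∫ a in (Ioo (0:ℝ) L), ∫ b in (Ioo (0:ℝ) L), ∫ c in (Ioo (-h) (0:ℝ)), (f b a c ^ 3) ^ 2)
          = ∫ a in (Ioo (0:ℝ) L), ∫ b in (Ioo (0:ℝ) L), ∫ c in (Ioo (-h) (0:ℝ)), f b a c ^ 6 := by
        refine setIntegral_congr_fun measurableSet_Ioo fun a ha => ?_
        refine setIntegral_congr_fun measurableSet_Ioo fun b hb => ?_
        refine setIntegral_congr_fun measurableSet_Ioo fun c hc => ?_
        ring
      rw [e]
      apply swap2 (κ := fun a b => ∫ c in (Ioo (-h) (0:ℝ)), f b a c ^ 6)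
      apply paramCont (F := fun (q : ℝ × ℝ) c => f q.2 q.1 c ^ 6) (C := Cb ^ 6)
      · intro c hc
        exact (slyx f hc0 (Ioo_subset_Icc_self hc)).pow 6
      · intro q hq
        exact ((slz f hc0 hq.2 hq.1).mono Ioo_subset_Icc_self).pow 6
      · intro q hq c hc
        rw [abs_pow]
        exact pow_le_pow_left₀ (abs_nonneg _) (bf hq.2 hq.1 (Ioo_subset_Icc_self hc)) 6
    have rX : (∫ a in (Ioo (0:ℝ) L), ∫ b in (Ioo (0:ℝ) L), ∫ c in (Ioo (-h) (0:ℝ)), pdx f b a c ^ 2) = (∫ x in (Ioo (0:ℝ) L), ∫ y in (Ioo (0:ℝ) L), ∫ z in (Ioo (-h) (0:ℝ)), pdx f x y z ^ 2) := by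
      apply swap2 (κ := fun a b => ∫ c in (Ioo (-h) (0:ℝ)), pdx f b a c ^ 2)
      apply paramCont (F := fun (q : ℝ × ℝ) c => pdx f q.2 q.1 c ^ 2) (C := Cb ^ 2)
      · intro c hc
        exact (slyx (pdx f) hcx (Ioo_subset_Icc_self hc)).pow 2
      · intro q hq
        exact ((slz (pdx f) hcx hq.2 hq.1).mono Ioo_subset_Icc_self).pow 2
      · intro q hq c hc
        rw [abs_pow]
        exact pow_le_pow_left₀ (abs_nonneg _) (bx hq.2 hq.1 (Ioo_subset_Icc_self hc)) 2
    have eL : (∫ a in (Ioo (0:ℝ) L), ∫ b in (Ioo (0:ℝ) L), ∫ c in (Ioo (-h) (0:ℝ)), |f b a c ^ 3| * |pdx f b a c|)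
        = ∫ y in (Ioo (0:ℝ) L), ∫ s in (Ioo (0:ℝ) L), (∫ z in (Ioo (-h) (0:ℝ)), |f s y z ^ 3| * |pdx f s y z|) := rfl
    rw [eL, r6, rX] at cs
    exact cs
  have csDY : (∫ x in (Ioo (0:ℝ) L), ∫ t in (Ioo (0:ℝ) L), (∫ z in (Ioo (-h) (0:ℝ)), |f x t z ^ 3| * |pdy f x t z|)) ≤ Real.sqrt (∫ x in (Ioo (0:ℝ) L), ∫ y in (Ioo (0:ℝ) L), ∫ z in (Ioo (-h) (0:ℝ)), f x y z ^ 6) * Real.sqrt (∫ x in (Ioo (0:ℝ) L), ∫ y in (Ioo (0:ℝ) L), ∫ z in (Ioo (-h) (0:ℝ)), pdy f x y z ^ 2) := by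
    have cs := csBox (L := L) (h := h) (u := fun q : ℝ × ℝ × ℝ => f q.1 q.2.1 q.2.2 ^ 3)
      (v := fun q : ℝ × ℝ × ℝ => pdy f q.1 q.2.1 q.2.2) ((slB f hc0).pow 3) (slB (pdy f) hcy)
    dsimp only at cs
    have e2 : (∫ a in (Ioo (0:ℝ) L), ∫ b in (Ioo (0:ℝ) L), ∫ c in (Ioo (-h) (0:ℝ)), (f a b c ^ 3) ^ 2) = (∫ x in (Ioo (0:ℝ) L), ∫ y in (Ioo (0:ℝ) L), ∫ z in (Ioo (-h) (0:ℝ)), f x y z ^ 6) := by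
      refine setIntegral_congr_fun measurableSet_Ioo fun a ha => ?_
      refine setIntegral_congr_fun measurableSet_Ioo fun b hb => ?_
      refine setIntegral_congr_fun measurableSet_Ioo fun c hc => ?_
      ring
    rw [e2] at cs
    exact cs
  -- integral of A and B
  have intA : (∫ y in (Ioo (0:ℝ) L), ((1/L) * (∫ x in (Ioo (0:ℝ) L), (∫ z in (Ioo (-h) (0:ℝ)), f x y z ^ 4)) + 4 * ∫ s in (Ioo (0:ℝ) L), (∫ z in (Ioo (-h) (0:ℝ)), |f s y z ^ 3| * |pdx f s y z|)))
      ≤ Real.sqrt (∫ x in (Ioo (0:ℝ) L), ∫ y in (Ioo (0:ℝ) L), ∫ z in (Ioo (-h) (0:ℝ)), f x y z ^ 6) * ((1/L) * Real.sqrt (∫ x in (Ioo (0:ℝ) L), ∫ y in (Ioo (0:ℝ) L), ∫ z in (Ioo (-h) (0:ℝ)), f x y z ^ 2) + 4 * Real.sqrt (∫ x in (Ioo (0:ℝ) L), ∫ y in (Ioo (0:ℝ) L), ∫ z in (Ioo (-h) (0:ℝ)), pdx f x y z ^ 2)) := by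
    have eA : (∫ y in (Ioo (0:ℝ) L), ((1/L) * (∫ x in (Ioo (0:ℝ) L), (∫ z in (Ioo (-h) (0:ℝ)), f x y z ^ 4)) + 4 * ∫ s in (Ioo (0:ℝ) L), (∫ z in (Ioo (-h) (0:ℝ)), |f s y z ^ 3| * |pdx f s y z|))) = (1/L) * (∫ y in (Ioo (0:ℝ) L), ∫ x in (Ioo (0:ℝ) L), (∫ z in (Ioo (-h) (0:ℝ)), f x y z ^ 4))
        + 4 * (∫ y in (Ioo (0:ℝ) L), ∫ s in (Ioo (0:ℝ) L), (∫ z in (Ioo (-h) (0:ℝ)), |f s y z ^ 3| * |pdx f s y z|)) := by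
      rw [integral_add ((intOnIoo hRAc).const_mul (1/L)) ((intOnIoo hDXIc).const_mul 4),
        integral_const_mul, integral_const_mul]
    rw [eA, swapRA]
    calc (1/L) * (∫ x in (Ioo (0:ℝ) L), ∫ y in (Ioo (0:ℝ) L), (∫ z in (Ioo (-h) (0:ℝ)), f x y z ^ 4))
        + 4 * (∫ y in (Ioo (0:ℝ) L), ∫ s in (Ioo (0:ℝ) L), (∫ z in (Ioo (-h) (0:ℝ)), |f s y z ^ 3| * |pdx f s y z|))
        ≤ (1/L) * (Real.sqrt (∫ x in (Ioo (0:ℝ) L), ∫ y in (Ioo (0:ℝ) L), ∫ z in (Ioo (-h) (0:ℝ)), f x y z ^ 6) * Real.sqrt (∫ x in (Ioo (0:ℝ) L), ∫ y in (Ioo (0:ℝ) L), ∫ z in (Ioo (-h) (0:ℝ)), f x y z ^ 2)) + 4 * (Real.sqrt (∫ x in (Ioo (0:ℝ) L), ∫ y in (Ioo (0:ℝ) L), ∫ z in (Ioo (-h) (0:ℝ)), f x y z ^ 6) * Real.sqrt (∫ x in (Ioo (0:ℝ) L), ∫ y in (Ioo (0:ℝ) L), ∫ z in (Ioo (-h)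 (0:ℝ)), pdx f x y z ^ 2)) :=
          add_le_add (mul_le_mul_of_nonneg_left csS4 (by positivity))
            (mul_le_mul_of_nonneg_left csDX (by norm_num))
      _ = Real.sqrt (∫ x in (Ioo (0:ℝ) L), ∫ y in (Ioo (0:ℝ) L), ∫ z in (Ioo (-h) (0:ℝ)), f x y z ^ 6) * ((1/L) * Real.sqrt (∫ x in (Ioo (0:ℝ) L), ∫ y in (Ioo (0:ℝ) L), ∫ z in (Ioo (-h) (0:ℝ)), f x y z ^ 2) + 4 * Real.sqrt (∫ x in (Ioo (0:ℝ) L), ∫ y in (Ioo (0:ℝ) L), ∫ z in (Ioo (-h) (0:ℝ)), pdx f x y z ^ 2)) := by ring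
  have intB : (∫ x in (Ioo (0:ℝ) L), ((1/L) * (∫ y in (Ioo (0:ℝ) L), (∫ z in (Ioo (-h) (0:ℝ)), f x y z ^ 4)) + 4 * ∫ t in (Ioo (0:ℝ) L), (∫ z in (Ioo (-h) (0:ℝ)), |f x t z ^ 3| * |pdy f x t z|)))
      ≤ Real.sqrt (∫ x in (Ioo (0:ℝ) L), ∫ y in (Ioo (0:ℝ) L), ∫ z in (Ioo (-h) (0:ℝ)), f x y z ^ 6) * ((1/L) * Real.sqrt (∫ x in (Ioo (0:ℝ) L), ∫ y in (Ioo (0:ℝ) L), ∫ z in (Ioo (-h) (0:ℝ)), f x y z ^ 2) + 4 * Real.sqrt (∫ x in (Ioo (0:ℝ) L), ∫ y in (Ioo (0:ℝ) L), ∫ z in (Ioo (-h) (0:ℝ)), pdy f x y z ^ 2)) := by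
    have eB : (∫ x in (Ioo (0:ℝ) L), ((1/L) * (∫ y in (Ioo (0:ℝ) L), (∫ z in (Ioo (-h) (0:ℝ)), f x y z ^ 4)) + 4 * ∫ t in (Ioo (0:ℝ) L), (∫ z in (Ioo (-h) (0:ℝ)), |f x t z ^ 3| * |pdy f x t z|))) = (1/L) * (∫ x in (Ioo (0:ℝ) L), ∫ y in (Ioo (0:ℝ) L), (∫ z in (Ioo (-h) (0:ℝ)), f x y z ^ 4))
        + 4 * (∫ x in (Ioo (0:ℝ) L), ∫ t in (Ioo (0:ℝ) L), (∫ z in (Ioo (-h) (0:ℝ)), |f x t z ^ 3| * |pdy f x t z|)) := by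
      rw [integral_add ((intOnIoo hRBc).const_mul (1/L)) ((intOnIoo hDYIc).const_mul 4),
        integral_const_mul, integral_const_mul]
    rw [eB]
    calc (1/L) * (∫ x in (Ioo (0:ℝ) L), ∫ y in (Ioo (0:ℝ) L), (∫ z in (Ioo (-h) (0:ℝ)), f x y z ^ 4))
        + 4 * (∫ x in (Ioo (0:ℝ) L), ∫ t in (Ioo (0:ℝ) L), (∫ z in (Ioo (-h) (0:ℝ)), |f x t z ^ 3| * |pdy f x t z|))
        ≤ (1/L) * (Real.sqrt (∫ x in (Ioo (0:ℝ) L), ∫ y in (Ioo (0:ℝ) L), ∫ z in (Ioo (-h) (0:ℝ)), f x y z ^ 6) * Real.sqrt (∫ x in (Ioo (0:ℝ) L), ∫ y in (Ioo (0:ℝ) L), ∫ z in (Ioo (-h) (0:ℝ)), f x y z ^ 2)) + 4 * (Real.sqrt (∫ x in (Ioo (0:ℝ) L), ∫ y in (Ioo (0:ℝ) L), ∫ z in (Ioo (-h) (0:ℝ)), f x y z ^ 6) * Real.sqrt (∫ x in (Ioo (0:ℝ) L), ∫ y in (Ioo (0:ℝ) L), ∫ z in (Ioo (-h) (0:ℝ)),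 pdy f x y z ^ 2)) :=
          add_le_add (mul_le_mul_of_nonneg_left csS4 (by positivity))
            (mul_le_mul_of_nonneg_left csDY (by norm_num))
      _ = Real.sqrt (∫ x in (Ioo (0:ℝ) L), ∫ y in (Ioo (0:ℝ) L), ∫ z in (Ioo (-h) (0:ℝ)), f x y z ^ 6) * ((1/L) * Real.sqrt (∫ x in (Ioo (0:ℝ) L), ∫ y in (Ioo (0:ℝ) L), ∫ z in (Ioo (-h) (0:ℝ)), f x y z ^ 2) + 4 * Real.sqrt (∫ x in (Ioo (0:ℝ) L), ∫ y in (Ioo (0:ℝ) L), ∫ z in (Ioo (-h) (0:ℝ)), pdy f x y z ^ 2)) := by ring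
  rw [anisoNorm_eq L h f hTnn, LpNorm_eq L h f hS6nn, H1norm_eq L h f]
  exact assemble L hL hTnn hS6nn hS2nn hX2nn hY2nn hZ2nn hintBnn TAB intA intB
end
end

section
/- Let u, v : M → ℝ² be smooth on a neighbourhood of the closure of M and L-periodic in the horizontal variables x and y, and assume ∫_{-h}^{0} div u(x,y,z) dz = 0 for all (x,y) ∈ M₀. Then for every real q ≥ 0 one has the weighted cancellation property ∫_M B₂(u,v)(x,y,z) · |v(x,y,z)|^q v(x,y,z) dM = 0, where |v(x,y,z)| denotes the pointwise Euclidean norm of v. -/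
open MeasureTheory Set

noncomputable section

/-- Square of the `H¹(M)` norm of a scalar function. -/
def H1sq (L h : ℝ) (f : ℝ → ℝ → ℝ → ℝ) : ℝ := sqL2 L h f + gradSq L h f

/-- Square of the `H²(M)` norm of a scalar function
(`L²` norms of all partial derivatives up to order two). -/
def H2sq (L h : ℝ) (f : ℝ → ℝ → ℝ → ℝ) : ℝ :=
  H1sq L h f + gradSq L h (pdx f) + gradSq L h (pdy f) + gradSq L h (pdz f)

/-- The `L²(M)` norm `|U|` of a pair `U = (v, T)` with `v = (v1, v2)`. -/
def L2triple (L h : ℝ) (v1 v2 T : ℝ → ℝ → ℝ → ℝ) : ℝ :=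
  Real.sqrt (sqL2 L h v1 + sqL2 L h v2 + sqL2 L h T)

/-- The `H¹(M)` norm `‖U‖` of a pair `U = (v, T)` with `v = (v1, v2)`. -/
def H1triple (L h : ℝ) (v1 v2 T : ℝ → ℝ → ℝ → ℝ) : ℝ :=
  Real.sqrt (H1sq L h v1 + H1sq L h v2 + H1sq L h T)

/-- The `H²(M)` norm `‖U‖_{H²}` of a pair `U = (v, T)` with `v = (v1, v2)`. -/
def H2triple (L h : ℝ) (v1 v2 T : ℝ → ℝ → ℝ → ℝ) : ℝ :=
  Real.sqrt (H2sq L h v1 + H2sq L h v2 + H2sq L h T)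

/-- The vertical velocity `w(v)(x,y,z) = -∫_{-h}^z div v(x,y,z') dz'`. -/
def wvel (h : ℝ) (v1 v2 : ℝ → ℝ → ℝ → ℝ) : ℝ → ℝ → ℝ → ℝ :=
  fun x y z => -(∫ t in (-h)..z, (pdx v1 x y t + pdy v2 x y t))

/-- A component of `B₂(u, v) = (u·∇)v + w(u) ∂_z v`, applied to a scalar component `g`. -/
def B2comp (h : ℝ) (u1 u2 g : ℝ → ℝ → ℝ → ℝ) : ℝ → ℝ → ℝ → ℝ :=
  fun x y z =>
    u1 x y z * pdx g x y z + u2 x y z * pdy g x y z + wvel h u1 u2 x y z * pdz g x y z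

/-- The trilinear form `b(U, U♯, U♭)` for pairs `U = (v1, v2, T)`, `U♯ = (s1, s2, sT)`,
`U♭ = (b1, b2, bT)`. -/
def bform (L h : ℝ) (v1 v2 T s1 s2 sT b1 b2 bT : ℝ → ℝ → ℝ → ℝ) : ℝ :=
  intM L h fun x y z =>
    B2comp h v1 v2 s1 x y z * b1 x y z + B2comp h v1 v2 s2 x y z * b2 x y z +
      B2comp h v1 v2 sT x y z * bT x y z

/-- `f` is `L`-periodic in the horizontal variables `x` and `y`. -/
def PeriodicXY (L : ℝ) (f : ℝ → ℝ → ℝ → ℝ) : Prop :=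
  ∀ x y z : ℝ, f (x + L) y z = f x y z ∧ f x (y + L) z = f x y z

/-- `∫_{-h}^{0} div v (x,y,z) dz = 0` for all `(x,y) ∈ M₀`. -/
def BarotropicDivFree (L h : ℝ) (v1 v2 : ℝ → ℝ → ℝ → ℝ) : Prop :=
  ∀ x ∈ Ioo (0:ℝ) L, ∀ y ∈ Ioo (0:ℝ) L,
    (∫ z in (-h)..(0:ℝ), (pdx v1 x y z + pdy v2 x y z)) = 0

section aux
variable {U : Set (ℝ × ℝ × ℝ)} {f : ℝ → ℝ → ℝ → ℝ}

lemma hone : (1 : WithTop ℕ∞) ≤ ((⊤ : ℕ∞) : WithTop ℕ∞) := by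
  exact_mod_cast le_top

lemma diffAt (hU : IsOpen U)
    (hf : ContDiffOn ℝ (⊤ : ℕ∞) (fun p : ℝ × ℝ × ℝ => f p.1 p.2.1 p.2.2) U)
    {p : ℝ × ℝ × ℝ} (hp : p ∈ U) :
    DifferentiableAt ℝ (fun p : ℝ × ℝ × ℝ => f p.1 p.2.1 p.2.2) p :=
  ((hf.contDiffAt (hU.mem_nhds hp)).differentiableAt (by simp))

lemma hasDerivAt_slice_x (hU : IsOpen U)
    (hf : ContDiffOn ℝ (⊤ : ℕ∞) (fun p : ℝ × ℝ × ℝ => f p.1 p.2.1 p.2.2) U)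
    {x y z : ℝ} (hp : (x, y, z) ∈ U) :
    HasDerivAt (fun t => f t y z) (pdx f x y z) x := by
  have hd := (diffAt hU hf hp).hasFDerivAt
  have hline : HasDerivAt (fun t : ℝ => ((t, y, z) : ℝ × ℝ × ℝ)) (1, 0, 0) x :=
    (hasDerivAt_id x).prodMk (hasDerivAt_const x (y, z))
  have h1 : HasDerivAt (fun t => f t y z)
      (fderiv ℝ (fun p : ℝ × ℝ × ℝ => f p.1 p.2.1 p.2.2) (x, y, z) (1, 0, 0)) x :=
    hd.comp_hasDerivAt_of_eq x hline rfl
  rw [pdx]; exact h1.differentiableAt.hasDerivAt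

lemma hasDerivAt_slice_y (hU : IsOpen U)
    (hf : ContDiffOn ℝ (⊤ : ℕ∞) (fun p : ℝ × ℝ × ℝ => f p.1 p.2.1 p.2.2) U)
    {x y z : ℝ} (hp : (x, y, z) ∈ U) :
    HasDerivAt (fun t => f x t z) (pdy f x y z) y := by
  have hd := (diffAt hU hf hp).hasFDerivAt
  have hline : HasDerivAt (fun t : ℝ => ((x, t, z) : ℝ × ℝ × ℝ)) (0, 1, 0) y :=
    (hasDerivAt_const y x).prodMk ((hasDerivAt_id y).prodMk (hasDerivAt_const y z))
  have h1 : HasDerivAt (fun t => f x t z)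
      (fderiv ℝ (fun p : ℝ × ℝ × ℝ => f p.1 p.2.1 p.2.2) (x, y, z) (0, 1, 0)) y :=
    hd.comp_hasDerivAt_of_eq y hline rfl
  rw [pdy]; exact h1.differentiableAt.hasDerivAt

lemma hasDerivAt_slice_z (hU : IsOpen U)
    (hf : ContDiffOn ℝ (⊤ : ℕ∞) (fun p : ℝ × ℝ × ℝ => f p.1 p.2.1 p.2.2) U)
    {x y z : ℝ} (hp : (x, y, z) ∈ U) :
    HasDerivAt (fun t => f x y t) (pdz f x y z) z := by
  have hd := (diffAt hU hf hp).hasFDerivAt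
  have hline : HasDerivAt (fun t : ℝ => ((x, y, t) : ℝ × ℝ × ℝ)) (0, 0, 1) z :=
    (hasDerivAt_const z x).prodMk ((hasDerivAt_const z y).prodMk (hasDerivAt_id z))
  have h1 : HasDerivAt (fun t => f x y t)
      (fderiv ℝ (fun p : ℝ × ℝ × ℝ => f p.1 p.2.1 p.2.2) (x, y, z) (0, 0, 1)) z :=
    hd.comp_hasDerivAt_of_eq z hline rfl
  rw [pdz]; exact h1.differentiableAt.hasDerivAt

lemma contOn_pdx (hU : IsOpen U)
    (hf : ContDiffOn ℝ (⊤ : ℕ∞) (fun p : ℝ × ℝ × ℝ => f p.1 p.2.1 p.2.2) U) :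
    ContinuousOn (fun p : ℝ × ℝ × ℝ => pdx f p.1 p.2.1 p.2.2) U := by
  have hc : ContinuousOn
      (fun p : ℝ × ℝ × ℝ =>
        fderiv ℝ (fun p : ℝ × ℝ × ℝ => f p.1 p.2.1 p.2.2) p ((1 : ℝ), (0 : ℝ), (0 : ℝ))) U :=
    (hf.continuousOn_fderiv_of_isOpen hU hone).clm_apply continuousOn_const
  refine hc.congr ?_
  intro p hp
  obtain ⟨x, y, z⟩ := p
  have h1 : HasDerivAt (fun t => f t y z)
      (fderiv ℝ (fun p : ℝ × ℝ × ℝ => f p.1 p.2.1 p.2.2) (x, y, z) (1, 0, 0)) x :=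
    (diffAt hU hf hp).hasFDerivAt.comp_hasDerivAt_of_eq x
      ((hasDerivAt_id x).prodMk (hasDerivAt_const x (y, z))) rfl
  simpa [pdx] using h1.deriv

end aux

section aux2
variable {U : Set (ℝ × ℝ × ℝ)} {f : ℝ → ℝ → ℝ → ℝ}

lemma contOn_pdy (hU : IsOpen U)
    (hf : ContDiffOn ℝ (⊤ : ℕ∞) (fun p : ℝ × ℝ × ℝ => f p.1 p.2.1 p.2.2) U) :
    ContinuousOn (fun p : ℝ × ℝ × ℝ => pdy f p.1 p.2.1 p.2.2) U := by
  have hc : ContinuousOn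
      (fun p : ℝ × ℝ × ℝ =>
        fderiv ℝ (fun p : ℝ × ℝ × ℝ => f p.1 p.2.1 p.2.2) p ((0 : ℝ), (1 : ℝ), (0 : ℝ))) U :=
    (hf.continuousOn_fderiv_of_isOpen hU hone).clm_apply continuousOn_const
  refine hc.congr ?_
  intro p hp
  obtain ⟨x, y, z⟩ := p
  have h1 : HasDerivAt (fun t => f x t z)
      (fderiv ℝ (fun p : ℝ × ℝ × ℝ => f p.1 p.2.1 p.2.2) (x, y, z) (0, 1, 0)) y :=
    (diffAt hU hf hp).hasFDerivAt.comp_hasDerivAt_of_eq y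
      ((hasDerivAt_const y x).prodMk ((hasDerivAt_id y).prodMk (hasDerivAt_const y z))) rfl
  simpa [pdy] using h1.deriv

lemma contOn_pdz (hU : IsOpen U)
    (hf : ContDiffOn ℝ (⊤ : ℕ∞) (fun p : ℝ × ℝ × ℝ => f p.1 p.2.1 p.2.2) U) :
    ContinuousOn (fun p : ℝ × ℝ × ℝ => pdz f p.1 p.2.1 p.2.2) U := by
  have hc : ContinuousOn
      (fun p : ℝ × ℝ × ℝ =>
        fderiv ℝ (fun p : ℝ × ℝ × ℝ => f p.1 p.2.1 p.2.2) p ((0 : ℝ), (0 : ℝ), (1 : ℝ))) U :=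
    (hf.continuousOn_fderiv_of_isOpen hU hone).clm_apply continuousOn_const
  refine hc.congr ?_
  intro p hp
  obtain ⟨x, y, z⟩ := p
  have h1 : HasDerivAt (fun t => f x y t)
      (fderiv ℝ (fun p : ℝ × ℝ × ℝ => f p.1 p.2.1 p.2.2) (x, y, z) (0, 0, 1)) z :=
    (diffAt hU hf hp).hasFDerivAt.comp_hasDerivAt_of_eq z
      ((hasDerivAt_const z x).prodMk ((hasDerivAt_const z y).prodMk (hasDerivAt_id z))) rfl
  simpa [pdz] using h1.deriv

end aux2

lemma sqrt_rpow' (s : ℝ) (hs : 0 ≤ s) (r : ℝ) : Real.sqrt s ^ r = s ^ (r / 2) := by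
  rw [Real.sqrt_eq_rpow, ← Real.rpow_mul hs]
  congr 1
  ring

lemma hasDerivAt_G (q : ℝ) (hq : 0 ≤ q) {a b : ℝ → ℝ} {a' b' t : ℝ}
    (ha : HasDerivAt a a' t) (hb : HasDerivAt b b' t) :
    HasDerivAt (fun s => Real.sqrt ((a s) ^ 2 + (b s) ^ 2) ^ (q + 2) / (q + 2))
      (Real.sqrt ((a t) ^ 2 + (b t) ^ 2) ^ q * (a t * a' + b t * b')) t := by
  have hq2 : (0 : ℝ) < q + 2 := by linarith
  have hs0n : (0 : ℝ) ≤ (a t) ^ 2 + (b t) ^ 2 := by positivity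
  have hsum : HasDerivAt (fun s => (a s) ^ 2 + (b s) ^ 2)
      (2 * a t * a' + 2 * b t * b') t := by
    have h1 := ha.pow 2
    have h2 := hb.pow 2
    have := h1.add h2
    refine this.congr_deriv ?_
    push_cast
    ring
  have hrp : HasDerivAt (fun u : ℝ => u ^ ((q + 2) / 2))
      (((q + 2) / 2) * ((a t) ^ 2 + (b t) ^ 2) ^ ((q + 2) / 2 - 1)) ((a t) ^ 2 + (b t) ^ 2) :=
    Real.hasDerivAt_rpow_const (Or.inr (by linarith))
  have hcomp := (hrp.comp t hsum).div_const (q + 2)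
  have heq : (fun s => Real.sqrt ((a s) ^ 2 + (b s) ^ 2) ^ (q + 2) / (q + 2)) =
      fun s => ((fun s => ((a s) ^ 2 + (b s) ^ 2) ^ ((q + 2) / 2)) s) / (q + 2) := by
    funext s
    rw [sqrt_rpow' _ (by positivity)]
  rw [heq]
  refine hcomp.congr_deriv ?_
  symm
  rw [sqrt_rpow' _ hs0n]
  have : (q + 2) / 2 - 1 = q / 2 := by ring
  rw [this]
  field_simp

lemma intIoo_eq {a b : ℝ} (hab : a ≤ b) (f : ℝ → ℝ) :
    ∫ t in Ioo a b, f t = ∫ t in a..b, f t := by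
  rw [intervalIntegral.integral_of_le hab, integral_Ioc_eq_integral_Ioo]

/-- `G = |v|^{q+2}/(q+2)`. -/
def Gf (q : ℝ) (v1 v2 : ℝ → ℝ → ℝ → ℝ) : ℝ → ℝ → ℝ → ℝ := fun x y z =>
  Real.sqrt ((v1 x y z) ^ 2 + (v2 x y z) ^ 2) ^ (q + 2) / (q + 2)

def A1f (q : ℝ) (u1 v1 v2 : ℝ → ℝ → ℝ → ℝ) : ℝ → ℝ → ℝ → ℝ := fun x y z =>
  pdx u1 x y z * Gf q v1 v2 x y z +
    u1 x y z * (Real.sqrt ((v1 x y z) ^ 2 + (v2 x y z) ^ 2) ^ q *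
      (v1 x y z * pdx v1 x y z + v2 x y z * pdx v2 x y z))

def A2f (q : ℝ) (u2 v1 v2 : ℝ → ℝ → ℝ → ℝ) : ℝ → ℝ → ℝ → ℝ := fun x y z =>
  pdy u2 x y z * Gf q v1 v2 x y z +
    u2 x y z * (Real.sqrt ((v1 x y z) ^ 2 + (v2 x y z) ^ 2) ^ q *
      (v1 x y z * pdy v1 x y z + v2 x y z * pdy v2 x y z))

def A3f (q h : ℝ) (u1 u2 v1 v2 : ℝ → ℝ → ℝ → ℝ) : ℝ → ℝ → ℝ → ℝ := fun x y z =>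
  -(pdx u1 x y z + pdy u2 x y z) * Gf q v1 v2 x y z +
    wvel h u1 u2 x y z * (Real.sqrt ((v1 x y z) ^ 2 + (v2 x y z) ^ 2) ^ q *
      (v1 x y z * pdz v1 x y z + v2 x y z * pdz v2 x y z))

section aux3
variable {U : Set (ℝ × ℝ × ℝ)} {u1 u2 v1 v2 : ℝ → ℝ → ℝ → ℝ} {q h : ℝ}

lemma hasDerivAt_A1 (hU : IsOpen U)
    (hdu1 : ContDiffOn ℝ (⊤ : ℕ∞) (fun p : ℝ × ℝ × ℝ => u1 p.1 p.2.1 p.2.2) U)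
    (hdv1 : ContDiffOn ℝ (⊤ : ℕ∞) (fun p : ℝ × ℝ × ℝ => v1 p.1 p.2.1 p.2.2) U)
    (hdv2 : ContDiffOn ℝ (⊤ : ℕ∞) (fun p : ℝ × ℝ × ℝ => v2 p.1 p.2.1 p.2.2) U)
    (hq : 0 ≤ q) {x y z : ℝ} (hp : (x, y, z) ∈ U) :
    HasDerivAt (fun t => u1 t y z * Gf q v1 v2 t y z) (A1f q u1 v1 v2 x y z) x :=
  (hasDerivAt_slice_x hU hdu1 hp).mul
    (hasDerivAt_G q hq (hasDerivAt_slice_x hU hdv1 hp) (hasDerivAt_slice_x hU hdv2 hp))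

lemma hasDerivAt_A2 (hU : IsOpen U)
    (hdu2 : ContDiffOn ℝ (⊤ : ℕ∞) (fun p : ℝ × ℝ × ℝ => u2 p.1 p.2.1 p.2.2) U)
    (hdv1 : ContDiffOn ℝ (⊤ : ℕ∞) (fun p : ℝ × ℝ × ℝ => v1 p.1 p.2.1 p.2.2) U)
    (hdv2 : ContDiffOn ℝ (⊤ : ℕ∞) (fun p : ℝ × ℝ × ℝ => v2 p.1 p.2.1 p.2.2) U)
    (hq : 0 ≤ q) {x y z : ℝ} (hp : (x, y, z) ∈ U) :
    HasDerivAt (fun t => u2 x t z * Gf q v1 v2 x t z) (A2f q u2 v1 v2 x y z) y :=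
  (hasDerivAt_slice_y hU hdu2 hp).mul
    (hasDerivAt_G q hq (hasDerivAt_slice_y hU hdv1 hp) (hasDerivAt_slice_y hU hdv2 hp))

lemma hasDerivAt_wvel (hU : IsOpen U)
    (hc : ContinuousOn
      (fun p : ℝ × ℝ × ℝ => pdx u1 p.1 p.2.1 p.2.2 + pdy u2 p.1 p.2.1 p.2.2) U)
    {x y z : ℝ} (hcol : ∀ t ∈ Icc (-h) 0, ((x, y, t) : ℝ × ℝ × ℝ) ∈ U)
    (hz : z ∈ Icc (-h) 0) :
    HasDerivAt (fun s => wvel h u1 u2 x y s) (-(pdx u1 x y z + pdy u2 x y z)) z := by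
  set V : Set ℝ := (fun t => ((x, y, t) : ℝ × ℝ × ℝ)) ⁻¹' U with hVdef
  have hVo : IsOpen V :=
    hU.preimage (continuous_const.prodMk (continuous_const.prodMk continuous_id))
  have hsub : Icc (-h) 0 ⊆ V := fun t ht => hcol t ht
  have hfc : ContinuousOn (fun t => pdx u1 x y t + pdy u2 x y t) V :=
    hc.comp ((continuous_const.prodMk (continuous_const.prodMk continuous_id)).continuousOn)
      (fun t ht => ht)
  have hca : ContinuousAt (fun t => pdx u1 x y t + pdy u2 x y t) z :=
    hfc.continuousAt (hVo.mem_nhds (hsub hz))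
  have hint : IntervalIntegrable (fun t => pdx u1 x y t + pdy u2 x y t) volume (-h) z := by
    apply ContinuousOn.intervalIntegrable
    apply hfc.mono
    rw [uIcc_of_le hz.1]
    exact (Icc_subset_Icc_right hz.2).trans hsub
  have hsm := hfc.stronglyMeasurableAtFilter (μ := volume) hVo z (hsub hz)
  have h0 := (intervalIntegral.integral_hasDerivAt_right hint hsm hca).neg
  exact h0

lemma hasDerivAt_A3 (hU : IsOpen U)
    (hdu1 : ContDiffOn ℝ (⊤ : ℕ∞) (fun p : ℝ × ℝ × ℝ => u1 p.1 p.2.1 p.2.2) U)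
    (hdu2 : ContDiffOn ℝ (⊤ : ℕ∞) (fun p : ℝ × ℝ × ℝ => u2 p.1 p.2.1 p.2.2) U)
    (hdv1 : ContDiffOn ℝ (⊤ : ℕ∞) (fun p : ℝ × ℝ × ℝ => v1 p.1 p.2.1 p.2.2) U)
    (hdv2 : ContDiffOn ℝ (⊤ : ℕ∞) (fun p : ℝ × ℝ × ℝ => v2 p.1 p.2.1 p.2.2) U)
    (hq : 0 ≤ q) {x y z : ℝ} (hcol : ∀ t ∈ Icc (-h) 0, ((x, y, t) : ℝ × ℝ × ℝ) ∈ U)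
    (hz : z ∈ Icc (-h) 0) :
    HasDerivAt (fun s => wvel h u1 u2 x y s * Gf q v1 v2 x y s)
      (A3f q h u1 u2 v1 v2 x y z) z := by
  have hp : ((x, y, z) : ℝ × ℝ × ℝ) ∈ U := hcol z hz
  have hc : ContinuousOn
      (fun p : ℝ × ℝ × ℝ => pdx u1 p.1 p.2.1 p.2.2 + pdy u2 p.1 p.2.1 p.2.2) U :=
    (contOn_pdx hU hdu1).add (contOn_pdy hU hdu2)
  exact (hasDerivAt_wvel hU hc hcol hz).mul
    (hasDerivAt_G q hq (hasDerivAt_slice_z hU hdv1 hp) (hasDerivAt_slice_z hU hdv2 hp))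

lemma contOn_G (hq : 0 ≤ q)
    (cv1 : ContinuousOn (fun p : ℝ × ℝ × ℝ => v1 p.1 p.2.1 p.2.2) U)
    (cv2 : ContinuousOn (fun p : ℝ × ℝ × ℝ => v2 p.1 p.2.1 p.2.2) U) :
    ContinuousOn (fun p : ℝ × ℝ × ℝ => Gf q v1 v2 p.1 p.2.1 p.2.2) U := by
  have hs : ContinuousOn
      (fun p : ℝ × ℝ × ℝ => Real.sqrt ((v1 p.1 p.2.1 p.2.2) ^ 2 + (v2 p.1 p.2.1 p.2.2) ^ 2)) U :=
    Real.continuous_sqrt.comp_continuousOn ((cv1.pow 2).add (cv2.pow 2))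
  exact (hs.rpow_const (fun p _ => Or.inr (by linarith))).div_const _

lemma contOn_Phiq (hq : 0 ≤ q)
    (cv1 : ContinuousOn (fun p : ℝ × ℝ × ℝ => v1 p.1 p.2.1 p.2.2) U)
    (cv2 : ContinuousOn (fun p : ℝ × ℝ × ℝ => v2 p.1 p.2.1 p.2.2) U) :
    ContinuousOn
      (fun p : ℝ × ℝ × ℝ =>
        Real.sqrt ((v1 p.1 p.2.1 p.2.2) ^ 2 + (v2 p.1 p.2.1 p.2.2) ^ 2) ^ q) U := by
  have hs : ContinuousOn
      (fun p : ℝ × ℝ × ℝ => Real.sqrt ((v1 p.1 p.2.1 p.2.2) ^ 2 + (v2 p.1 p.2.1 p.2.2) ^ 2)) U :=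
    Real.continuous_sqrt.comp_continuousOn ((cv1.pow 2).add (cv2.pow 2))
  exact hs.rpow_const (fun p _ => Or.inr hq)

lemma contOn_A1 (hU : IsOpen U) (hq : 0 ≤ q)
    (hdu1 : ContDiffOn ℝ (⊤ : ℕ∞) (fun p : ℝ × ℝ × ℝ => u1 p.1 p.2.1 p.2.2) U)
    (hdv1 : ContDiffOn ℝ (⊤ : ℕ∞) (fun p : ℝ × ℝ × ℝ => v1 p.1 p.2.1 p.2.2) U)
    (hdv2 : ContDiffOn ℝ (⊤ : ℕ∞) (fun p : ℝ × ℝ × ℝ => v2 p.1 p.2.1 p.2.2) U) :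
    ContinuousOn (fun p : ℝ × ℝ × ℝ => A1f q u1 v1 v2 p.1 p.2.1 p.2.2) U := by
  exact ((contOn_pdx hU hdu1).mul (contOn_G hq hdv1.continuousOn hdv2.continuousOn)).add
    (hdu1.continuousOn.mul ((contOn_Phiq hq hdv1.continuousOn hdv2.continuousOn).mul
      ((hdv1.continuousOn.mul (contOn_pdx hU hdv1)).add
        (hdv2.continuousOn.mul (contOn_pdx hU hdv2)))))

lemma contOn_A2 (hU : IsOpen U) (hq : 0 ≤ q)
    (hdu2 : ContDiffOn ℝ (⊤ : ℕ∞) (fun p : ℝ × ℝ × ℝ => u2 p.1 p.2.1 p.2.2) U)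
    (hdv1 : ContDiffOn ℝ (⊤ : ℕ∞) (fun p : ℝ × ℝ × ℝ => v1 p.1 p.2.1 p.2.2) U)
    (hdv2 : ContDiffOn ℝ (⊤ : ℕ∞) (fun p : ℝ × ℝ × ℝ => v2 p.1 p.2.1 p.2.2) U) :
    ContinuousOn (fun p : ℝ × ℝ × ℝ => A2f q u2 v1 v2 p.1 p.2.1 p.2.2) U := by
  exact ((contOn_pdy hU hdu2).mul (contOn_G hq hdv1.continuousOn hdv2.continuousOn)).add
    (hdu2.continuousOn.mul ((contOn_Phiq hq hdv1.continuousOn hdv2.continuousOn).mul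
      ((hdv1.continuousOn.mul (contOn_pdy hU hdv1)).add
        (hdv2.continuousOn.mul (contOn_pdy hU hdv2)))))

lemma contOn_A3_col (hU : IsOpen U) (hq : 0 ≤ q)
    (hdu1 : ContDiffOn ℝ (⊤ : ℕ∞) (fun p : ℝ × ℝ × ℝ => u1 p.1 p.2.1 p.2.2) U)
    (hdu2 : ContDiffOn ℝ (⊤ : ℕ∞) (fun p : ℝ × ℝ × ℝ => u2 p.1 p.2.1 p.2.2) U)
    (hdv1 : ContDiffOn ℝ (⊤ : ℕ∞) (fun p : ℝ × ℝ × ℝ => v1 p.1 p.2.1 p.2.2) U)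
    (hdv2 : ContDiffOn ℝ (⊤ : ℕ∞) (fun p : ℝ × ℝ × ℝ => v2 p.1 p.2.1 p.2.2) U)
    {x y : ℝ} (hcol : ∀ t ∈ Icc (-h) 0, ((x, y, t) : ℝ × ℝ × ℝ) ∈ U) :
    ContinuousOn (fun z => A3f q h u1 u2 v1 v2 x y z) (Icc (-h) 0) := by
  have hmap : ContinuousOn (fun t => ((x, y, t) : ℝ × ℝ × ℝ)) (Icc (-h) 0) :=
    (continuous_const.prodMk (continuous_const.prodMk continuous_id)).continuousOn
  have hc : ContinuousOn
      (fun p : ℝ × ℝ × ℝ => pdx u1 p.1 p.2.1 p.2.2 + pdy u2 p.1 p.2.1 p.2.2) U :=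
    (contOn_pdx hU hdu1).add (contOn_pdy hU hdu2)
  have hw : ContinuousOn (fun z => wvel h u1 u2 x y z) (Icc (-h) 0) := by
    intro t ht
    exact (hasDerivAt_wvel hU hc hcol ht).continuousAt.continuousWithinAt
  have hsl : ∀ F : (ℝ × ℝ × ℝ) → ℝ, ContinuousOn F U →
      ContinuousOn (fun z => F (x, y, z)) (Icc (-h) 0) := by
    intro F hF
    exact hF.comp hmap (fun t ht => hcol t ht)
  exact ((hsl _ hc).neg.mul (hsl _ (contOn_G hq hdv1.continuousOn hdv2.continuousOn))).add
    (hw.mul ((hsl _ (contOn_Phiq hq hdv1.continuousOn hdv2.continuousOn)).mul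
      (((hsl _ hdv1.continuousOn).mul (hsl _ (contOn_pdz hU hdv1))).add
        ((hsl _ hdv2.continuousOn).mul (hsl _ (contOn_pdz hU hdv2))))))

end aux3

section aux4
variable {U : Set (ℝ × ℝ × ℝ)} {u1 u2 v1 v2 : ℝ → ℝ → ℝ → ℝ} {q h L : ℝ}


lemma zero_x (hU : IsOpen U) (hL : 0 < L) (hq : 0 ≤ q)
    (hbox : Icc 0 L ×ˢ Icc 0 L ×ˢ Icc (-h) 0 ⊆ U)
    (hdu1 : ContDiffOn ℝ (⊤ : ℕ∞) (fun p : ℝ × ℝ × ℝ => u1 p.1 p.2.1 p.2.2) U)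
    (hdv1 : ContDiffOn ℝ (⊤ : ℕ∞) (fun p : ℝ × ℝ × ℝ => v1 p.1 p.2.1 p.2.2) U)
    (hdv2 : ContDiffOn ℝ (⊤ : ℕ∞) (fun p : ℝ × ℝ × ℝ => v2 p.1 p.2.1 p.2.2) U)
    (pu1 : PeriodicXY L u1) (pv1 : PeriodicXY L v1) (pv2 : PeriodicXY L v2)
    {y z : ℝ} (hy : y ∈ Icc 0 L) (hz : z ∈ Icc (-h) 0) :
    ∫ x in Ioo 0 L, A1f q u1 v1 v2 x y z = 0 := by
  rw [intIoo_eq hL.le]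
  have hd : ∀ t ∈ uIcc (0 : ℝ) L,
      HasDerivAt (fun s => u1 s y z * Gf q v1 v2 s y z) (A1f q u1 v1 v2 t y z) t := by
    intro t ht
    rw [uIcc_of_le hL.le] at ht
    exact hasDerivAt_A1 hU hdu1 hdv1 hdv2 hq (hbox ⟨ht, hy, hz⟩)
  have hi : IntervalIntegrable (fun x => A1f q u1 v1 v2 x y z) volume 0 L := by
    apply ContinuousOn.intervalIntegrable
    rw [uIcc_of_le hL.le]
    exact (contOn_A1 hU hq hdu1 hdv1 hdv2).comp
      ((continuous_id.prodMk (continuous_const.prodMk continuous_const)).continuousOn)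
      (fun t ht => hbox ⟨ht, hy, hz⟩)
  rw [intervalIntegral.integral_eq_sub_of_hasDerivAt hd hi]
  have p1 : u1 L y z = u1 0 y z := by have := (pu1 0 y z).1; rwa [zero_add] at this
  have p2 : v1 L y z = v1 0 y z := by have := (pv1 0 y z).1; rwa [zero_add] at this
  have p3 : v2 L y z = v2 0 y z := by have := (pv2 0 y z).1; rwa [zero_add] at this
  have pG : Gf q v1 v2 L y z = Gf q v1 v2 0 y z := by unfold Gf; rw [p2, p3]
  rw [p1, pG, sub_self]

lemma zero_y (hU : IsOpen U) (hL : 0 < L) (hq : 0 ≤ q)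
    (hbox : Icc 0 L ×ˢ Icc 0 L ×ˢ Icc (-h) 0 ⊆ U)
    (hdu2 : ContDiffOn ℝ (⊤ : ℕ∞) (fun p : ℝ × ℝ × ℝ => u2 p.1 p.2.1 p.2.2) U)
    (hdv1 : ContDiffOn ℝ (⊤ : ℕ∞) (fun p : ℝ × ℝ × ℝ => v1 p.1 p.2.1 p.2.2) U)
    (hdv2 : ContDiffOn ℝ (⊤ : ℕ∞) (fun p : ℝ × ℝ × ℝ => v2 p.1 p.2.1 p.2.2) U)
    (pu2 : PeriodicXY L u2) (pv1 : PeriodicXY L v1) (pv2 : PeriodicXY L v2)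
    {x z : ℝ} (hx : x ∈ Icc 0 L) (hz : z ∈ Icc (-h) 0) :
    ∫ y in Ioo 0 L, A2f q u2 v1 v2 x y z = 0 := by
  rw [intIoo_eq hL.le]
  have hd : ∀ t ∈ uIcc (0 : ℝ) L,
      HasDerivAt (fun s => u2 x s z * Gf q v1 v2 x s z) (A2f q u2 v1 v2 x t z) t := by
    intro t ht
    rw [uIcc_of_le hL.le] at ht
    exact hasDerivAt_A2 hU hdu2 hdv1 hdv2 hq (hbox ⟨hx, ht, hz⟩)
  have hi : IntervalIntegrable (fun y => A2f q u2 v1 v2 x y z) volume 0 L := by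
    apply ContinuousOn.intervalIntegrable
    rw [uIcc_of_le hL.le]
    exact (contOn_A2 hU hq hdu2 hdv1 hdv2).comp
      ((continuous_const.prodMk (continuous_id.prodMk continuous_const)).continuousOn)
      (fun t ht => hbox ⟨hx, ht, hz⟩)
  rw [intervalIntegral.integral_eq_sub_of_hasDerivAt hd hi]
  have p1 : u2 x L z = u2 x 0 z := by have := (pu2 x 0 z).2; rwa [zero_add] at this
  have p2 : v1 x L z = v1 x 0 z := by have := (pv1 x 0 z).2; rwa [zero_add] at this
  have p3 : v2 x L z = v2 x 0 z := by have := (pv2 x 0 z).2; rwa [zero_add] at this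
  have pG : Gf q v1 v2 x L z = Gf q v1 v2 x 0 z := by unfold Gf; rw [p2, p3]
  rw [p1, pG, sub_self]

lemma zero_z (hU : IsOpen U) (hh : 0 < h) (hq : 0 ≤ q)
    (hbox : Icc 0 L ×ˢ Icc 0 L ×ˢ Icc (-h) 0 ⊆ U)
    (hdu1 : ContDiffOn ℝ (⊤ : ℕ∞) (fun p : ℝ × ℝ × ℝ => u1 p.1 p.2.1 p.2.2) U)
    (hdu2 : ContDiffOn ℝ (⊤ : ℕ∞) (fun p : ℝ × ℝ × ℝ => u2 p.1 p.2.1 p.2.2) U)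
    (hdv1 : ContDiffOn ℝ (⊤ : ℕ∞) (fun p : ℝ × ℝ × ℝ => v1 p.1 p.2.1 p.2.2) U)
    (hdv2 : ContDiffOn ℝ (⊤ : ℕ∞) (fun p : ℝ × ℝ × ℝ => v2 p.1 p.2.1 p.2.2) U)
    {x y : ℝ} (hx : x ∈ Icc 0 L) (hy : y ∈ Icc 0 L)
    (hdiv0 : (∫ z in (-h)..(0 : ℝ), (pdx u1 x y z + pdy u2 x y z)) = 0) :
    ∫ z in Ioo (-h) 0, A3f q h u1 u2 v1 v2 x y z = 0 := by
  have hh0 : -h ≤ (0 : ℝ) := by linarith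
  have hcol : ∀ t ∈ Icc (-h) 0, ((x, y, t) : ℝ × ℝ × ℝ) ∈ U := fun t ht => hbox ⟨hx, hy, ht⟩
  rw [intIoo_eq hh0]
  have hd : ∀ t ∈ uIcc (-h) (0 : ℝ),
      HasDerivAt (fun s => wvel h u1 u2 x y s * Gf q v1 v2 x y s)
        (A3f q h u1 u2 v1 v2 x y t) t := by
    intro t ht
    rw [uIcc_of_le hh0] at ht
    exact hasDerivAt_A3 hU hdu1 hdu2 hdv1 hdv2 hq hcol ht
  have hi : IntervalIntegrable (fun z => A3f q h u1 u2 v1 v2 x y z) volume (-h) 0 := by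
    apply ContinuousOn.intervalIntegrable
    rw [uIcc_of_le hh0]
    exact contOn_A3_col hU hq hdu1 hdu2 hdv1 hdv2 hcol
  rw [intervalIntegral.integral_eq_sub_of_hasDerivAt hd hi]
  have w0 : wvel h u1 u2 x y 0 = 0 := by rw [wvel, hdiv0, neg_zero]
  have wh : wvel h u1 u2 x y (-h) = 0 := by rw [wvel, intervalIntegral.integral_same, neg_zero]
  rw [w0, wh, zero_mul, zero_mul, sub_self]

lemma integrableOn_sq {a b c d : ℝ} {F : ℝ × ℝ → ℝ}
    (hF : ContinuousOn F (Icc a b ×ˢ Icc c d)) :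
    Integrable F ((volume.restrict (Ioo a b)).prod (volume.restrict (Ioo c d))) := by
  rw [Measure.prod_restrict, ← Measure.volume_eq_prod]
  exact (hF.integrableOn_compact (isCompact_Icc.prod isCompact_Icc)).mono_set
    (prod_mono Ioo_subset_Icc_self Ioo_subset_Icc_self)

lemma integrableOn_box {L h : ℝ} {F : ℝ × ℝ × ℝ → ℝ}
    (hF : ContinuousOn F (Icc 0 L ×ˢ Icc 0 L ×ˢ Icc (-h) 0)) :
    Integrable F ((volume.restrict (Ioo 0 L)).prod
      ((volume.restrict (Ioo 0 L)).prod (volume.restrict (Ioo (-h) 0)))) := by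
  rw [Measure.prod_restrict, ← Measure.volume_eq_prod, Measure.prod_restrict,
    ← Measure.volume_eq_prod]
  exact (hF.integrableOn_compact (isCompact_Icc.prod (isCompact_Icc.prod isCompact_Icc))).mono_set
    (prod_mono Ioo_subset_Icc_self (prod_mono Ioo_subset_Icc_self Ioo_subset_Icc_self))

end aux4


/-- weighted cancellation property for `B₂`:
for smooth, `L`-periodic `u, v : M → ℝ²` with vanishing vertically averaged divergence of `u`,
and every real `q ≥ 0`, `∫_M B₂(u,v) · |v|^q v dM = 0`. -/
theorem stmt12 (L h : ℝ) (hL : 0 < L) (hh : 0 < h)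
    (u1 u2 v1 v2 : ℝ → ℝ → ℝ → ℝ)
    (hu1 : SmoothNearM L h u1) (hu2 : SmoothNearM L h u2)
    (hv1 : SmoothNearM L h v1) (hv2 : SmoothNearM L h v2)
    (pu1 : PeriodicXY L u1) (pu2 : PeriodicXY L u2)
    (pv1 : PeriodicXY L v1) (pv2 : PeriodicXY L v2)
    (hdiv : BarotropicDivFree L h u1 u2) :
    ∀ q : ℝ, 0 ≤ q →
      intM L h (fun x y z =>
        Real.sqrt ((v1 x y z) ^ 2 + (v2 x y z) ^ 2) ^ q *
          (B2comp h u1 u2 v1 x y z * v1 x y z + B2comp h u1 u2 v2 x y z * v2 x y z)) = 0 := by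
  intro q hq
  obtain ⟨U1, hU1o, hU1s, hd1⟩ := hu1
  obtain ⟨U2, hU2o, hU2s, hd2⟩ := hu2
  obtain ⟨U3, hU3o, hU3s, hd3⟩ := hv1
  obtain ⟨U4, hU4o, hU4s, hd4⟩ := hv2
  set U : Set (ℝ × ℝ × ℝ) := (U1 ∩ U2) ∩ (U3 ∩ U4) with hUdef
  have hUo : IsOpen U := (hU1o.inter hU2o).inter (hU3o.inter hU4o)
  have hdu1 : ContDiffOn ℝ (⊤ : ℕ∞) (fun p : ℝ × ℝ × ℝ => u1 p.1 p.2.1 p.2.2) U :=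
    hd1.mono fun p hp => hp.1.1
  have hdu2 : ContDiffOn ℝ (⊤ : ℕ∞) (fun p : ℝ × ℝ × ℝ => u2 p.1 p.2.1 p.2.2) U :=
    hd2.mono fun p hp => hp.1.2
  have hdv1 : ContDiffOn ℝ (⊤ : ℕ∞) (fun p : ℝ × ℝ × ℝ => v1 p.1 p.2.1 p.2.2) U :=
    hd3.mono fun p hp => hp.2.1
  have hdv2 : ContDiffOn ℝ (⊤ : ℕ∞) (fun p : ℝ × ℝ × ℝ => v2 p.1 p.2.1 p.2.2) U :=
    hd4.mono fun p hp => hp.2.2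
  have hbox : Icc 0 L ×ˢ Icc 0 L ×ˢ Icc (-h) 0 ⊆ U := by
    have hcl : closure (Mset L h) = Icc 0 L ×ˢ Icc 0 L ×ˢ Icc (-h) 0 := by
      rw [Mset, closure_prod_eq, closure_prod_eq, closure_Ioo hL.ne,
        closure_Ioo (show (-h) ≠ 0 by linarith)]
    rw [← hcl]
    exact fun p hp => ⟨⟨hU1s hp, hU2s hp⟩, hU3s hp, hU4s hp⟩
  have hpt : ∀ x y z : ℝ,
      Real.sqrt ((v1 x y z) ^ 2 + (v2 x y z) ^ 2) ^ q *
        (B2comp h u1 u2 v1 x y z * v1 x y z + B2comp h u1 u2 v2 x y z * v2 x y z)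
      = A1f q u1 v1 v2 x y z + A2f q u2 v1 v2 x y z + A3f q h u1 u2 v1 v2 x y z := by
    intro x y z
    simp only [B2comp, A1f, A2f, A3f, Gf]
    ring
  have cA1 : ContinuousOn (fun p : ℝ × ℝ × ℝ => A1f q u1 v1 v2 p.1 p.2.1 p.2.2)
      (Icc 0 L ×ˢ Icc 0 L ×ˢ Icc (-h) 0) := (contOn_A1 hUo hq hdu1 hdv1 hdv2).mono hbox
  have cA2 : ContinuousOn (fun p : ℝ × ℝ × ℝ => A2f q u2 v1 v2 p.1 p.2.1 p.2.2)
      (Icc 0 L ×ˢ Icc 0 L ×ˢ Icc (-h) 0) := (contOn_A2 hUo hq hdu2 hdv1 hdv2).mono hbox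
  have ip1 : ∀ x ∈ Icc (0:ℝ) L, Integrable (fun p : ℝ × ℝ => A1f q u1 v1 v2 x p.1 p.2)
      ((volume.restrict (Ioo (0:ℝ) L)).prod (volume.restrict (Ioo (-h) (0:ℝ)))) := by
    intro x hxI
    apply integrableOn_sq
    exact cA1.comp ((continuous_const.prodMk continuous_id).continuousOn)
      (fun p hp => ⟨hxI, hp.1, hp.2⟩)
  have ip2 : ∀ x ∈ Icc (0:ℝ) L, Integrable (fun p : ℝ × ℝ => A2f q u2 v1 v2 x p.1 p.2)
      ((volume.restrict (Ioo (0:ℝ) L)).prod (volume.restrict (Ioo (-h) (0:ℝ)))) := by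
    intro x hxI
    apply integrableOn_sq
    exact cA2.comp ((continuous_const.prodMk continuous_id).continuousOn)
      (fun p hp => ⟨hxI, hp.1, hp.2⟩)
  simp only [intM, hpt]
  have stepA : ∀ x ∈ Ioo (0:ℝ) L,
      (∫ y in Ioo (0:ℝ) L, ∫ z in Ioo (-h) (0:ℝ),
        (A1f q u1 v1 v2 x y z + A2f q u2 v1 v2 x y z + A3f q h u1 u2 v1 v2 x y z))
      = ∫ y in Ioo (0:ℝ) L, ∫ z in Ioo (-h) (0:ℝ), A1f q u1 v1 v2 x y z := by
    intro x hx
    have hxI : x ∈ Icc (0:ℝ) L := Ioo_subset_Icc_self hx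
    have key : ∀ y ∈ Ioo (0:ℝ) L,
        (∫ z in Ioo (-h) (0:ℝ),
          (A1f q u1 v1 v2 x y z + A2f q u2 v1 v2 x y z + A3f q h u1 u2 v1 v2 x y z))
        = (∫ z in Ioo (-h) (0:ℝ), A1f q u1 v1 v2 x y z)
          + (∫ z in Ioo (-h) (0:ℝ), A2f q u2 v1 v2 x y z) := by
      intro y hy
      have hyI : y ∈ Icc (0:ℝ) L := Ioo_subset_Icc_self hy
      have hcolxy : ∀ t ∈ Icc (-h) 0, ((x, y, t) : ℝ × ℝ × ℝ) ∈ U :=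
        fun t ht => hbox ⟨hxI, hyI, ht⟩
      have hmapz : ContinuousOn (fun t : ℝ => ((x, y, t) : ℝ × ℝ × ℝ)) (Icc (-h) 0) :=
        (continuous_const.prodMk (continuous_const.prodMk continuous_id)).continuousOn
      have i1 : IntegrableOn (fun z => A1f q u1 v1 v2 x y z) (Ioo (-h) 0) volume :=
        (((cA1.comp hmapz (fun t ht => ⟨hxI, hyI, ht⟩)).integrableOn_compact
          isCompact_Icc).mono_set Ioo_subset_Icc_self)
      have i2 : IntegrableOn (fun z => A2f q u2 v1 v2 x y z) (Ioo (-h) 0) volume :=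
        (((cA2.comp hmapz (fun t ht => ⟨hxI, hyI, ht⟩)).integrableOn_compact
          isCompact_Icc).mono_set Ioo_subset_Icc_self)
      have i3 : IntegrableOn (fun z => A3f q h u1 u2 v1 v2 x y z) (Ioo (-h) 0) volume :=
        (((contOn_A3_col hUo hq hdu1 hdu2 hdv1 hdv2 hcolxy).integrableOn_compact
          isCompact_Icc).mono_set Ioo_subset_Icc_self)
      have i12 : IntegrableOn
          (fun z => A1f q u1 v1 v2 x y z + A2f q u2 v1 v2 x y z) (Ioo (-h) 0) volume :=
        i1.add i2
      rw [integral_add i12 i3, integral_add i1 i2,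
        zero_z hUo hh hq hbox hdu1 hdu2 hdv1 hdv2 hxI hyI (hdiv x hx y hy), add_zero]
    rw [setIntegral_congr_fun measurableSet_Ioo (fun y hy => key y hy)]
    rw [integral_add ((ip1 x hxI).integral_prod_left) ((ip2 x hxI).integral_prod_left)]
    have hzero2 : (∫ y in Ioo (0:ℝ) L, ∫ z in Ioo (-h) (0:ℝ), A2f q u2 v1 v2 x y z) = 0 := by
      rw [integral_integral_swap (f := fun y z => A2f q u2 v1 v2 x y z) (ip2 x hxI)]
      have hz0 : ∀ z ∈ Ioo (-h) (0:ℝ),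
          (∫ y in Ioo (0:ℝ) L, A2f q u2 v1 v2 x y z) = 0 := fun z hz =>
        zero_y hUo hL hq hbox hdu2 hdv1 hdv2 pu2 pv1 pv2 hxI (Ioo_subset_Icc_self hz)
      rw [setIntegral_congr_fun measurableSet_Ioo (fun z hz => hz0 z hz), integral_zero]
    rw [hzero2, add_zero]
  rw [setIntegral_congr_fun measurableSet_Ioo (fun x hx => stepA x hx)]
  have stepB : ∀ x ∈ Ioo (0:ℝ) L,
      (∫ y in Ioo (0:ℝ) L, ∫ z in Ioo (-h) (0:ℝ), A1f q u1 v1 v2 x y z)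
      = ∫ p, A1f q u1 v1 v2 x p.1 p.2
          ∂((volume.restrict (Ioo (0:ℝ) L)).prod (volume.restrict (Ioo (-h) (0:ℝ)))) := by
    intro x hx
    exact (integral_prod _ (ip1 x (Ioo_subset_Icc_self hx))).symm
  rw [setIntegral_congr_fun measurableSet_Ioo (fun x hx => stepB x hx)]
  have itrip : Integrable
      (Function.uncurry fun x (p : ℝ × ℝ) => A1f q u1 v1 v2 x p.1 p.2)
      ((volume.restrict (Ioo (0:ℝ) L)).prod
        ((volume.restrict (Ioo (0:ℝ) L)).prod (volume.restrict (Ioo (-h) (0:ℝ))))) := by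
    apply integrableOn_box
    exact cA1
  rw [integral_integral_swap itrip]
  rw [Measure.prod_restrict, ← Measure.volume_eq_prod]
  have hfin : ∀ p ∈ (Ioo (0:ℝ) L ×ˢ Ioo (-h) (0:ℝ)),
      (∫ x in Ioo (0:ℝ) L, A1f q u1 v1 v2 x p.1 p.2) = 0 := fun p hp =>
    zero_x hUo hL hq hbox hdu1 hdv1 hdv2 pu1 pv1 pv2
      (Ioo_subset_Icc_self hp.1) (Ioo_subset_Icc_self hp.2)
  rw [setIntegral_congr_fun (measurableSet_Ioo.prod measurableSet_Ioo)
    (fun p hp => hfin p hp), integral_zero]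
end
end

section
/- Let u, v : M → ℝ² be smooth on a neighbourhood of the closure of M, L-periodic in the horizontal variables x and y, with ∂_z u = ∂_z v = 0 on the top boundary z = 0 and on the bottom boundary z = -h, and assume ∫_{-h}^{0} div u(x,y,z) dz = 0 for all (x,y) ∈ M₀. Then ∫_M ∂_z(B₂(u,v)) · ∂_z v dM = ∫_M ( Σ_{j,k=1}^{2} ∂_z u_j ∂_j v_k ∂_z v_k − (div u) |∂_z v|² ) dM = − ∫_M Σ_{j,k=1}^{2} ( ∂_z ∂_j u_j v_k ∂_z v_k + ∂_z u_j v_k ∂_j ∂_z v_k − 2 u_j ∂_j ∂_z v_k ∂_z v_k ) dM, where ∂_1 = ∂_x, ∂_2 = ∂_y and |∂_z v| is the pointwise Euclidean norm. -/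
open MeasureTheory Set

noncomputable section

def unc (f : ℝ → ℝ → ℝ → ℝ) : ℝ × ℝ × ℝ → ℝ := fun p => f p.1 p.2.1 p.2.2

def SmOn (U : Set (ℝ × ℝ × ℝ)) (f : ℝ → ℝ → ℝ → ℝ) : Prop := ContDiffOn ℝ (⊤ : ℕ∞) (unc f) U

variable {U : Set (ℝ × ℝ × ℝ)} {f g : ℝ → ℝ → ℝ → ℝ} {x y z : ℝ}

lemma lineX_hasDerivAt (y z : ℝ) (x : ℝ) :
    HasDerivAt (fun t : ℝ => ((t, y, z) : ℝ × ℝ × ℝ)) (1, 0, 0) x :=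
  HasDerivAt.prodMk (hasDerivAt_id x) (hasDerivAt_const x (y, z))

lemma lineY_hasDerivAt (x z : ℝ) (y : ℝ) :
    HasDerivAt (fun t : ℝ => ((x, t, z) : ℝ × ℝ × ℝ)) (0, 1, 0) y :=
  HasDerivAt.prodMk (hasDerivAt_const y x) (HasDerivAt.prodMk (hasDerivAt_id y) (hasDerivAt_const y z))

lemma lineZ_hasDerivAt (x y : ℝ) (z : ℝ) :
    HasDerivAt (fun t : ℝ => ((x, y, t) : ℝ × ℝ × ℝ)) (0, 0, 1) z :=
  HasDerivAt.prodMk (hasDerivAt_const z x) (HasDerivAt.prodMk (hasDerivAt_const z y) (hasDerivAt_id z))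

lemma SmOn.diffAt (hU : IsOpen U) (hf : SmOn U f) (hp : (x, y, z) ∈ U) :
    DifferentiableAt ℝ (unc f) (x, y, z) :=
  ((hf.contDiffAt (hU.mem_nhds hp)).differentiableAt (by simp))

lemma SmOn.hasDerivAt_x (hU : IsOpen U) (hf : SmOn U f) (hp : (x, y, z) ∈ U) :
    HasDerivAt (fun t => f t y z) (pdx f x y z) x := by
  have h : DifferentiableAt ℝ (fun t => f t y z) x := by
    have := (hf.diffAt hU hp).comp x (lineX_hasDerivAt y z x).differentiableAt
    exact this
  exact h.hasDerivAt

lemma SmOn.hasDerivAt_y (hU : IsOpen U) (hf : SmOn U f) (hp : (x, y, z) ∈ U) :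
    HasDerivAt (fun t => f x t z) (pdy f x y z) y := by
  have h : DifferentiableAt ℝ (fun t => f x t z) y := by
    have := (hf.diffAt hU hp).comp y (lineY_hasDerivAt x z y).differentiableAt
    exact this
  exact h.hasDerivAt

lemma SmOn.hasDerivAt_z (hU : IsOpen U) (hf : SmOn U f) (hp : (x, y, z) ∈ U) :
    HasDerivAt (fun t => f x y t) (pdz f x y z) z := by
  have h : DifferentiableAt ℝ (fun t => f x y t) z := by
    have := (hf.diffAt hU hp).comp z (lineZ_hasDerivAt x y z).differentiableAt
    exact this
  exact h.hasDerivAt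

lemma SmOn.fderivSm (hU : IsOpen U) (hf : SmOn U f) :
    ContDiffOn ℝ (⊤ : ℕ∞) (fderiv ℝ (unc f)) U :=
  hf.fderiv_of_isOpen hU (by exact_mod_cast le_top)

lemma SmOn.pdx_eq (hU : IsOpen U) (hf : SmOn U f) (hp : (x, y, z) ∈ U) :
    pdx f x y z = fderiv ℝ (unc f) (x, y, z) (1, 0, 0) := by
  have h := ((hf.diffAt hU hp).hasFDerivAt).comp_hasDerivAt x (lineX_hasDerivAt y z x)
  exact ((hf.hasDerivAt_x hU hp).unique h)

lemma SmOn.pdy_eq (hU : IsOpen U) (hf : SmOn U f) (hp : (x, y, z) ∈ U) :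
    pdy f x y z = fderiv ℝ (unc f) (x, y, z) (0, 1, 0) := by
  have h := ((hf.diffAt hU hp).hasFDerivAt).comp_hasDerivAt y (lineY_hasDerivAt x z y)
  exact ((hf.hasDerivAt_y hU hp).unique h)

lemma SmOn.pdz_eq (hU : IsOpen U) (hf : SmOn U f) (hp : (x, y, z) ∈ U) :
    pdz f x y z = fderiv ℝ (unc f) (x, y, z) (0, 0, 1) := by
  have h := ((hf.diffAt hU hp).hasFDerivAt).comp_hasDerivAt z (lineZ_hasDerivAt x y z)
  exact ((hf.hasDerivAt_z hU hp).unique h)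

lemma SmOn.pdx (hU : IsOpen U) (hf : SmOn U f) : SmOn U (pdx f) := by
  have h : ContDiffOn ℝ (⊤ : ℕ∞) (fun p : ℝ × ℝ × ℝ => fderiv ℝ (unc f) p (1, 0, 0)) U :=
    (hf.fderivSm hU).clm_apply contDiffOn_const
  exact h.congr fun p hp => by
    rcases p with ⟨a, b, c⟩
    exact hf.pdx_eq hU hp

lemma SmOn.pdy (hU : IsOpen U) (hf : SmOn U f) : SmOn U (pdy f) := by
  have h : ContDiffOn ℝ (⊤ : ℕ∞) (fun p : ℝ × ℝ × ℝ => fderiv ℝ (unc f) p (0, 1, 0)) U :=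
    (hf.fderivSm hU).clm_apply contDiffOn_const
  exact h.congr fun p hp => by
    rcases p with ⟨a, b, c⟩
    exact hf.pdy_eq hU hp

lemma SmOn.pdz (hU : IsOpen U) (hf : SmOn U f) : SmOn U (pdz f) := by
  have h : ContDiffOn ℝ (⊤ : ℕ∞) (fun p : ℝ × ℝ × ℝ => fderiv ℝ (unc f) p (0, 0, 1)) U :=
    (hf.fderivSm hU).clm_apply contDiffOn_const
  exact h.congr fun p hp => by
    rcases p with ⟨a, b, c⟩
    exact hf.pdz_eq hU hp

lemma SmOn.mul' (hf : SmOn U f) (hg : SmOn U g) :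
    SmOn U (fun x y z => f x y z * g x y z) := ContDiffOn.mul hf hg


lemma schwarz_xz (hU : IsOpen U) (hf : SmOn U f) (hp : (x, y, z) ∈ U) :
    pdz (pdx f) x y z = pdx (pdz f) x y z := by
  set F' := fderiv ℝ (unc f) with hF'
  have hdF' : DifferentiableAt ℝ F' (x, y, z) :=
    ((hf.fderivSm hU).contDiffAt (hU.mem_nhds hp)).differentiableAt (by simp)
  have h2 : HasFDerivAt F' (fderiv ℝ F' (x, y, z)) (x, y, z) := hdF'.hasFDerivAt
  set f'' := fderiv ℝ F' (x, y, z) with hf''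
  have hev : ∀ᶠ q in nhds (x, y, z), HasFDerivAt (unc f) (F' q) q := by
    filter_upwards [hU.mem_nhds hp] with q hq
    obtain ⟨a, b, c⟩ := q
    exact (hf.diffAt hU hq).hasFDerivAt
  have hsymm := second_derivative_symmetric_of_eventually hev h2
  -- pdz (pdx f)
  have hUz : ∀ᶠ t in nhds z, (x, y, t) ∈ U := by
    have hc : Continuous (fun t : ℝ => ((x, y, t) : ℝ × ℝ × ℝ)) := by fun_prop
    exact hc.continuousAt.preimage_mem_nhds (hU.mem_nhds hp)
  have hUx : ∀ᶠ t in nhds x, (t, y, z) ∈ U := by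
    have hc : Continuous (fun t : ℝ => ((t, y, z) : ℝ × ℝ × ℝ)) := by fun_prop
    exact hc.continuousAt.preimage_mem_nhds (hU.mem_nhds hp)
  have e1 : pdz (pdx f) x y z = f'' (0, 0, 1) (1, 0, 0) := by
    have heq : (fun t => pdx f x y t) =ᶠ[nhds z] (fun t => F' (x, y, t) (1, 0, 0)) := by
      filter_upwards [hUz] with t ht using hf.pdx_eq hU ht
    have hd : HasDerivAt (fun t => F' (x, y, t)) (f'' (0, 0, 1)) z :=
      h2.comp_hasDerivAt z (lineZ_hasDerivAt x y z)
    have hd2 : HasDerivAt (fun t => F' (x, y, t) (1, 0, 0)) (f'' (0, 0, 1) (1, 0, 0)) z := by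
      simpa using hd.clm_apply (hasDerivAt_const z ((1, 0, 0) : ℝ × ℝ × ℝ))
    calc pdz (pdx f) x y z = deriv (fun t => F' (x, y, t) (1, 0, 0)) z := heq.deriv_eq
      _ = f'' (0, 0, 1) (1, 0, 0) := hd2.deriv
  have e2 : pdx (pdz f) x y z = f'' (1, 0, 0) (0, 0, 1) := by
    have heq : (fun t => pdz f t y z) =ᶠ[nhds x] (fun t => F' (t, y, z) (0, 0, 1)) := by
      filter_upwards [hUx] with t ht using hf.pdz_eq hU ht
    have hd : HasDerivAt (fun t => F' (t, y, z)) (f'' (1, 0, 0)) x :=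
      h2.comp_hasDerivAt x (lineX_hasDerivAt y z x)
    have hd2 : HasDerivAt (fun t => F' (t, y, z) (0, 0, 1)) (f'' (1, 0, 0) (0, 0, 1)) x := by
      simpa using hd.clm_apply (hasDerivAt_const x ((0, 0, 1) : ℝ × ℝ × ℝ))
    calc pdx (pdz f) x y z = deriv (fun t => F' (t, y, z) (0, 0, 1)) x := heq.deriv_eq
      _ = f'' (1, 0, 0) (0, 0, 1) := hd2.deriv
  rw [e1, e2, hsymm]


variable {L h : ℝ} {F G : ℝ → ℝ → ℝ → ℝ}

lemma closure_Mset (hL : 0 < L) (hh : 0 < h) :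
    closure (Mset L h) = Icc 0 L ×ˢ Icc 0 L ×ˢ Icc (-h) 0 := by
  rw [Mset, closure_prod_eq, closure_prod_eq, closure_Ioo hL.ne,
    closure_Ioo (show (-h) ≠ 0 by intro hc; linarith)]

def Cl (L h : ℝ) (F : ℝ → ℝ → ℝ → ℝ) : Prop := ContinuousOn (unc F) (closure (Mset L h))

lemma Cl.integrableOn (hL : 0 < L) (hh : 0 < h) (hF : Cl L h F) :
    IntegrableOn (unc F) (Mset L h) volume := by
  have hc : IsCompact (closure (Mset L h)) := by
    rw [closure_Mset hL hh]
    exact isCompact_Icc.prod (isCompact_Icc.prod isCompact_Icc)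
  exact (hF.integrableOn_compact hc).mono_set subset_closure

/-- The 2D set. -/
def Mset2 (L h : ℝ) : Set (ℝ × ℝ) := Ioo 0 L ×ˢ Ioo (-h) 0

lemma Cl.integrableOn' (hL : 0 < L) (hh : 0 < h) (hF : Cl L h F) :
    Integrable (unc F) ((volume.restrict (Ioo (0:ℝ) L)).prod
      ((volume : Measure (ℝ × ℝ)).restrict (Mset2 L h))) := by
  rw [Measure.prod_restrict, ← Measure.volume_eq_prod]
  exact hF.integrableOn hL hh

lemma intM_eq (hL : 0 < L) (hh : 0 < h) (hF : Cl L h F) :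
    intM L h F = ∫ p in Mset L h, unc F p := by
  have hI := hF.integrableOn' hL hh
  have step1 : ∫ p in Mset L h, unc F p
      = ∫ x in Ioo (0:ℝ) L, ∫ q in Mset2 L h, unc F (x, q) := by
    rw [Mset, show (Ioo (0:ℝ) L ×ˢ Ioo (0:ℝ) L ×ˢ Ioo (-h) 0)
        = Ioo (0:ℝ) L ×ˢ Mset2 L h from rfl, Measure.volume_eq_prod]
    refine setIntegral_prod _ ?_
    show Integrable (unc F) ((volume.prod volume).restrict _)
    rw [← Measure.prod_restrict]
    exact hI
  rw [step1, intM]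
  refine integral_congr_ae ?_
  filter_upwards [hI.prod_right_ae] with x hx
  have : ∫ q in Mset2 L h, unc F (x, q) ∂(volume : Measure (ℝ × ℝ))
      = ∫ y in Ioo (0:ℝ) L, ∫ z in Ioo (-h) (0:ℝ), F x y z := by
    rw [Mset2, Measure.volume_eq_prod]
    refine setIntegral_prod _ ?_
    show Integrable (fun q => unc F (x, q))
      ((volume.prod volume).restrict (Ioo (0:ℝ) L ×ˢ Ioo (-h) (0:ℝ)))
    rw [← Measure.volume_eq_prod]
    exact hx
  rw [this]

lemma intM_add (hL : 0 < L) (hh : 0 < h) (hF : Cl L h F) (hG : Cl L h G) :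
    intM L h (fun x y z => F x y z + G x y z) = intM L h F + intM L h G := by
  have hFG : Cl L h (fun x y z => F x y z + G x y z) := ContinuousOn.add hF hG
  rw [intM_eq hL hh hF, intM_eq hL hh hG, intM_eq hL hh hFG]
  exact integral_add (hF.integrableOn hL hh) (hG.integrableOn hL hh)

lemma intM_const_mul (c : ℝ) : intM L h (fun x y z => c * F x y z) = c * intM L h F := by
  simp only [intM, integral_const_mul]

lemma intM_neg : intM L h (fun x y z => -F x y z) = -intM L h F := by
  simp only [intM, integral_neg]

lemma intM_congr (hFG : ∀ x ∈ Ioo (0:ℝ) L, ∀ y ∈ Ioo (0:ℝ) L, ∀ z ∈ Ioo (-h) (0:ℝ),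
    F x y z = G x y z) : intM L h F = intM L h G := by
  refine setIntegral_congr_fun measurableSet_Ioo fun x hx => ?_
  refine setIntegral_congr_fun measurableSet_Ioo fun y hy => ?_
  exact setIntegral_congr_fun measurableSet_Ioo fun z hz => hFG x hx y hy z hz


lemma periodic_deriv_aux {u : ℝ → ℝ} (hu : ∀ t, u (t + L) = u t) (x : ℝ) :
    deriv u (x + L) = deriv u x := by
  rw [← deriv_comp_add_const (f := u) (a := L) (x := x)]
  congr 1
  ext t
  exact hu t

lemma PeriodicXY.pdx (hf : PeriodicXY L f) : PeriodicXY L (pdx f) := by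
  intro x y z
  constructor
  · exact periodic_deriv_aux (fun t => (hf t y z).1) x
  · show deriv (fun t => f t (y + L) z) x = _
    congr 1
    ext t
    exact (hf t y z).2

lemma PeriodicXY.pdy (hf : PeriodicXY L f) : PeriodicXY L (pdy f) := by
  intro x y z
  constructor
  · show deriv (fun t => f (x + L) t z) y = _
    congr 1
    ext t
    exact (hf x t z).1
  · exact periodic_deriv_aux (fun t => (hf x t z).2) y

lemma PeriodicXY.pdz (hf : PeriodicXY L f) : PeriodicXY L (pdz f) := by
  intro x y z
  refine ⟨?_, ?_⟩
  · show deriv (fun t => f (x + L) y t) z = _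
    congr 1
    ext t
    exact (hf x y t).1
  · show deriv (fun t => f x (y + L) t) z = _
    congr 1
    ext t
    exact (hf x y t).2

lemma PeriodicXY.mul (hf : PeriodicXY L f) (hg : PeriodicXY L g) :
    PeriodicXY L (fun x y z => f x y z * g x y z) := by
  intro x y z
  exact ⟨by simp only []; rw [(hf x y z).1, (hg x y z).1], by simp only []; rw [(hf x y z).2, (hg x y z).2]⟩

lemma PeriodicXY.add (hf : PeriodicXY L f) (hg : PeriodicXY L g) :
    PeriodicXY L (fun x y z => f x y z + g x y z) := by
  intro x y z
  exact ⟨by simp only []; rw [(hf x y z).1, (hg x y z).1],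
    by simp only []; rw [(hf x y z).2, (hg x y z).2]⟩

section ZeroLemmas
variable {L h : ℝ} {U : Set (ℝ × ℝ × ℝ)} {G : ℝ → ℝ → ℝ → ℝ}

lemma mem_closure_Mset (hL : 0 < L) (hh : 0 < h) {x y z : ℝ} (hx : x ∈ Icc 0 L)
    (hy : y ∈ Icc 0 L) (hz : z ∈ Icc (-h) 0) : (x, y, z) ∈ closure (Mset L h) := by
  rw [closure_Mset hL hh]; exact ⟨hx, hy, hz⟩

lemma SmOn.cl (hU : IsOpen U) (hsub : closure (Mset L h) ⊆ U) (hf : SmOn U G) : Cl L h G :=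
  (hf.continuousOn).mono hsub

lemma integral_slice_x_zero (hL : 0 < L) (hh : 0 < h) (hU : IsOpen U)
    (hsub : closure (Mset L h) ⊆ U) (hf : SmOn U G) (hper : PeriodicXY L G)
    {y z : ℝ} (hy : y ∈ Icc 0 L) (hz : z ∈ Icc (-h) 0) :
    ∫ x in Ioo (0:ℝ) L, pdx G x y z = 0 := by
  have hmem : ∀ a ∈ Icc (0:ℝ) L, (a, y, z) ∈ U := fun a ha =>
    hsub (mem_closure_Mset hL hh ha hy hz)
  have hd : ∀ a ∈ uIcc (0:ℝ) L, HasDerivAt (fun t => G t y z) (pdx G a y z) a := by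
    intro a ha
    rw [uIcc_of_le hL.le] at ha
    exact hf.hasDerivAt_x hU (hmem a ha)
  have hint : IntervalIntegrable (fun a => pdx G a y z) volume 0 L := by
    refine ContinuousOn.intervalIntegrable ?_
    rw [uIcc_of_le hL.le]
    have hcl : ContinuousOn (unc (pdx G)) U := (hf.pdx hU).continuousOn
    have hline : Continuous (fun a : ℝ => ((a, y, z) : ℝ × ℝ × ℝ)) := by fun_prop
    exact hcl.comp hline.continuousOn fun a ha => hmem a ha
  have hsub2 := intervalIntegral.integral_eq_sub_of_hasDerivAt hd hint
  have hper' : G L y z = G 0 y z := by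
    have := (hper 0 y z).1
    rwa [zero_add] at this
  rw [← integral_Ioc_eq_integral_Ioo, ← intervalIntegral.integral_of_le hL.le, hsub2,
    hper', sub_self]

lemma integral_slice_y_zero (hL : 0 < L) (hh : 0 < h) (hU : IsOpen U)
    (hsub : closure (Mset L h) ⊆ U) (hf : SmOn U G) (hper : PeriodicXY L G)
    {x z : ℝ} (hx : x ∈ Icc 0 L) (hz : z ∈ Icc (-h) 0) :
    ∫ y in Ioo (0:ℝ) L, pdy G x y z = 0 := by
  have hmem : ∀ a ∈ Icc (0:ℝ) L, (x, a, z) ∈ U := fun a ha =>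
    hsub (mem_closure_Mset hL hh hx ha hz)
  have hd : ∀ a ∈ uIcc (0:ℝ) L, HasDerivAt (fun t => G x t z) (pdy G x a z) a := by
    intro a ha
    rw [uIcc_of_le hL.le] at ha
    exact hf.hasDerivAt_y hU (hmem a ha)
  have hint : IntervalIntegrable (fun a => pdy G x a z) volume 0 L := by
    refine ContinuousOn.intervalIntegrable ?_
    rw [uIcc_of_le hL.le]
    have hcl : ContinuousOn (unc (pdy G)) U := (hf.pdy hU).continuousOn
    have hline : Continuous (fun a : ℝ => ((x, a, z) : ℝ × ℝ × ℝ)) := by fun_prop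
    exact hcl.comp hline.continuousOn fun a ha => hmem a ha
  have hsub2 := intervalIntegral.integral_eq_sub_of_hasDerivAt hd hint
  have hper' : G x L z = G x 0 z := by
    have := (hper x 0 z).2
    rwa [zero_add] at this
  rw [← integral_Ioc_eq_integral_Ioo, ← intervalIntegral.integral_of_le hL.le, hsub2,
    hper', sub_self]

lemma intM_pdx_zero (hL : 0 < L) (hh : 0 < h) (hU : IsOpen U)
    (hsub : closure (Mset L h) ⊆ U) (hf : SmOn U G) (hper : PeriodicXY L G) :
    intM L h (pdx G) = 0 := by
  have hCl : Cl L h (pdx G) := (hf.pdx hU).cl hU hsub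
  have hI := hCl.integrableOn' hL hh
  rw [intM_eq hL hh hCl]
  have e0 : ∫ p in Mset L h, unc (pdx G) p
      = ∫ p, unc (pdx G) p ∂((volume.restrict (Ioo (0:ℝ) L)).prod
        ((volume : Measure (ℝ × ℝ)).restrict (Mset2 L h))) := by
    rw [Mset, show (Ioo (0:ℝ) L ×ˢ Ioo (0:ℝ) L ×ˢ Ioo (-h) 0)
      = Ioo (0:ℝ) L ×ˢ Mset2 L h from rfl, Measure.volume_eq_prod, ← Measure.prod_restrict]
  rw [e0, integral_prod_symm _ hI]
  refine integral_eq_zero_of_ae ?_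
  filter_upwards [ae_restrict_mem (by rw [Mset2]; exact (measurableSet_Ioo.prod measurableSet_Ioo) : MeasurableSet (Mset2 L h))] with q hq
  obtain ⟨yv, zv⟩ := q
  obtain ⟨hy, hz⟩ := hq
  exact integral_slice_x_zero hL hh hU hsub hf hper (Ioo_subset_Icc_self hy)
    (Ioo_subset_Icc_self hz)

lemma intM_pdy_zero (hL : 0 < L) (hh : 0 < h) (hU : IsOpen U)
    (hsub : closure (Mset L h) ⊆ U) (hf : SmOn U G) (hper : PeriodicXY L G) :
    intM L h (pdy G) = 0 := by
  rw [intM]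
  have key : ∀ x ∈ Ioo (0:ℝ) L,
      (∫ y in Ioo (0:ℝ) L, ∫ z in Ioo (-h) (0:ℝ), pdy G x y z) = 0 := by
    intro x hx
    have hint2 : Integrable (Function.uncurry (fun y z => pdy G x y z))
        ((volume.restrict (Ioo (0:ℝ) L)).prod (volume.restrict (Ioo (-h) (0:ℝ)))) := by
      rw [Measure.prod_restrict]
      have hc : ContinuousOn (Function.uncurry (fun y z => pdy G x y z))
          (Icc (0:ℝ) L ×ˢ Icc (-h) 0) := by
        have hcl : ContinuousOn (unc (pdy G)) U := (hf.pdy hU).continuousOn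
        have hline : Continuous (fun q : ℝ × ℝ => ((x, q.1, q.2) : ℝ × ℝ × ℝ)) := by fun_prop
        exact hcl.comp hline.continuousOn fun q hq =>
          hsub (mem_closure_Mset hL hh (Ioo_subset_Icc_self hx) hq.1 hq.2)
      have h2 := (hc.integrableOn_compact (μ := (volume : Measure (ℝ × ℝ)))
        (isCompact_Icc.prod isCompact_Icc)).mono_set
        (prod_mono Ioo_subset_Icc_self Ioo_subset_Icc_self)
      rwa [Measure.volume_eq_prod] at h2
    rw [integral_integral_swap hint2]
    refine integral_eq_zero_of_ae ?_
    filter_upwards [ae_restrict_mem measurableSet_Ioo] with z hz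
    exact integral_slice_y_zero hL hh hU hsub hf hper (Ioo_subset_Icc_self hx)
      (Ioo_subset_Icc_self hz)
  rw [setIntegral_congr_fun measurableSet_Ioo key]
  simp

end ZeroLemmas


section DerivHelpers
variable {U : Set (ℝ × ℝ × ℝ)} {f g : ℝ → ℝ → ℝ → ℝ} {x y z : ℝ}

lemma schwarz_yz (hU : IsOpen U) (hf : SmOn U f) (hp : (x, y, z) ∈ U) :
    pdz (pdy f) x y z = pdy (pdz f) x y z := by
  set F' := fderiv ℝ (unc f) with hF'
  have hdF' : DifferentiableAt ℝ F' (x, y, z) :=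
    ((hf.fderivSm hU).contDiffAt (hU.mem_nhds hp)).differentiableAt (by simp)
  have h2 : HasFDerivAt F' (fderiv ℝ F' (x, y, z)) (x, y, z) := hdF'.hasFDerivAt
  set f'' := fderiv ℝ F' (x, y, z) with hf''
  have hev : ∀ᶠ q in nhds (x, y, z), HasFDerivAt (unc f) (F' q) q := by
    filter_upwards [hU.mem_nhds hp] with q hq
    obtain ⟨a, b, c⟩ := q
    exact (hf.diffAt hU hq).hasFDerivAt
  have hsymm := second_derivative_symmetric_of_eventually hev h2
  have hUz : ∀ᶠ t in nhds z, (x, y, t) ∈ U := by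
    have hc : Continuous (fun t : ℝ => ((x, y, t) : ℝ × ℝ × ℝ)) := by fun_prop
    exact hc.continuousAt.preimage_mem_nhds (hU.mem_nhds hp)
  have hUy : ∀ᶠ t in nhds y, (x, t, z) ∈ U := by
    have hc : Continuous (fun t : ℝ => ((x, t, z) : ℝ × ℝ × ℝ)) := by fun_prop
    exact hc.continuousAt.preimage_mem_nhds (hU.mem_nhds hp)
  have e1 : pdz (pdy f) x y z = f'' (0, 0, 1) (0, 1, 0) := by
    have heq : (fun t => pdy f x y t) =ᶠ[nhds z] (fun t => F' (x, y, t) (0, 1, 0)) := by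
      filter_upwards [hUz] with t ht using hf.pdy_eq hU ht
    have hd : HasDerivAt (fun t => F' (x, y, t)) (f'' (0, 0, 1)) z :=
      h2.comp_hasDerivAt z (lineZ_hasDerivAt x y z)
    have hd2 : HasDerivAt (fun t => F' (x, y, t) (0, 1, 0)) (f'' (0, 0, 1) (0, 1, 0)) z := by
      simpa using hd.clm_apply (hasDerivAt_const z ((0, 1, 0) : ℝ × ℝ × ℝ))
    calc pdz (pdy f) x y z = deriv (fun t => F' (x, y, t) (0, 1, 0)) z := heq.deriv_eq
      _ = f'' (0, 0, 1) (0, 1, 0) := hd2.deriv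
  have e2 : pdy (pdz f) x y z = f'' (0, 1, 0) (0, 0, 1) := by
    have heq : (fun t => pdz f x t z) =ᶠ[nhds y] (fun t => F' (x, t, z) (0, 0, 1)) := by
      filter_upwards [hUy] with t ht using hf.pdz_eq hU ht
    have hd : HasDerivAt (fun t => F' (x, t, z)) (f'' (0, 1, 0)) y :=
      h2.comp_hasDerivAt y (lineY_hasDerivAt x z y)
    have hd2 : HasDerivAt (fun t => F' (x, t, z) (0, 0, 1)) (f'' (0, 1, 0) (0, 0, 1)) y := by
      simpa using hd.clm_apply (hasDerivAt_const y ((0, 0, 1) : ℝ × ℝ × ℝ))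
    calc pdy (pdz f) x y z = deriv (fun t => F' (x, t, z) (0, 0, 1)) y := heq.deriv_eq
      _ = f'' (0, 1, 0) (0, 0, 1) := hd2.deriv
  rw [e1, e2, hsymm]

end DerivHelpers


section Core

def MIDf (u1 u2 v1 v2 : ℝ → ℝ → ℝ → ℝ) : ℝ → ℝ → ℝ → ℝ := fun x y z =>
  (pdz u1 x y z * pdx v1 x y z * pdz v1 x y z +
   pdz u1 x y z * pdx v2 x y z * pdz v2 x y z +
   pdz u2 x y z * pdy v1 x y z * pdz v1 x y z +
   pdz u2 x y z * pdy v2 x y z * pdz v2 x y z)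
  - (pdx u1 x y z + pdy u2 x y z) * ((pdz v1 x y z) ^ 2 + (pdz v2 x y z) ^ 2)

def PsiF (v1 v2 : ℝ → ℝ → ℝ → ℝ) : ℝ → ℝ → ℝ → ℝ := fun x y z =>
  pdz v1 x y z * pdz v1 x y z + pdz v2 x y z * pdz v2 x y z

def Pu1 (u1 v1 v2 : ℝ → ℝ → ℝ → ℝ) : ℝ → ℝ → ℝ → ℝ := fun x y z =>
  u1 x y z * PsiF v1 v2 x y z

def Pu2 (u2 v1 v2 : ℝ → ℝ → ℝ → ℝ) : ℝ → ℝ → ℝ → ℝ := fun x y z =>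
  u2 x y z * PsiF v1 v2 x y z

def Rf (u1 u2 v1 v2 : ℝ → ℝ → ℝ → ℝ) : ℝ → ℝ → ℝ → ℝ := fun x y z =>
  (1/2) * (pdx (Pu1 u1 v1 v2) x y z + pdy (Pu2 u2 v1 v2) x y z)

variable {L h : ℝ} {U : Set (ℝ × ℝ × ℝ)} {u1 u2 v1 v2 : ℝ → ℝ → ℝ → ℝ}

lemma smOn_PsiF (hU : IsOpen U) (hv1 : SmOn U v1) (hv2 : SmOn U v2) :
    SmOn U (PsiF v1 v2) :=
  ContDiffOn.add (ContDiffOn.mul (hv1.pdz hU) (hv1.pdz hU))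
    (ContDiffOn.mul (hv2.pdz hU) (hv2.pdz hU))

lemma smOn_Pu1 (hU : IsOpen U) (hu1 : SmOn U u1) (hv1 : SmOn U v1) (hv2 : SmOn U v2) :
    SmOn U (Pu1 u1 v1 v2) := ContDiffOn.mul hu1 (smOn_PsiF hU hv1 hv2)

lemma smOn_Pu2 (hU : IsOpen U) (hu2 : SmOn U u2) (hv1 : SmOn U v1) (hv2 : SmOn U v2) :
    SmOn U (Pu2 u2 v1 v2) := ContDiffOn.mul hu2 (smOn_PsiF hU hv1 hv2)

lemma smOn_MIDf (hU : IsOpen U) (hu1 : SmOn U u1) (hu2 : SmOn U u2)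
    (hv1 : SmOn U v1) (hv2 : SmOn U v2) : SmOn U (MIDf u1 u2 v1 v2) := by
  refine ContDiffOn.sub ?_ ?_
  · exact ContDiffOn.add (ContDiffOn.add (ContDiffOn.add
      (ContDiffOn.mul (ContDiffOn.mul (hu1.pdz hU) (hv1.pdx hU)) (hv1.pdz hU))
      (ContDiffOn.mul (ContDiffOn.mul (hu1.pdz hU) (hv2.pdx hU)) (hv2.pdz hU)))
      (ContDiffOn.mul (ContDiffOn.mul (hu2.pdz hU) (hv1.pdy hU)) (hv1.pdz hU)))
      (ContDiffOn.mul (ContDiffOn.mul (hu2.pdz hU) (hv2.pdy hU)) (hv2.pdz hU))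
  · exact ContDiffOn.mul (ContDiffOn.add (hu1.pdx hU) (hu2.pdy hU))
      (ContDiffOn.add (ContDiffOn.pow (hv1.pdz hU) 2) (ContDiffOn.pow (hv2.pdz hU) 2))

lemma smOn_Rf (hU : IsOpen U) (hu1 : SmOn U u1) (hu2 : SmOn U u2)
    (hv1 : SmOn U v1) (hv2 : SmOn U v2) : SmOn U (Rf u1 u2 v1 v2) :=
  ContDiffOn.mul contDiffOn_const
    (ContDiffOn.add ((smOn_Pu1 hU hu1 hv1 hv2).pdx hU) ((smOn_Pu2 hU hu2 hv1 hv2).pdy hU))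

lemma core_z (hL : 0 < L) (hh : 0 < h) (hU : IsOpen U) (hsub : closure (Mset L h) ⊆ U)
    (hu1 : SmOn U u1) (hu2 : SmOn U u2) (hv1 : SmOn U v1) (hv2 : SmOn U v2)
    {x y : ℝ} (hx : x ∈ Ioo (0:ℝ) L) (hy : y ∈ Ioo (0:ℝ) L)
    (hb01 : pdz v1 x y 0 = 0) (hb02 : pdz v2 x y 0 = 0)
    (hbh1 : pdz v1 x y (-h) = 0) (hbh2 : pdz v2 x y (-h) = 0) :
    (∫ z in Ioo (-h) (0:ℝ), (pdz (B2comp h u1 u2 v1) x y z * pdz v1 x y z +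
      pdz (B2comp h u1 u2 v2) x y z * pdz v2 x y z))
    = ∫ z in Ioo (-h) (0:ℝ), (MIDf u1 u2 v1 v2 x y z + Rf u1 u2 v1 v2 x y z) := by
  have hhle : (-h) ≤ 0 := by linarith
  have hxI : x ∈ Icc (0:ℝ) L := Ioo_subset_Icc_self hx
  have hyI : y ∈ Icc (0:ℝ) L := Ioo_subset_Icc_self hy
  have hmem : ∀ t ∈ Icc (-h) (0:ℝ), (x, y, t) ∈ U := fun t ht =>
    hsub (mem_closure_Mset hL hh hxI hyI ht)
  have hlinec : Continuous (fun t : ℝ => ((x, y, t) : ℝ × ℝ × ℝ)) := by fun_prop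
  set S : Set ℝ := (fun t : ℝ => ((x, y, t) : ℝ × ℝ × ℝ)) ⁻¹' U with hSdef
  have hSopen : IsOpen S := hU.preimage hlinec
  have hSmem : ∀ t ∈ Icc (-h) (0:ℝ), t ∈ S := hmem
  have sliceC : ∀ {f : ℝ → ℝ → ℝ → ℝ}, SmOn U f → ContinuousOn (fun t => f x y t) S :=
    fun {f} hf => hf.continuousOn.comp hlinec.continuousOn (fun t ht => ht)
  set q : ℝ → ℝ := fun t => pdx u1 x y t + pdy u2 x y t with hqdef
  have hqc : ContinuousOn q S :=
    ContinuousOn.add (sliceC (hu1.pdx hU)) (sliceC (hu2.pdy hU))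
  have hqint : ∀ t ∈ Icc (-h) (0:ℝ), IntervalIntegrable q volume (-h) t := by
    intro t ht
    refine ContinuousOn.intervalIntegrable (hqc.mono ?_)
    rw [uIcc_of_le ht.1]
    exact fun s hs => hSmem s ⟨hs.1, hs.2.trans ht.2⟩
  have hW : ∀ t ∈ Icc (-h) (0:ℝ),
      HasDerivAt (fun s => wvel h u1 u2 x y s) (-(q t)) t := by
    intro t ht
    have hmeas : StronglyMeasurableAtFilter q (nhds t) :=
      hqc.stronglyMeasurableAtFilter hSopen t (hSmem t ht)
    have hcont : ContinuousAt q t := hqc.continuousAt (hSopen.mem_nhds (hSmem t ht))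
    exact (intervalIntegral.integral_hasDerivAt_right (hqint t ht) hmeas hcont).neg
  have hWc : ContinuousOn (fun s => wvel h u1 u2 x y s) (Icc (-h) (0:ℝ)) :=
    fun t ht => ((hW t ht).continuousAt).continuousWithinAt
  -- pointwise identity
  set Gz : ℝ → ℝ := fun z => (1/2) *
    ((wvel h u1 u2 x y z * (pdz (pdz v1) x y z * pdz v1 x y z +
        pdz v1 x y z * pdz (pdz v1) x y z) - q z * (pdz v1 x y z * pdz v1 x y z)) +
     (wvel h u1 u2 x y z * (pdz (pdz v2) x y z * pdz v2 x y z +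
        pdz v2 x y z * pdz (pdz v2) x y z) - q z * (pdz v2 x y z * pdz v2 x y z)))
    with hGzdef
  have hpt : ∀ z ∈ Ioo (-h) (0:ℝ),
      pdz (B2comp h u1 u2 v1) x y z * pdz v1 x y z +
        pdz (B2comp h u1 u2 v2) x y z * pdz v2 x y z
      = (MIDf u1 u2 v1 v2 x y z + Rf u1 u2 v1 v2 x y z) + Gz z := by
    intro z hz
    have hzI : z ∈ Icc (-h) (0:ℝ) := Ioo_subset_Icc_self hz
    have hp : (x, y, z) ∈ U := hmem z hzI
    have hB : ∀ (vk : ℝ → ℝ → ℝ → ℝ), SmOn U vk →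
        pdz (B2comp h u1 u2 vk) x y z
        = pdz u1 x y z * pdx vk x y z + u1 x y z * pdz (pdx vk) x y z +
          (pdz u2 x y z * pdy vk x y z + u2 x y z * pdz (pdy vk) x y z) +
          (-(q z) * pdz vk x y z + wvel h u1 u2 x y z * pdz (pdz vk) x y z) := by
      intro vk hvk
      have hd : HasDerivAt (fun t => u1 x y t * pdx vk x y t + u2 x y t * pdy vk x y t +
          wvel h u1 u2 x y t * pdz vk x y t)
          (pdz u1 x y z * pdx vk x y z + u1 x y z * pdz (pdx vk) x y z +
           (pdz u2 x y z * pdy vk x y z + u2 x y z * pdz (pdy vk) x y z) +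
           (-(q z) * pdz vk x y z + wvel h u1 u2 x y z * pdz (pdz vk) x y z)) z := by
        exact (((hu1.hasDerivAt_z hU hp).mul ((hvk.pdx hU).hasDerivAt_z hU hp)).add
          ((hu2.hasDerivAt_z hU hp).mul ((hvk.pdy hU).hasDerivAt_z hU hp))).add
          ((hW z hzI).mul ((hvk.pdz hU).hasDerivAt_z hU hp))
      exact hd.deriv
    have hB1 := hB v1 hv1
    have hB2 := hB v2 hv2
    have s1 : pdz (pdx v1) x y z = pdx (pdz v1) x y z := schwarz_xz hU hv1 hp
    have s2 : pdz (pdx v2) x y z = pdx (pdz v2) x y z := schwarz_xz hU hv2 hp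
    have s3 : pdz (pdy v1) x y z = pdy (pdz v1) x y z := schwarz_yz hU hv1 hp
    have s4 : pdz (pdy v2) x y z = pdy (pdz v2) x y z := schwarz_yz hU hv2 hp
    have e1 : pdx (Pu1 u1 v1 v2) x y z
        = pdx u1 x y z * PsiF v1 v2 x y z + u1 x y z *
          ((pdx (pdz v1) x y z * pdz v1 x y z + pdz v1 x y z * pdx (pdz v1) x y z) +
           (pdx (pdz v2) x y z * pdz v2 x y z + pdz v2 x y z * pdx (pdz v2) x y z)) := by
      have hd : HasDerivAt (fun t => u1 t y z *
          (pdz v1 t y z * pdz v1 t y z + pdz v2 t y z * pdz v2 t y z))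
          (pdx u1 x y z * PsiF v1 v2 x y z + u1 x y z *
          ((pdx (pdz v1) x y z * pdz v1 x y z + pdz v1 x y z * pdx (pdz v1) x y z) +
           (pdx (pdz v2) x y z * pdz v2 x y z + pdz v2 x y z * pdx (pdz v2) x y z))) x :=
        (hu1.hasDerivAt_x hU hp).mul
          ((((hv1.pdz hU).hasDerivAt_x hU hp).mul ((hv1.pdz hU).hasDerivAt_x hU hp)).add
           (((hv2.pdz hU).hasDerivAt_x hU hp).mul ((hv2.pdz hU).hasDerivAt_x hU hp)))
      exact hd.deriv
    have e2 : pdy (Pu2 u2 v1 v2) x y z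
        = pdy u2 x y z * PsiF v1 v2 x y z + u2 x y z *
          ((pdy (pdz v1) x y z * pdz v1 x y z + pdz v1 x y z * pdy (pdz v1) x y z) +
           (pdy (pdz v2) x y z * pdz v2 x y z + pdz v2 x y z * pdy (pdz v2) x y z)) := by
      have hd : HasDerivAt (fun t => u2 x t z *
          (pdz v1 x t z * pdz v1 x t z + pdz v2 x t z * pdz v2 x t z))
          (pdy u2 x y z * PsiF v1 v2 x y z + u2 x y z *
          ((pdy (pdz v1) x y z * pdz v1 x y z + pdz v1 x y z * pdy (pdz v1) x y z) +
           (pdy (pdz v2) x y z * pdz v2 x y z + pdz v2 x y z * pdy (pdz v2) x y z))) y :=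
        (hu2.hasDerivAt_y hU hp).mul
          ((((hv1.pdz hU).hasDerivAt_y hU hp).mul ((hv1.pdz hU).hasDerivAt_y hU hp)).add
           (((hv2.pdz hU).hasDerivAt_y hU hp).mul ((hv2.pdz hU).hasDerivAt_y hU hp)))
      exact hd.deriv
    rw [hB1, hB2, s1, s2, s3, s4]
    simp only [hGzdef, MIDf, Rf, PsiF, e1, e2, hqdef]
    ring
  -- integrability of the pieces
  have hSfc : ContinuousOn (fun z => MIDf u1 u2 v1 v2 x y z + Rf u1 u2 v1 v2 x y z)
      (Icc (-h) (0:ℝ)) := by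
    have : ContinuousOn (fun t => MIDf u1 u2 v1 v2 x y t + Rf u1 u2 v1 v2 x y t) S :=
      ContinuousOn.add (sliceC (smOn_MIDf hU hu1 hu2 hv1 hv2))
        (sliceC (smOn_Rf hU hu1 hu2 hv1 hv2))
    exact this.mono hSmem
  have hGzc : ContinuousOn Gz (Icc (-h) (0:ℝ)) := by
    have hD1 : ContinuousOn (fun t => pdz (pdz v1) x y t) (Icc (-h) (0:ℝ)) :=
      (sliceC ((hv1.pdz hU).pdz hU)).mono hSmem
    have hD2 : ContinuousOn (fun t => pdz (pdz v2) x y t) (Icc (-h) (0:ℝ)) :=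
      (sliceC ((hv2.pdz hU).pdz hU)).mono hSmem
    have hs1 : ContinuousOn (fun t => pdz v1 x y t) (Icc (-h) (0:ℝ)) :=
      (sliceC (hv1.pdz hU)).mono hSmem
    have hs2 : ContinuousOn (fun t => pdz v2 x y t) (Icc (-h) (0:ℝ)) :=
      (sliceC (hv2.pdz hU)).mono hSmem
    have hqc' : ContinuousOn q (Icc (-h) (0:ℝ)) := hqc.mono hSmem
    exact continuousOn_const.mul
      (((hWc.mul ((hD1.mul hs1).add (hs1.mul hD1))).sub (hqc'.mul (hs1.mul hs1))).add
       ((hWc.mul ((hD2.mul hs2).add (hs2.mul hD2))).sub (hqc'.mul (hs2.mul hs2))))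
  have hIsf : IntegrableOn (fun z => MIDf u1 u2 v1 v2 x y z + Rf u1 u2 v1 v2 x y z)
      (Ioo (-h) (0:ℝ)) volume :=
    (hSfc.integrableOn_compact isCompact_Icc).mono_set Ioo_subset_Icc_self
  have hIGz : IntegrableOn Gz (Ioo (-h) (0:ℝ)) volume :=
    (hGzc.integrableOn_compact isCompact_Icc).mono_set Ioo_subset_Icc_self
  have mkcont : ∀ (vk : ℝ → ℝ → ℝ → ℝ), SmOn U vk →
      ContinuousOn (fun t => wvel h u1 u2 x y t *
        (pdz (pdz vk) x y t * pdz vk x y t + pdz vk x y t * pdz (pdz vk) x y t)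
        - q t * (pdz vk x y t * pdz vk x y t)) (Icc (-h) (0:ℝ)) := by
    intro vk hvk
    have hD := (sliceC ((hvk.pdz hU).pdz hU)).mono hSmem
    have hs := (sliceC (hvk.pdz hU)).mono hSmem
    exact (hWc.mul ((hD.mul hs).add (hs.mul hD))).sub ((hqc.mono hSmem).mul (hs.mul hs))
  have key : ∀ (vk : ℝ → ℝ → ℝ → ℝ), SmOn U vk → pdz vk x y 0 = 0 → pdz vk x y (-h) = 0 →
      (∫ t in (-h)..(0:ℝ), (wvel h u1 u2 x y t *
        (pdz (pdz vk) x y t * pdz vk x y t + pdz vk x y t * pdz (pdz vk) x y t)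
        - q t * (pdz vk x y t * pdz vk x y t))) = 0 := by
    intro vk hvk hb0 hbh
    have hWu : ∀ t ∈ uIcc (-h) (0:ℝ), HasDerivAt (fun s => wvel h u1 u2 x y s) (-(q t)) t := by
      intro t ht
      rw [uIcc_of_le hhle] at ht
      exact hW t ht
    have hsd : ∀ t ∈ uIcc (-h) (0:ℝ), HasDerivAt (fun s => pdz vk x y s * pdz vk x y s)
        (pdz (pdz vk) x y t * pdz vk x y t + pdz vk x y t * pdz (pdz vk) x y t) t := by
      intro t ht
      rw [uIcc_of_le hhle] at ht
      exact ((hvk.pdz hU).hasDerivAt_z hU (hmem t ht)).mul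
        ((hvk.pdz hU).hasDerivAt_z hU (hmem t ht))
    have hu' : IntervalIntegrable (fun t => -(q t)) volume (-h) 0 :=
      (hqint 0 (right_mem_Icc.2 hhle)).neg
    have hv' : IntervalIntegrable (fun t => pdz (pdz vk) x y t * pdz vk x y t +
        pdz vk x y t * pdz (pdz vk) x y t) volume (-h) 0 := by
      refine ContinuousOn.intervalIntegrable ?_
      rw [uIcc_of_le hhle]
      have hD := (sliceC ((hvk.pdz hU).pdz hU)).mono hSmem
      have hs := (sliceC (hvk.pdz hU)).mono hSmem
      exact (hD.mul hs).add (hs.mul hD)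
    have hibp := intervalIntegral.integral_mul_deriv_eq_deriv_mul hWu hsd hu' hv'
    rw [hb0, hbh] at hibp
    have hWint : IntervalIntegrable (fun t => wvel h u1 u2 x y t *
        (pdz (pdz vk) x y t * pdz vk x y t + pdz vk x y t * pdz (pdz vk) x y t))
        volume (-h) 0 := by
      refine ContinuousOn.intervalIntegrable ?_
      rw [uIcc_of_le hhle]
      have hD := (sliceC ((hvk.pdz hU).pdz hU)).mono hSmem
      have hs := (sliceC (hvk.pdz hU)).mono hSmem
      exact hWc.mul ((hD.mul hs).add (hs.mul hD))
    have hqvint : IntervalIntegrable (fun t => q t * (pdz vk x y t * pdz vk x y t))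
        volume (-h) 0 := by
      refine ContinuousOn.intervalIntegrable ?_
      rw [uIcc_of_le hhle]
      have hs := (sliceC (hvk.pdz hU)).mono hSmem
      exact (hqc.mono hSmem).mul (hs.mul hs)
    rw [intervalIntegral.integral_sub hWint hqvint, hibp]
    have hneg : (∫ t in (-h)..(0:ℝ), -(q t) * (pdz vk x y t * pdz vk x y t))
        = - ∫ t in (-h)..(0:ℝ), q t * (pdz vk x y t * pdz vk x y t) := by
      rw [← intervalIntegral.integral_neg]
      congr 1
      ext t
      ring
    rw [hneg]
    ring
  have hGzero : (∫ z in Ioo (-h) (0:ℝ), Gz z) = 0 := by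
    rw [← integral_Ioc_eq_integral_Ioo, ← intervalIntegral.integral_of_le hhle]
    have hIG1 : IntervalIntegrable (fun t => wvel h u1 u2 x y t *
        (pdz (pdz v1) x y t * pdz v1 x y t + pdz v1 x y t * pdz (pdz v1) x y t)
        - q t * (pdz v1 x y t * pdz v1 x y t)) volume (-h) 0 := by
      refine ContinuousOn.intervalIntegrable ?_
      rw [uIcc_of_le hhle]
      exact mkcont v1 hv1
    have hIG2 : IntervalIntegrable (fun t => wvel h u1 u2 x y t *
        (pdz (pdz v2) x y t * pdz v2 x y t + pdz v2 x y t * pdz (pdz v2) x y t)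
        - q t * (pdz v2 x y t * pdz v2 x y t)) volume (-h) 0 := by
      refine ContinuousOn.intervalIntegrable ?_
      rw [uIcc_of_le hhle]
      exact mkcont v2 hv2
    calc (∫ t in (-h)..(0:ℝ), Gz t)
        = (1/2 : ℝ) * ∫ t in (-h)..(0:ℝ), ((wvel h u1 u2 x y t *
            (pdz (pdz v1) x y t * pdz v1 x y t + pdz v1 x y t * pdz (pdz v1) x y t)
            - q t * (pdz v1 x y t * pdz v1 x y t)) +
          (wvel h u1 u2 x y t *
            (pdz (pdz v2) x y t * pdz v2 x y t + pdz v2 x y t * pdz (pdz v2) x y t)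
            - q t * (pdz v2 x y t * pdz v2 x y t))) := by
          rw [← intervalIntegral.integral_const_mul]
      _ = 0 := by
          rw [intervalIntegral.integral_add hIG1 hIG2, key v1 hv1 hb01 hbh1,
            key v2 hv2 hb02 hbh2]
          ring
  calc (∫ z in Ioo (-h) (0:ℝ), (pdz (B2comp h u1 u2 v1) x y z * pdz v1 x y z +
        pdz (B2comp h u1 u2 v2) x y z * pdz v2 x y z))
      = ∫ z in Ioo (-h) (0:ℝ),
          ((MIDf u1 u2 v1 v2 x y z + Rf u1 u2 v1 v2 x y z) + Gz z) :=
        setIntegral_congr_fun measurableSet_Ioo (fun z hz => hpt z hz)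
    _ = (∫ z in Ioo (-h) (0:ℝ), (MIDf u1 u2 v1 v2 x y z + Rf u1 u2 v1 v2 x y z)) +
        ∫ z in Ioo (-h) (0:ℝ), Gz z := integral_add hIsf hIGz
    _ = ∫ z in Ioo (-h) (0:ℝ), (MIDf u1 u2 v1 v2 x y z + Rf u1 u2 v1 v2 x y z) := by
        rw [hGzero, add_zero]

end Core


section Part2

def RHSf (u1 u2 v1 v2 : ℝ → ℝ → ℝ → ℝ) : ℝ → ℝ → ℝ → ℝ := fun x y z =>
  (pdz (pdx u1) x y z * v1 x y z * pdz v1 x y z +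
   pdz (pdx u1) x y z * v2 x y z * pdz v2 x y z +
   pdz (pdy u2) x y z * v1 x y z * pdz v1 x y z +
   pdz (pdy u2) x y z * v2 x y z * pdz v2 x y z)
  + (pdz u1 x y z * v1 x y z * pdx (pdz v1) x y z +
     pdz u1 x y z * v2 x y z * pdx (pdz v2) x y z +
     pdz u2 x y z * v1 x y z * pdy (pdz v1) x y z +
     pdz u2 x y z * v2 x y z * pdy (pdz v2) x y z)
  - 2 * (u1 x y z * pdx (pdz v1) x y z * pdz v1 x y z +
         u1 x y z * pdx (pdz v2) x y z * pdz v2 x y z +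
         u2 x y z * pdy (pdz v1) x y z * pdz v1 x y z +
         u2 x y z * pdy (pdz v2) x y z * pdz v2 x y z)

variable {L h : ℝ} {U : Set (ℝ × ℝ × ℝ)} {u1 u2 v1 v2 f g : ℝ → ℝ → ℝ → ℝ} {x y z : ℝ}

lemma smOn_RHSf (hU : IsOpen U) (hu1 : SmOn U u1) (hu2 : SmOn U u2)
    (hv1 : SmOn U v1) (hv2 : SmOn U v2) : SmOn U (RHSf u1 u2 v1 v2) := by
  refine ContDiffOn.sub (ContDiffOn.add ?_ ?_) (ContDiffOn.mul contDiffOn_const ?_)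
  · exact ContDiffOn.add (ContDiffOn.add (ContDiffOn.add
      (ContDiffOn.mul (ContDiffOn.mul ((hu1.pdx hU).pdz hU) hv1) (hv1.pdz hU))
      (ContDiffOn.mul (ContDiffOn.mul ((hu1.pdx hU).pdz hU) hv2) (hv2.pdz hU)))
      (ContDiffOn.mul (ContDiffOn.mul ((hu2.pdy hU).pdz hU) hv1) (hv1.pdz hU)))
      (ContDiffOn.mul (ContDiffOn.mul ((hu2.pdy hU).pdz hU) hv2) (hv2.pdz hU))
  · exact ContDiffOn.add (ContDiffOn.add (ContDiffOn.add
      (ContDiffOn.mul (ContDiffOn.mul (hu1.pdz hU) hv1) ((hv1.pdz hU).pdx hU))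
      (ContDiffOn.mul (ContDiffOn.mul (hu1.pdz hU) hv2) ((hv2.pdz hU).pdx hU)))
      (ContDiffOn.mul (ContDiffOn.mul (hu2.pdz hU) hv1) ((hv1.pdz hU).pdy hU)))
      (ContDiffOn.mul (ContDiffOn.mul (hu2.pdz hU) hv2) ((hv2.pdz hU).pdy hU))
  · exact ContDiffOn.add (ContDiffOn.add (ContDiffOn.add
      (ContDiffOn.mul (ContDiffOn.mul hu1 ((hv1.pdz hU).pdx hU)) (hv1.pdz hU))
      (ContDiffOn.mul (ContDiffOn.mul hu1 ((hv2.pdz hU).pdx hU)) (hv2.pdz hU)))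
      (ContDiffOn.mul (ContDiffOn.mul hu2 ((hv1.pdz hU).pdy hU)) (hv1.pdz hU)))
      (ContDiffOn.mul (ContDiffOn.mul hu2 ((hv2.pdz hU).pdy hU)) (hv2.pdz hU))

lemma pdx_trip (hU : IsOpen U) (hf : SmOn U f) (hg : SmOn U g) (hp : (x, y, z) ∈ U) :
    pdx (fun a b c => pdz f a b c * pdz g a b c * g a b c) x y z
    = (pdx (pdz f) x y z * pdz g x y z + pdz f x y z * pdx (pdz g) x y z) * g x y z
      + pdz f x y z * pdz g x y z * pdx g x y z := by
  have hd : HasDerivAt (fun t => pdz f t y z * pdz g t y z * g t y z)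
      ((pdx (pdz f) x y z * pdz g x y z + pdz f x y z * pdx (pdz g) x y z) * g x y z
      + pdz f x y z * pdz g x y z * pdx g x y z) x :=
    (((hf.pdz hU).hasDerivAt_x hU hp).mul ((hg.pdz hU).hasDerivAt_x hU hp)).mul
      (hg.hasDerivAt_x hU hp)
  exact hd.deriv

lemma pdy_trip (hU : IsOpen U) (hf : SmOn U f) (hg : SmOn U g) (hp : (x, y, z) ∈ U) :
    pdy (fun a b c => pdz f a b c * pdz g a b c * g a b c) x y z
    = (pdy (pdz f) x y z * pdz g x y z + pdz f x y z * pdy (pdz g) x y z) * g x y z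
      + pdz f x y z * pdz g x y z * pdy g x y z := by
  have hd : HasDerivAt (fun t => pdz f x t z * pdz g x t z * g x t z)
      ((pdy (pdz f) x y z * pdz g x y z + pdz f x y z * pdy (pdz g) x y z) * g x y z
      + pdz f x y z * pdz g x y z * pdy g x y z) y :=
    (((hf.pdz hU).hasDerivAt_y hU hp).mul ((hg.pdz hU).hasDerivAt_y hU hp)).mul
      (hg.hasDerivAt_y hU hp)
  exact hd.deriv

lemma pdx_Pu1_eq (hU : IsOpen U) (hu1 : SmOn U u1) (hv1 : SmOn U v1) (hv2 : SmOn U v2)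
    (hp : (x, y, z) ∈ U) :
    pdx (Pu1 u1 v1 v2) x y z
    = pdx u1 x y z * PsiF v1 v2 x y z + u1 x y z *
      ((pdx (pdz v1) x y z * pdz v1 x y z + pdz v1 x y z * pdx (pdz v1) x y z) +
       (pdx (pdz v2) x y z * pdz v2 x y z + pdz v2 x y z * pdx (pdz v2) x y z)) := by
  have hd : HasDerivAt (fun t => u1 t y z *
      (pdz v1 t y z * pdz v1 t y z + pdz v2 t y z * pdz v2 t y z))
      (pdx u1 x y z * PsiF v1 v2 x y z + u1 x y z *
      ((pdx (pdz v1) x y z * pdz v1 x y z + pdz v1 x y z * pdx (pdz v1) x y z) +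
       (pdx (pdz v2) x y z * pdz v2 x y z + pdz v2 x y z * pdx (pdz v2) x y z))) x :=
    (hu1.hasDerivAt_x hU hp).mul
      ((((hv1.pdz hU).hasDerivAt_x hU hp).mul ((hv1.pdz hU).hasDerivAt_x hU hp)).add
       (((hv2.pdz hU).hasDerivAt_x hU hp).mul ((hv2.pdz hU).hasDerivAt_x hU hp)))
  exact hd.deriv

lemma pdy_Pu2_eq (hU : IsOpen U) (hu2 : SmOn U u2) (hv1 : SmOn U v1) (hv2 : SmOn U v2)
    (hp : (x, y, z) ∈ U) :
    pdy (Pu2 u2 v1 v2) x y z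
    = pdy u2 x y z * PsiF v1 v2 x y z + u2 x y z *
      ((pdy (pdz v1) x y z * pdz v1 x y z + pdz v1 x y z * pdy (pdz v1) x y z) +
       (pdy (pdz v2) x y z * pdz v2 x y z + pdz v2 x y z * pdy (pdz v2) x y z)) := by
  have hd : HasDerivAt (fun t => u2 x t z *
      (pdz v1 x t z * pdz v1 x t z + pdz v2 x t z * pdz v2 x t z))
      (pdy u2 x y z * PsiF v1 v2 x y z + u2 x y z *
      ((pdy (pdz v1) x y z * pdz v1 x y z + pdz v1 x y z * pdy (pdz v1) x y z) +
       (pdy (pdz v2) x y z * pdz v2 x y z + pdz v2 x y z * pdy (pdz v2) x y z))) y :=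
    (hu2.hasDerivAt_y hU hp).mul
      ((((hv1.pdz hU).hasDerivAt_y hU hp).mul ((hv1.pdz hU).hasDerivAt_y hU hp)).add
       (((hv2.pdz hU).hasDerivAt_y hU hp).mul ((hv2.pdz hU).hasDerivAt_y hU hp)))
  exact hd.deriv

end Part2


/-- identity \eqref{eq:mdp.vz.split}:
for smooth, `L`-periodic `u, v : M → ℝ²` with `∂_z u = ∂_z v = 0` on the top and bottom
boundaries and vanishing vertically averaged divergence of `u`,
`∫_M ∂_z(B₂(u,v)) · ∂_z v dM
  = ∫_M (Σ_{j,k} ∂_z u_j ∂_j v_k ∂_z v_k − (div u) |∂_z v|²) dM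
  = − ∫_M Σ_{j,k} (∂_z ∂_j u_j v_k ∂_z v_k + ∂_z u_j v_k ∂_j ∂_z v_k
      − 2 u_j ∂_j ∂_z v_k ∂_z v_k) dM`. -/
theorem stmt13 (L h : ℝ) (hL : 0 < L) (hh : 0 < h)
    (u1 u2 v1 v2 : ℝ → ℝ → ℝ → ℝ)
    (hu1 : SmoothNearM L h u1) (hu2 : SmoothNearM L h u2)
    (hv1 : SmoothNearM L h v1) (hv2 : SmoothNearM L h v2)
    (pu1 : PeriodicXY L u1) (pu2 : PeriodicXY L u2)
    (pv1 : PeriodicXY L v1) (pv2 : PeriodicXY L v2)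
    (hbc : ∀ x ∈ Icc (0:ℝ) L, ∀ y ∈ Icc (0:ℝ) L,
      pdz u1 x y 0 = 0 ∧ pdz u2 x y 0 = 0 ∧ pdz v1 x y 0 = 0 ∧ pdz v2 x y 0 = 0 ∧
      pdz u1 x y (-h) = 0 ∧ pdz u2 x y (-h) = 0 ∧ pdz v1 x y (-h) = 0 ∧ pdz v2 x y (-h) = 0)
    (hdiv : BarotropicDivFree L h u1 u2) :
    intM L h (fun x y z =>
        pdz (B2comp h u1 u2 v1) x y z * pdz v1 x y z +
          pdz (B2comp h u1 u2 v2) x y z * pdz v2 x y z)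
      = intM L h (fun x y z =>
        (pdz u1 x y z * pdx v1 x y z * pdz v1 x y z +
         pdz u1 x y z * pdx v2 x y z * pdz v2 x y z +
         pdz u2 x y z * pdy v1 x y z * pdz v1 x y z +
         pdz u2 x y z * pdy v2 x y z * pdz v2 x y z)
        - (pdx u1 x y z + pdy u2 x y z) * ((pdz v1 x y z) ^ 2 + (pdz v2 x y z) ^ 2))
    ∧ intM L h (fun x y z =>
        (pdz u1 x y z * pdx v1 x y z * pdz v1 x y z +
         pdz u1 x y z * pdx v2 x y z * pdz v2 x y z +
         pdz u2 x y z * pdy v1 x y z * pdz v1 x y z +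
         pdz u2 x y z * pdy v2 x y z * pdz v2 x y z)
        - (pdx u1 x y z + pdy u2 x y z) * ((pdz v1 x y z) ^ 2 + (pdz v2 x y z) ^ 2))
      = - intM L h (fun x y z =>
        (pdz (pdx u1) x y z * v1 x y z * pdz v1 x y z +
         pdz (pdx u1) x y z * v2 x y z * pdz v2 x y z +
         pdz (pdy u2) x y z * v1 x y z * pdz v1 x y z +
         pdz (pdy u2) x y z * v2 x y z * pdz v2 x y z)
        + (pdz u1 x y z * v1 x y z * pdx (pdz v1) x y z +
           pdz u1 x y z * v2 x y z * pdx (pdz v2) x y z +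
           pdz u2 x y z * v1 x y z * pdy (pdz v1) x y z +
           pdz u2 x y z * v2 x y z * pdy (pdz v2) x y z)
        - 2 * (u1 x y z * pdx (pdz v1) x y z * pdz v1 x y z +
               u1 x y z * pdx (pdz v2) x y z * pdz v2 x y z +
               u2 x y z * pdy (pdz v1) x y z * pdz v1 x y z +
               u2 x y z * pdy (pdz v2) x y z * pdz v2 x y z)) := by
  obtain ⟨U1, hU1, hs1, hc1⟩ := hu1
  obtain ⟨U2, hU2, hs2, hc2⟩ := hu2
  obtain ⟨U3, hU3, hs3, hc3⟩ := hv1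
  obtain ⟨U4, hU4, hs4, hc4⟩ := hv2
  set U := U1 ∩ U2 ∩ U3 ∩ U4 with hUdef
  have hU : IsOpen U := ((hU1.inter hU2).inter hU3).inter hU4
  have hsub : closure (Mset L h) ⊆ U := fun p hp => ⟨⟨⟨hs1 hp, hs2 hp⟩, hs3 hp⟩, hs4 hp⟩
  have su1 : SmOn U u1 := hc1.mono fun p hp => hp.1.1.1
  have su2 : SmOn U u2 := hc2.mono fun p hp => hp.1.1.2
  have sv1 : SmOn U v1 := hc3.mono fun p hp => hp.1.2
  have sv2 : SmOn U v2 := hc4.mono fun p hp => hp.2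
  have perPu1 : PeriodicXY L (Pu1 u1 v1 v2) :=
    pu1.mul ((pv1.pdz.mul pv1.pdz).add (pv2.pdz.mul pv2.pdz))
  have perPu2 : PeriodicXY L (Pu2 u2 v1 v2) :=
    pu2.mul ((pv1.pdz.mul pv1.pdz).add (pv2.pdz.mul pv2.pdz))
  have part1 : intM L h (fun x y z =>
      pdz (B2comp h u1 u2 v1) x y z * pdz v1 x y z +
      pdz (B2comp h u1 u2 v2) x y z * pdz v2 x y z) = intM L h (MIDf u1 u2 v1 v2) := by
    have step : intM L h (fun x y z =>
        pdz (B2comp h u1 u2 v1) x y z * pdz v1 x y z +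
        pdz (B2comp h u1 u2 v2) x y z * pdz v2 x y z)
        = intM L h (fun x y z => MIDf u1 u2 v1 v2 x y z + Rf u1 u2 v1 v2 x y z) := by
      rw [intM, intM]
      refine setIntegral_congr_fun measurableSet_Ioo fun x hx => ?_
      refine setIntegral_congr_fun measurableSet_Ioo fun y hy => ?_
      have hb := hbc x (Ioo_subset_Icc_self hx) y (Ioo_subset_Icc_self hy)
      exact core_z hL hh hU hsub su1 su2 sv1 sv2 hx hy hb.2.2.1 hb.2.2.2.1
        hb.2.2.2.2.2.2.1 hb.2.2.2.2.2.2.2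
    have hRzero : intM L h (Rf u1 u2 v1 v2) = 0 := by
      have e : intM L h (Rf u1 u2 v1 v2) = intM L h (fun x y z =>
          (1/2 : ℝ) * (pdx (Pu1 u1 v1 v2) x y z + pdy (Pu2 u2 v1 v2) x y z)) := rfl
      rw [e, intM_const_mul, intM_add hL hh (((smOn_Pu1 hU su1 sv1 sv2).pdx hU).cl hU hsub)
        (((smOn_Pu2 hU su2 sv1 sv2).pdy hU).cl hU hsub),
        intM_pdx_zero hL hh hU hsub (smOn_Pu1 hU su1 sv1 sv2) perPu1,
        intM_pdy_zero hL hh hU hsub (smOn_Pu2 hU su2 sv1 sv2) perPu2]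
      ring
    rw [step, intM_add hL hh ((smOn_MIDf hU su1 su2 sv1 sv2).cl hU hsub)
      ((smOn_Rf hU su1 su2 sv1 sv2).cl hU hsub), hRzero, add_zero]
  have sA1 : SmOn U (fun a b c => pdz u1 a b c * pdz v1 a b c * v1 a b c) :=
    ContDiffOn.mul (ContDiffOn.mul (su1.pdz hU) (sv1.pdz hU)) sv1
  have sA2 : SmOn U (fun a b c => pdz u1 a b c * pdz v2 a b c * v2 a b c) :=
    ContDiffOn.mul (ContDiffOn.mul (su1.pdz hU) (sv2.pdz hU)) sv2
  have sB1 : SmOn U (fun a b c => pdz u2 a b c * pdz v1 a b c * v1 a b c) :=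
    ContDiffOn.mul (ContDiffOn.mul (su2.pdz hU) (sv1.pdz hU)) sv1
  have sB2 : SmOn U (fun a b c => pdz u2 a b c * pdz v2 a b c * v2 a b c) :=
    ContDiffOn.mul (ContDiffOn.mul (su2.pdz hU) (sv2.pdz hU)) sv2
  have perA1 : PeriodicXY L (fun a b c => pdz u1 a b c * pdz v1 a b c * v1 a b c) :=
    (pu1.pdz.mul pv1.pdz).mul pv1
  have perA2 : PeriodicXY L (fun a b c => pdz u1 a b c * pdz v2 a b c * v2 a b c) :=
    (pu1.pdz.mul pv2.pdz).mul pv2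
  have perB1 : PeriodicXY L (fun a b c => pdz u2 a b c * pdz v1 a b c * v1 a b c) :=
    (pu2.pdz.mul pv1.pdz).mul pv1
  have perB2 : PeriodicXY L (fun a b c => pdz u2 a b c * pdz v2 a b c * v2 a b c) :=
    (pu2.pdz.mul pv2.pdz).mul pv2
  have cl1 : Cl L h (pdx (fun a b c => pdz u1 a b c * pdz v1 a b c * v1 a b c)) :=
    (sA1.pdx hU).cl hU hsub
  have cl2 : Cl L h (pdx (fun a b c => pdz u1 a b c * pdz v2 a b c * v2 a b c)) :=
    (sA2.pdx hU).cl hU hsub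
  have cl3 : Cl L h (pdy (fun a b c => pdz u2 a b c * pdz v1 a b c * v1 a b c)) :=
    (sB1.pdy hU).cl hU hsub
  have cl4 : Cl L h (pdy (fun a b c => pdz u2 a b c * pdz v2 a b c * v2 a b c)) :=
    (sB2.pdy hU).cl hU hsub
  have clPu1x : Cl L h (pdx (Pu1 u1 v1 v2)) := ((smOn_Pu1 hU su1 sv1 sv2).pdx hU).cl hU hsub
  have clPu2y : Cl L h (pdy (Pu2 u2 v1 v2)) := ((smOn_Pu2 hU su2 sv1 sv2).pdy hU).cl hU hsub
  have clneg : Cl L h (fun x y z => -(pdx (Pu1 u1 v1 v2) x y z + pdy (Pu2 u2 v1 v2) x y z)) :=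
    (clPu1x.add clPu2y).neg
  have clMID : Cl L h (MIDf u1 u2 v1 v2) := (smOn_MIDf hU su1 su2 sv1 sv2).cl hU hsub
  have clRHS : Cl L h (RHSf u1 u2 v1 v2) := (smOn_RHSf hU su1 su2 sv1 sv2).cl hU hsub
  have clT4 : Cl L h (fun x y z =>
      pdy (fun a b c => pdz u2 a b c * pdz v2 a b c * v2 a b c) x y z +
      (-(pdx (Pu1 u1 v1 v2) x y z + pdy (Pu2 u2 v1 v2) x y z))) := cl4.add clneg
  have clT3 : Cl L h (fun x y z =>
      pdy (fun a b c => pdz u2 a b c * pdz v1 a b c * v1 a b c) x y z +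
      (pdy (fun a b c => pdz u2 a b c * pdz v2 a b c * v2 a b c) x y z +
      (-(pdx (Pu1 u1 v1 v2) x y z + pdy (Pu2 u2 v1 v2) x y z)))) := cl3.add clT4
  have clT2 : Cl L h (fun x y z =>
      pdx (fun a b c => pdz u1 a b c * pdz v2 a b c * v2 a b c) x y z +
      (pdy (fun a b c => pdz u2 a b c * pdz v1 a b c * v1 a b c) x y z +
      (pdy (fun a b c => pdz u2 a b c * pdz v2 a b c * v2 a b c) x y z +
      (-(pdx (Pu1 u1 v1 v2) x y z + pdy (Pu2 u2 v1 v2) x y z))))) := cl2.add clT3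
  have hMR := intM_add hL hh clMID clRHS
  have hzero : intM L h (fun x y z => MIDf u1 u2 v1 v2 x y z + RHSf u1 u2 v1 v2 x y z) = 0 := by
    have hcongr : intM L h (fun x y z => MIDf u1 u2 v1 v2 x y z + RHSf u1 u2 v1 v2 x y z)
        = intM L h (fun x y z =>
            pdx (fun a b c => pdz u1 a b c * pdz v1 a b c * v1 a b c) x y z +
            (pdx (fun a b c => pdz u1 a b c * pdz v2 a b c * v2 a b c) x y z +
            (pdy (fun a b c => pdz u2 a b c * pdz v1 a b c * v1 a b c) x y z +
            (pdy (fun a b c => pdz u2 a b c * pdz v2 a b c * v2 a b c) x y z +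
            (-(pdx (Pu1 u1 v1 v2) x y z + pdy (Pu2 u2 v1 v2) x y z)))))) := by
      refine intM_congr fun x hx y hy z hz => ?_
      have hp : (x, y, z) ∈ U := hsub (mem_closure_Mset hL hh (Ioo_subset_Icc_self hx)
        (Ioo_subset_Icc_self hy) (Ioo_subset_Icc_self hz))
      simp only [MIDf, RHSf]
      rw [pdx_trip hU su1 sv1 hp, pdx_trip hU su1 sv2 hp, pdy_trip hU su2 sv1 hp,
        pdy_trip hU su2 sv2 hp, pdx_Pu1_eq hU su1 sv1 sv2 hp, pdy_Pu2_eq hU su2 sv1 sv2 hp,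
        schwarz_xz hU su1 hp, schwarz_yz hU su2 hp]
      simp only [PsiF]
      ring
    rw [hcongr, intM_add hL hh cl1 clT2,
      intM_add hL hh cl2 clT3,
      intM_add hL hh cl3 clT4,
      intM_add hL hh cl4 clneg,
      intM_pdx_zero hL hh hU hsub sA1 perA1,
      intM_pdx_zero hL hh hU hsub sA2 perA2,
      intM_pdy_zero hL hh hU hsub sB1 perB1,
      intM_pdy_zero hL hh hU hsub sB2 perB2,
      intM_neg, intM_add hL hh clPu1x clPu2y,
      intM_pdx_zero hL hh hU hsub (smOn_Pu1 hU su1 sv1 sv2) perPu1,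
      intM_pdy_zero hL hh hU hsub (smOn_Pu2 hU su2 sv1 sv2) perPu2]
    ring
  have part2 : intM L h (MIDf u1 u2 v1 v2) = - intM L h (RHSf u1 u2 v1 v2) := by
    rw [hMR] at hzero
    linarith
  exact ⟨part1, part2⟩
end
end
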